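/- arXiv:1009.5304 — 9 statements merged into one kernel-verified Lean document; each statement's English description precedes it below -/
import Mathlib

section
/- Let X be a metric space equipped with a Borel measure μ, and suppose X admits a countable cover by open sets each of finite μ-measure. Let a > 0 and κ > 0, and let Z ⊆ X be a Borel set such that for every x ∈ Z one has limsup_{r→0⁺} r^{−a} μ(closedBall(x,r)) ≥ κ. Then μ(Z) ≥ κ · 2^{−a} · H^a(Z), where H^a is the a-dimensional Hausdorff measure on X. -/
open MeasureTheory Metric Filter ENNReal Topology

private lemma diam_closedBall_le' {X : Type*} [MetricSpace X] (z : X) (s : ℝ) :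
    EMetric.diam (closedBall z s) ≤ ENNReal.ofReal (2 * s) := by
  refine EMetric.diam_le fun x hx y hy => ?_
  rw [edist_dist]
  refine ENNReal.ofReal_le_ofReal ?_
  have := dist_triangle_right x y z
  have hx' : dist x z ≤ s := hx
  have hy' : dist y z ≤ s := hy
  linarith

set_option maxHeartbeats 1000000 in
private lemma federer_cover {X : Type*} [MetricSpace X] [MeasurableSpace X] [BorelSpace X]
    (μ : Measure X) (U : Set X) (hUfin : μ U ≠ ∞) (Z : Set X)
    (a : ℝ) (ha : 0 < a) (c : ℝ≥0∞) (hc0 : c ≠ 0) (hctop : c ≠ ∞)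
    (fine : ∀ x ∈ Z, ∀ ρ : ℝ, 0 < ρ → ∃ r : ℝ, 0 < r ∧ r ≤ ρ ∧ closedBall x r ⊆ U ∧
      c * ENNReal.ofReal (r ^ a) ≤ μ (closedBall x r))
    (δ : ℝ) (hδ : 0 < δ) :
    ∃ t : ℕ → Set X, (Z ⊆ ⋃ n, t n) ∧ (∀ n, EMetric.diam (t n) ≤ ENNReal.ofReal (10 * δ)) ∧
      ∑' n, EMetric.diam (t n) ^ a ≤
        (2 : ℝ≥0∞) ^ a * (μ U / c) + (10 : ℝ≥0∞) ^ a * ENNReal.ofReal δ := by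
  classical
  set F : Set (X × ℝ) := {p | p.1 ∈ Z ∧ 0 < p.2 ∧ p.2 ≤ δ ∧ closedBall p.1 p.2 ⊆ U ∧
      c * ENNReal.ofReal (p.2 ^ a) ≤ μ (closedBall p.1 p.2)} with hF
  obtain ⟨u, huF, hdisj, hVit⟩ :=
    Vitali.exists_disjoint_subfamily_covering_enlargement
      (fun p : X × ℝ => closedBall p.1 p.2) F (fun p => p.2) 2 one_lt_two
      (fun p hp => hp.2.1.le) δ (fun p hp => hp.2.2.1)
      (fun p hp => ⟨p.1, mem_closedBall_self hp.2.1.le⟩)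
  have hrpos : ∀ p ∈ u, (0 : ℝ) < p.2 := fun p hp => (huF hp).2.1
  have hrδ : ∀ p ∈ u, p.2 ≤ δ := fun p hp => (huF hp).2.2.1
  have hsubU : ∀ p ∈ u, closedBall p.1 p.2 ⊆ U := fun p hp => (huF hp).2.2.2.1
  have hmeasB : ∀ p ∈ u, c * ENNReal.ofReal (p.2 ^ a) ≤ μ (closedBall p.1 p.2) :=
    fun p hp => (huF hp).2.2.2.2
  -- countability of `u`
  have hcnt : Countable ↥u := by
    have hpos : ∀ b : ↥u, 0 < μ (closedBall (b : X × ℝ).1 (b : X × ℝ).2) := by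
      intro b
      refine lt_of_lt_of_le ?_ (hmeasB b b.2)
      exact ENNReal.mul_pos hc0 (ENNReal.ofReal_pos.2 (Real.rpow_pos_of_pos (hrpos b b.2) a)).ne'
    have hd : Pairwise (Function.onFun Disjoint
        (fun b : ↥u => closedBall (b : X × ℝ).1 (b : X × ℝ).2)) := by
      intro b b' hbb'
      exact hdisj b.2 b'.2 (Subtype.coe_injective.ne_iff.2 hbb')
    have hU : μ (⋃ b : ↥u, closedBall (b : X × ℝ).1 (b : X × ℝ).2) ≠ ∞ := by
      refine ne_top_of_le_ne_top hUfin (measure_mono ?_)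
      exact Set.iUnion_subset fun b => hsubU b b.2
    have := MeasureTheory.Measure.countable_meas_pos_of_disjoint_of_meas_iUnion_ne_top μ
      (fun b : ↥u => measurableSet_closedBall) hd hU
    have huniv : {b : ↥u | 0 < μ (closedBall (b : X × ℝ).1 (b : X × ℝ).2)} = Set.univ := by
      ext b; simpa using hpos b
    rw [huniv] at this
    exact Set.countable_univ_iff.1 this
  haveI := hcnt
  set g : ↥u → ℝ≥0∞ := fun b => ENNReal.ofReal ((b : X × ℝ).2 ^ a) with hg
  -- total mass bound
  have hsum : ∑' b : ↥u, g b ≤ μ U / c := by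
    rw [ENNReal.le_div_iff_mul_le (Or.inl hc0) (Or.inl hctop)]
    calc (∑' b : ↥u, g b) * c = ∑' b : ↥u, g b * c := ENNReal.tsum_mul_right.symm
      _ = ∑' b : ↥u, c * g b := tsum_congr fun b => mul_comm _ _
      _ ≤ ∑' b : ↥u, μ (closedBall (b : X × ℝ).1 (b : X × ℝ).2) :=
          ENNReal.tsum_le_tsum fun b => hmeasB b b.2
      _ = μ (⋃ b : ↥u, closedBall (b : X × ℝ).1 (b : X × ℝ).2) := by
          refine (measure_iUnion ?_ fun b => measurableSet_closedBall).symm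
          intro b b' hbb'
          exact hdisj b.2 b'.2 (Subtype.coe_injective.ne_iff.2 hbb')
      _ ≤ μ U := measure_mono (Set.iUnion_subset fun b => hsubU b b.2)
  have hsumtop : ∑' b : ↥u, g b ≠ ∞ :=
    (lt_of_le_of_lt hsum (ENNReal.div_lt_top hUfin hc0)).ne
  -- small tail
  obtain ⟨w, hw⟩ : ∃ w : Finset ↥u,
      ∑' b : ↥((↑w : Set ↥u)ᶜ), g b.1 < ENNReal.ofReal δ :=
    ((tendsto_order.1 (ENNReal.tendsto_tsum_compl_atTop_zero hsumtop)).2 _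
      (ENNReal.ofReal_pos.2 hδ)).exists
  -- enlarged sets
  set E : ↥u → Set X := fun b => if b ∈ w then closedBall (b : X × ℝ).1 (b : X × ℝ).2
      else closedBall (b : X × ℝ).1 (5 * (b : X × ℝ).2) with hE
  -- covering property
  have hcover : ∀ x ∈ Z, ∃ b : ↥u, x ∈ E b := by
    intro x hx
    by_cases hxw : x ∈ ⋃ b ∈ w, closedBall ((b : ↥u) : X × ℝ).1 ((b : ↥u) : X × ℝ).2
    · obtain ⟨b, hbw, hxb⟩ := Set.mem_iUnion₂.1 hxw
      exact ⟨b, by simp only [hE, if_pos hbw]; exact hxb⟩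
    · set K : Set X := ⋃ b ∈ w, closedBall ((b : ↥u) : X × ℝ).1 ((b : ↥u) : X × ℝ).2 with hK
      have hKclosed : IsClosed K :=
        w.finite_toSet.isClosed_biUnion fun b _ => isClosed_closedBall
      have hxK : x ∈ Kᶜ := hxw
      obtain ⟨ρ, hρ, hball⟩ := Metric.isOpen_iff.1 hKclosed.isOpen_compl x hxK
      obtain ⟨r, hr0, hrle, hrU, hrμ⟩ := fine x hx (min (ρ / 2) δ) (lt_min (half_pos hρ) hδ)
      have hp : (x, r) ∈ F :=
        ⟨hx, hr0, hrle.trans (min_le_right _ _), hrU, hrμ⟩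
      obtain ⟨q, hqu, hqint, hq2⟩ := hVit (x, r) hp
      have hqw : (⟨q, hqu⟩ : ↥u) ∉ w := by
        intro hmem
        obtain ⟨y, hy1, hy2⟩ := hqint
        have hyK : y ∈ K := Set.mem_biUnion hmem hy2
        have : y ∈ Kᶜ := by
          apply hball
          have : dist y x ≤ r := hy1
          calc dist y x ≤ r := hy1
            _ ≤ ρ / 2 := hrle.trans (min_le_left _ _)
            _ < ρ := half_lt_self hρ
        exact this hyK
      refine ⟨⟨q, hqu⟩, ?_⟩
      simp only [hE, if_neg hqw]
      obtain ⟨y, hy1, hy2⟩ := hqint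
      have h1 : dist x y ≤ r := dist_comm x y ▸ hy1
      have h2 : dist y q.1 ≤ q.2 := hy2
      have h3 : (0:ℝ) < q.2 := hrpos q hqu
      have : dist x q.1 ≤ 5 * q.2 := by
        calc dist x q.1 ≤ dist x y + dist y q.1 := dist_triangle _ _ _
          _ ≤ r + q.2 := add_le_add h1 h2
          _ ≤ 2 * q.2 + q.2 := by linarith [hq2]
          _ ≤ 5 * q.2 := by linarith
      exact this
  -- build ℕ-indexed cover
  obtain ⟨e, he⟩ := Countable.exists_injective_nat ↥u
  set t : ℕ → Set X := fun n => ⋃ (b : ↥u) (_ : e b = n), E b with ht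
  have htE : ∀ b : ↥u, t (e b) = E b := by
    intro b
    apply le_antisymm
    · exact Set.iUnion₂_subset fun b' hb' => by rw [← he hb']
    · intro x hx
      exact Set.mem_iUnion₂.2 ⟨b, rfl, hx⟩
  have ht0 : ∀ n, (∀ b, e b ≠ n) → t n = ∅ := by
    intro n hn
    refine Set.eq_empty_iff_forall_notMem.2 fun x hx => ?_
    obtain ⟨b, hb, _⟩ := Set.mem_iUnion₂.1 hx
    exact hn b hb
  have hdiamE : ∀ b : ↥u, EMetric.diam (E b) ≤ ENNReal.ofReal (10 * δ) := by
    intro b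
    have h1 : (0:ℝ) < (b : X × ℝ).2 := hrpos b b.2
    have h2 : (b : X × ℝ).2 ≤ δ := hrδ b b.2
    by_cases hbw : b ∈ w
    · simp only [hE, if_pos hbw]
      exact (diam_closedBall_le' _ _).trans (ENNReal.ofReal_le_ofReal (by linarith))
    · simp only [hE, if_neg hbw]
      exact (diam_closedBall_le' _ _).trans (ENNReal.ofReal_le_ofReal (by linarith))
  refine ⟨t, ?_, ?_, ?_⟩
  · intro x hx
    obtain ⟨b, hb⟩ := hcover x hx
    exact Set.mem_iUnion.2 ⟨e b, (htE b).symm ▸ hb⟩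
  · intro n
    by_cases hn : ∃ b, e b = n
    · obtain ⟨b, rfl⟩ := hn
      rw [htE]; exact hdiamE b
    · push_neg at hn
      rw [ht0 n hn]
      simp [EMetric.diam]
  · -- the sum bound
    have hsupp : Function.support (fun n => EMetric.diam (t n) ^ a) ⊆ Set.range e := by
      intro n hn
      by_contra hne
      apply hn
      have : ∀ b, e b ≠ n := fun b hb => hne ⟨b, hb⟩
      simp only [ht0 n this, EMetric.diam, EMetric.diam_empty, ENNReal.zero_rpow_of_pos ha]
    calc ∑' n, EMetric.diam (t n) ^ a
        = ∑' b : ↥u, EMetric.diam (t (e b)) ^ a := (he.tsum_eq hsupp).symm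
      _ = ∑' b : ↥u, EMetric.diam (E b) ^ a := by
          congr 1; ext b; rw [htE]
      _ ≤ (2 : ℝ≥0∞) ^ a * (μ U / c) + (10 : ℝ≥0∞) ^ a * ENNReal.ofReal δ := by
          rw [← Summable.tsum_add_tsum_compl (s := (↑w : Set ↥u))
            (f := fun b : ↥u => EMetric.diam (E b) ^ a) ENNReal.summable ENNReal.summable]
          refine add_le_add ?_ ?_
          · -- finite part
            calc ∑' b : ↥(↑w : Set ↥u), EMetric.diam (E b.1) ^ a
                ≤ ∑' b : ↥(↑w : Set ↥u), (2 : ℝ≥0∞) ^ a * g b.1 := by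
                  refine ENNReal.tsum_le_tsum fun b => ?_
                  have hbw : (b : ↥u) ∈ w := Finset.mem_coe.1 b.2
                  have h1 : (0:ℝ) < ((b : ↥u) : X × ℝ).2 := hrpos _ (b : ↥u).2
                  simp only [hE, if_pos hbw]
                  calc EMetric.diam (closedBall ((b : ↥u) : X × ℝ).1 ((b : ↥u) : X × ℝ).2) ^ a
                      ≤ ENNReal.ofReal (2 * ((b : ↥u) : X × ℝ).2) ^ a :=
                        ENNReal.rpow_le_rpow (diam_closedBall_le' _ _) ha.le
                    _ = (2 : ℝ≥0∞) ^ a * g (b : ↥u) := by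
                        rw [ENNReal.ofReal_mul (by norm_num), ENNReal.mul_rpow_of_nonneg _ _ ha.le,
                          ENNReal.ofReal_rpow_of_pos h1, hg]
                        norm_num
              _ = (2 : ℝ≥0∞) ^ a * ∑' b : ↥(↑w : Set ↥u), g b.1 := ENNReal.tsum_mul_left
              _ ≤ (2 : ℝ≥0∞) ^ a * (μ U / c) := by
                  refine mul_le_mul_right (le_trans ?_ hsum) _
                  rw [tsum_subtype]
                  exact ENNReal.tsum_le_tsum fun b => Set.indicator_le_self _ _ b
          · -- tail part
            calc ∑' b : ↥((↑w : Set ↥u)ᶜ), EMetric.diam (E b.1) ^ a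
                ≤ ∑' b : ↥((↑w : Set ↥u)ᶜ), (10 : ℝ≥0∞) ^ a * g b.1 := by
                  refine ENNReal.tsum_le_tsum fun b => ?_
                  have hbw : (b : ↥u) ∉ w := fun hmem => b.2 (Finset.mem_coe.2 hmem)
                  have h1 : (0:ℝ) < ((b : ↥u) : X × ℝ).2 := hrpos _ (b : ↥u).2
                  simp only [hE, if_neg hbw]
                  calc EMetric.diam (closedBall ((b : ↥u) : X × ℝ).1 (5 * ((b : ↥u) : X × ℝ).2)) ^ a
                      ≤ ENNReal.ofReal (10 * ((b : ↥u) : X × ℝ).2) ^ a :=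
                        ENNReal.rpow_le_rpow ((diam_closedBall_le' _ _).trans
                            (ENNReal.ofReal_le_ofReal (by linarith))) ha.le
                    _ = (10 : ℝ≥0∞) ^ a * g (b : ↥u) := by
                        rw [ENNReal.ofReal_mul (by norm_num), ENNReal.mul_rpow_of_nonneg _ _ ha.le,
                          ENNReal.ofReal_rpow_of_pos h1, hg]
                        norm_num
              _ = (10 : ℝ≥0∞) ^ a * ∑' b : ↥((↑w : Set ↥u)ᶜ), g b.1 := ENNReal.tsum_mul_left
              _ ≤ (10 : ℝ≥0∞) ^ a * ENNReal.ofReal δ := mul_le_mul_right hw.le _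

private lemma aux_mul_le_of_forall_lt {κ t m : ℝ≥0∞} (H : ∀ c, c < κ → c * t ≤ m) :
    κ * t ≤ m := by
  have hκ : κ = ⨆ (c : ℝ≥0∞) (_ : c < κ), c := by
    refine le_antisymm ?_ (iSup₂_le fun c hc => hc.le)
    exact le_of_forall_lt_imp_le_of_dense fun c hc => le_iSup₂_of_le c hc le_rfl
  rw [hκ, ENNReal.iSup_mul]
  refine iSup_le fun c => ?_
  rw [ENNReal.iSup_mul]
  exact iSup_le fun hc => H c hc


/-- **Federer 2.10.19-type density lower bound.**
If a Borel measure `μ` on a metric space `X` (with a countable open cover of finite measure)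
satisfies `limsup_{r→0⁺} r^{-a} μ(closedBall x r) ≥ κ` at every point of a Borel set `Z`,
then `μ Z ≥ κ · 2^{-a} · H^a(Z)`. -/
theorem density_lower_bound_hausdorff
    {X : Type*} [MetricSpace X] [MeasurableSpace X] [BorelSpace X]
    (μ : Measure X)
    (V : ℕ → Set X) (hVopen : ∀ i, IsOpen (V i)) (hVcover : (⋃ i, V i) = Set.univ)
    (hVfin : ∀ i, μ (V i) < ∞)
    (a : ℝ) (ha : 0 < a) (κ : ℝ≥0∞) (hκ : 0 < κ)
    (Z : Set X) (hZ : MeasurableSet Z)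
    (h : ∀ x ∈ Z, κ ≤
      Filter.limsup (fun r : ℝ => μ (closedBall x r) / ENNReal.ofReal (r ^ a)) (𝓝[>] 0)) :
    κ * (2 : ℝ≥0∞) ^ (-a) * μH[a] Z ≤ μ Z := by
  by_cases hZtop : μ Z = ∞
  · rw [hZtop]; exact le_top
  haveI : μ.OuterRegular := by
    refine Measure.OuterRegular.of_restrict (s := V) (fun i => ?_) hVopen (by rw [hVcover])
    haveI : IsFiniteMeasure (μ.restrict (V i)) :=
      ⟨by rw [Measure.restrict_apply_univ]; exact hVfin i⟩
    infer_instance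
  have key : ∀ c : ℝ≥0∞, c < κ → ∀ U : Set X, IsOpen U → Z ⊆ U → μ U ≠ ∞ →
      c * ((2 : ℝ≥0∞) ^ (-a) * μH[a] Z) ≤ μ U := by
    intro c hcκ U hUo hZU hUfin
    rcases eq_or_ne c 0 with rfl | hc0
    · simp
    have hctop : c ≠ ∞ := hcκ.ne_top
    have fine : ∀ x ∈ Z, ∀ ρ : ℝ, 0 < ρ → ∃ r : ℝ, 0 < r ∧ r ≤ ρ ∧ closedBall x r ⊆ U ∧
        c * ENNReal.ofReal (r ^ a) ≤ μ (closedBall x r) := by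
      intro x hx ρ hρ
      obtain ⟨ε', hε', hball⟩ := Metric.isOpen_iff.1 hUo x (hZU hx)
      have hfreq : ∃ᶠ r in 𝓝[>] (0:ℝ),
          c < μ (closedBall x r) / ENNReal.ofReal (r ^ a) :=
        frequently_lt_of_lt_limsup (by isBoundedDefault) (lt_of_lt_of_le hcκ (h x hx))
      have hev : ∀ᶠ r in 𝓝[>] (0:ℝ), r ∈ Set.Ioo 0 (min ρ ε') :=
        Ioo_mem_nhdsGT_of_mem ⟨le_rfl, lt_min hρ hε'⟩
      obtain ⟨r, hr1, hr2⟩ := (hfreq.and_eventually hev).exists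
      refine ⟨r, hr2.1, (hr2.2.trans_le (min_le_left _ _)).le, ?_, ?_⟩
      · exact (closedBall_subset_ball (hr2.2.trans_le (min_le_right _ _))).trans hball
      · exact ENNReal.mul_le_of_le_div hr1.le
    have h10 : ((10 : ℝ≥0∞) ^ a) ≠ 0 := (ENNReal.rpow_pos (by norm_num) (by norm_num)).ne'
    have h10' : ((10 : ℝ≥0∞) ^ a) ≠ ∞ := ENNReal.rpow_ne_top_of_nonneg ha.le (by norm_num)
    have hausbound : μH[a] Z ≤ (2 : ℝ≥0∞) ^ a * (μ U / c) := by
      rw [MeasureTheory.Measure.hausdorffMeasure_apply]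
      refine iSup₂_le fun ρ hρ => ?_
      refine ENNReal.le_of_forall_pos_le_add fun ε hε hD' => ?_
      set η := (ε : ℝ≥0∞) / (10 : ℝ≥0∞) ^ a with hη
      have hη0 : η ≠ 0 := by
        rw [hη]
        exact (ENNReal.div_pos (by exact_mod_cast hε.ne') h10').ne'
      have hηtop : η ≠ ∞ := (ENNReal.div_lt_top ENNReal.coe_ne_top h10).ne
      set ρ' := min ρ 1 with hρ'
      have hρ'0 : ρ' ≠ 0 := (lt_min hρ zero_lt_one).ne'
      have hρ'top : ρ' ≠ ∞ := ((min_le_right ρ 1).trans_lt ENNReal.one_lt_top).ne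
      set δ := min (ρ'.toReal / 10) η.toReal with hδdef
      have hδpos : 0 < δ :=
        lt_min (div_pos (ENNReal.toReal_pos hρ'0 hρ'top) (by norm_num))
          (ENNReal.toReal_pos hη0 hηtop)
      obtain ⟨t, hcov, hdiam, hsum⟩ := federer_cover μ U hUfin Z a ha c hc0 hctop fine δ hδpos
      have hdiam' : ∀ n, EMetric.diam (t n) ≤ ρ := by
        intro n
        refine (hdiam n).trans ?_
        have h1 : (10:ℝ) * δ ≤ ρ'.toReal := by
          have := min_le_left (ρ'.toReal / 10) η.toReal
          have : δ ≤ ρ'.toReal / 10 := this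
          linarith
        calc ENNReal.ofReal (10 * δ) ≤ ENNReal.ofReal ρ'.toReal := ENNReal.ofReal_le_ofReal h1
          _ = ρ' := ENNReal.ofReal_toReal hρ'top
          _ ≤ ρ := min_le_left _ _
      refine le_trans (iInf_le_of_le t <| iInf_le_of_le hcov <| iInf_le _ hdiam') ?_
      have hsum' : ∑' n, (⨆ _ : (t n).Nonempty, EMetric.diam (t n) ^ a) ≤
          ∑' n, EMetric.diam (t n) ^ a :=
        ENNReal.tsum_le_tsum fun n => iSup_le fun _ => le_rfl
      refine hsum'.trans (hsum.trans ?_)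
      refine add_le_add_right ?_ _
      calc (10 : ℝ≥0∞) ^ a * ENNReal.ofReal δ ≤ (10 : ℝ≥0∞) ^ a * η := by
            refine mul_le_mul_right ?_ _
            refine (ENNReal.ofReal_le_ofReal (min_le_right _ _)).trans ?_
            rw [ENNReal.ofReal_toReal hηtop]
        _ = ε := ENNReal.mul_div_cancel h10 h10'
    calc c * ((2 : ℝ≥0∞) ^ (-a) * μH[a] Z)
        ≤ c * ((2 : ℝ≥0∞) ^ (-a) * ((2 : ℝ≥0∞) ^ a * (μ U / c))) :=
          mul_le_mul_right (mul_le_mul_right hausbound _) _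
      _ = c * (μ U / c) := by
          rw [← mul_assoc ((2 : ℝ≥0∞) ^ (-a)) _ _,
            ← ENNReal.rpow_add _ _ (by norm_num) (by norm_num)]
          simp
      _ ≤ μ U := by rw [ENNReal.mul_div_cancel hc0 hctop]
  rw [mul_assoc]
  refine ENNReal.le_of_forall_pos_le_add fun ε hε hZfin => ?_
  obtain ⟨U, hZU, hUo, hUlt⟩ :=
    Set.exists_isOpen_lt_add Z hZtop (ε := (ε : ℝ≥0∞)) (by exact_mod_cast hε.ne')
  have hUfin : μ U ≠ ∞ :=
    (hUlt.trans (ENNReal.add_lt_top.2 ⟨hZfin, ENNReal.coe_lt_top⟩)).ne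
  exact le_trans (aux_mul_le_of_forall_lt fun c hc => key c hc U hUo hZU hUfin) hUlt.le
end

section
/- Fix n ≥ 1, weights w : Fin n → ℕ with w i ≥ 1 for all i, an index i₀, and k ∈ ℕ. Let p ∈ MvPolynomial (Fin n) ℝ be weighted homogeneous of degree k with respect to w, and suppose p vanishes identically on the i₀-th coordinate axis, i.e. eval (s • Pi.single i₀ 1) p = 0 for every s ∈ ℝ. Let x : ℝ → (Fin n → ℝ) satisfy x_{i₀}(t) = O(|t|^{w i₀}) and x_i(t) = o(|t|^{w i}) for every i ≠ i₀, as t → 0. Then eval (x t) p = o(|t|^k) as t → 0. -/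
open MvPolynomial Filter Asymptotics Topology

private lemma prod_isBigO {α ι : Type*} {l : Filter α} (s : Finset ι)
    (f g : ι → α → ℝ) (h : ∀ i ∈ s, (f i) =O[l] (g i)) :
    (fun t => ∏ i ∈ s, f i t) =O[l] (fun t => ∏ i ∈ s, g i t) := by
  classical
  induction s using Finset.induction_on with
  | empty =>
    simp only [Finset.prod_empty]
    exact isBigO_const_const (1:ℝ) one_ne_zero l
  | @insert a s' hi ih =>
    simp only [Finset.prod_insert hi]
    exact (h a (Finset.mem_insert_self a s')).mul
      (ih fun i hi' => h i (Finset.mem_insert_of_mem hi'))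

/-- If `p` is weighted homogeneous of degree `k` with respect to weights `w i ≥ 1` and
vanishes identically on the `i₀`-th coordinate axis, and if a curve `x` satisfies
`x i₀ (t) = O(|t|^{w i₀})` and `x i (t) = o(|t|^{w i})` for `i ≠ i₀` as `t → 0`,
then `p(x(t)) = o(|t|^k)` as `t → 0`. -/
theorem eval_weightedHomogeneous_isLittleO_of_axis_vanishing
    (n : ℕ) (hn : 1 ≤ n) (w : Fin n → ℕ) (hw : ∀ i, 1 ≤ w i) (i₀ : Fin n) (k : ℕ)
    (p : MvPolynomial (Fin n) ℝ) (hp : p.IsWeightedHomogeneous w k)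
    (haxis : ∀ s : ℝ, MvPolynomial.eval (s • (Pi.single i₀ 1 : Fin n → ℝ)) p = 0)
    (x : ℝ → Fin n → ℝ)
    (hx₀ : (fun t : ℝ => x t i₀) =O[𝓝 0] fun t : ℝ => |t| ^ (w i₀))
    (hx : ∀ i, i ≠ i₀ → (fun t : ℝ => x t i) =o[𝓝 0] fun t : ℝ => |t| ^ (w i)) :
    (fun t : ℝ => MvPolynomial.eval (x t) p) =o[𝓝 0] fun t : ℝ => |t| ^ k := by
  classical
  -- Every monomial in the support has a nonzero exponent away from `i₀`.
  have key : ∀ d ∈ p.support, ∃ j, j ≠ i₀ ∧ d j ≠ 0 := by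
    intro d hd
    by_contra h
    push_neg at h
    have hd0 : ∀ j, j ≠ i₀ → d j = 0 := fun j hj => h j hj
    -- evaluate at `Pi.single i₀ 1`
    have h1 := haxis 1
    rw [one_smul, eval_eq'] at h1
    have hsum : ∑ d' ∈ p.support, coeff d' p * ∏ i, (Pi.single i₀ 1 : Fin n → ℝ) i ^ d' i
        = coeff d p := by
      rw [Finset.sum_eq_single d]
      · have : ∏ i, (Pi.single i₀ 1 : Fin n → ℝ) i ^ d i = 1 := by
          apply Finset.prod_eq_one
          intro i _
          by_cases hi : i = i₀
          · subst hi; simp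
          · rw [hd0 i hi]; simp
        rw [this, mul_one]
      · intro d' hd' hne
        -- show the product vanishes unless `d'` is supported at `i₀` only,
        -- and then `d' = d` by homogeneity, contradiction
        by_cases hax : ∀ j, j ≠ i₀ → d' j = 0
        · exfalso
          apply hne
          have hk := hp (mem_support_iff.mp hd)
          have hk' := hp (mem_support_iff.mp hd')
          have hwd : (Finsupp.weight w) d = w i₀ * d i₀ := by
            rw [Finsupp.weight_apply, Finsupp.sum]
            rw [Finset.sum_eq_single i₀]
            · simp [mul_comm]
            · intro b hb hbne
              rw [hd0 b hbne]; simp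
            · intro hb
              simp [Finsupp.notMem_support_iff.mp hb]
          have hwd' : (Finsupp.weight w) d' = w i₀ * d' i₀ := by
            rw [Finsupp.weight_apply, Finsupp.sum]
            rw [Finset.sum_eq_single i₀]
            · simp [mul_comm]
            · intro b hb hbne
              rw [hax b hbne]; simp
            · intro hb
              simp [Finsupp.notMem_support_iff.mp hb]
          have : w i₀ * d' i₀ = w i₀ * d i₀ := by
            rw [← hwd, ← hwd', hk, hk']
          have hii : d' i₀ = d i₀ :=
            Nat.eq_of_mul_eq_mul_left (lt_of_lt_of_le Nat.zero_lt_one (hw i₀)) this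
          ext j
          by_cases hj : j = i₀
          · subst hj; exact hii
          · rw [hax j hj, hd0 j hj]
        · push_neg at hax
          obtain ⟨j, hj, hdj⟩ := hax
          have : ∏ i, (Pi.single i₀ 1 : Fin n → ℝ) i ^ d' i = 0 := by
            apply Finset.prod_eq_zero (Finset.mem_univ j)
            rw [Pi.single_eq_of_ne hj]
            exact zero_pow hdj
          rw [this, mul_zero]
      · intro hd'; exact absurd hd hd'
    rw [hsum] at h1
    exact mem_support_iff.mp hd h1
  -- expand the evaluation as a sum over the support
  have heval : (fun t : ℝ => MvPolynomial.eval (x t) p)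
      = fun t => ∑ d ∈ p.support, coeff d p * ∏ i, x t i ^ d i := by
    funext t; exact eval_eq' _ _
  rw [heval]
  refine (IsLittleO.sum (A := fun d t => coeff d p * ∏ i, x t i ^ d i) (s := p.support) ?_).congr_left
    (fun t => Finset.sum_apply _ _ _)
  intro d hd
  obtain ⟨j, hj, hdj⟩ := key d hd
  apply IsLittleO.const_mul_left
  -- the degree identity
  have hk : k = ∑ i, w i * d i := by
    have := hp (mem_support_iff.mp hd)
    rw [← this, Finsupp.weight_apply, Finsupp.sum]
    rw [Finset.sum_subset (Finset.subset_univ d.support)]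
    · simp [mul_comm]
    · intro i _ hi
      simp [Finsupp.notMem_support_iff.mp hi]
  -- rewrite the target as a product
  have htarget : (fun t : ℝ => |t| ^ k) = fun t : ℝ => ∏ i, |t| ^ (w i * d i) := by
    funext t
    rw [Finset.prod_pow_eq_pow_sum, hk]
  rw [htarget]
  -- split off the factor `j`
  have hsplit : (fun t : ℝ => ∏ i, x t i ^ d i)
      = fun t : ℝ => x t j ^ d j * ∏ i ∈ Finset.univ.erase j, x t i ^ d i := by
    funext t
    exact (Finset.mul_prod_erase _ _ (Finset.mem_univ j)).symm
  have hsplit' : (fun t : ℝ => ∏ i, |t| ^ (w i * d i))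
      = fun t : ℝ => |t| ^ (w j * d j) * ∏ i ∈ Finset.univ.erase j, |t| ^ (w i * d i) := by
    funext t
    exact (Finset.mul_prod_erase _ _ (Finset.mem_univ j)).symm
  rw [hsplit, hsplit']
  have hOi : ∀ i, (fun t : ℝ => x t i) =O[𝓝 0] fun t : ℝ => |t| ^ (w i) := by
    intro i
    by_cases hi : i = i₀
    · subst hi; exact hx₀
    · exact (hx i hi).isBigO
  have hlo : (fun t : ℝ => x t j ^ d j) =o[𝓝 0] fun t : ℝ => |t| ^ (w j * d j) := by
    have := (hx j hj).pow (Nat.pos_of_ne_zero hdj)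
    simpa [← pow_mul] using this
  have hbigO : (fun t : ℝ => ∏ i ∈ Finset.univ.erase j, x t i ^ d i)
      =O[𝓝 0] fun t : ℝ => ∏ i ∈ Finset.univ.erase j, |t| ^ (w i * d i) := by
    apply prod_isBigO
    intro i _
    have := (hOi i).pow (d i)
    simpa [← pow_mul] using this
  exact hlo.mul_isBigO hbigO
end

section
/- Fix n ≥ 1, a nondecreasing weight vector d : Fin n → ℕ with d j ≥ 1 for all j, weighted homogeneous polynomials a_j^l of degree d l − d j for each pair with d l > d j, and the associated triangular frame X_j(x) = e_j + Σ_{l : d l > d j} a_j^l(x) e_l on ℝⁿ. Let q ≥ 1 be an integer. Let γ : (−1,1) → ℝⁿ be a C¹ curve with γ(0) = 0, and suppose there exist continuous functions λ_j : (−1,1) → ℝ such that γ'(t) = Σ_j λ_j(t) X_j(γ(t)) for all t, with λ_j ≡ 0 whenever d j > q, and λ_j(0) = 0 whenever d j = q. Then for every j = 1,…,n, the j-th component satisfies γ_j(t) = o(|t|^{(d j)/q}) as t → 0 (real exponent (d j)/q). -/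
open MvPolynomial Filter Asymptotics Topology


lemma aux_abs_pos : ∀ᶠ t in 𝓝[≠] (0:ℝ), 0 < |t| := by
  filter_upwards [self_mem_nhdsWithin] with t ht
  exact abs_pos.2 ht

lemma aux_abs_le_one : ∀ᶠ t in 𝓝[≠] (0:ℝ), |t| ≤ 1 := by
  have : ∀ᶠ t in 𝓝 (0:ℝ), |t| ≤ 1 := by
    filter_upwards [Metric.ball_mem_nhds (0:ℝ) one_pos] with t ht
    simp only [Metric.mem_ball, Real.dist_eq, sub_zero] at ht
    exact le_of_lt ht
  exact nhdsWithin_le_nhds this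

lemma aux_one_littleo {c : ℝ} (hc : c < 0) :
    (fun _ : ℝ => (1:ℝ)) =o[𝓝[≠] (0:ℝ)] fun t => |t| ^ c := by
  rw [isLittleO_const_left]
  refine Or.inr ?_
  have h1 : Tendsto (fun t : ℝ => |t| ^ (-c)) (𝓝[≠] (0:ℝ)) (𝓝[>] (0:ℝ)) := by
    rw [tendsto_nhdsWithin_iff]
    constructor
    · have hcont : ContinuousAt (fun t : ℝ => |t| ^ (-c)) 0 :=
        continuous_abs.continuousAt.rpow_const (Or.inr (by linarith))
      have := hcont.tendsto
      simp only [abs_zero, Real.zero_rpow (show -c ≠ 0 by linarith)] at this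
      exact this.mono_left nhdsWithin_le_nhds
    · filter_upwards [aux_abs_pos] with t ht
      exact Real.rpow_pos_of_pos ht _
  have h2 : Tendsto (fun t : ℝ => (|t| ^ (-c))⁻¹) (𝓝[≠] (0:ℝ)) atTop :=
    h1.inv_tendsto_nhdsGT_zero
  have h3 : ∀ t : ℝ, (|t| ^ (-c))⁻¹ = ‖|t| ^ c‖ := by
    intro t
    rw [Real.norm_eq_abs, abs_of_nonneg (Real.rpow_nonneg (abs_nonneg t) _),
      ← Real.rpow_neg (abs_nonneg t), neg_neg]
  have h4 : (norm ∘ fun t : ℝ => |t| ^ c) = fun t : ℝ => (|t| ^ (-c))⁻¹ := by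
    funext t; rw [Function.comp_apply, ← h3]
  rw [h4]
  exact h2

lemma aux_rpow_bigO {β c : ℝ} (h : c ≤ β) :
    (fun t : ℝ => |t| ^ β) =O[𝓝[≠] (0:ℝ)] fun t => |t| ^ c := by
  rw [isBigO_iff]
  refine ⟨1, ?_⟩
  filter_upwards [aux_abs_pos, aux_abs_le_one] with t h0 h1
  rw [Real.norm_eq_abs, Real.norm_eq_abs, abs_of_nonneg (Real.rpow_nonneg (abs_nonneg t) _),
    abs_of_nonneg (Real.rpow_nonneg (abs_nonneg t) _), one_mul]
  exact Real.rpow_le_rpow_of_exponent_ge h0 h1 h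

lemma aux_right (f f' : ℝ → ℝ) (hf0 : f 0 = 0)
    (hd : ∀ t ∈ Set.Ioo (-1:ℝ) 1, HasDerivAt f (f' t) t)
    (hc : ContinuousOn f' (Set.Ioo (-1:ℝ) 1))
    {α : ℝ} (hα : 0 < α)
    (h : f' =o[𝓝[≠] (0:ℝ)] fun t => |t| ^ (α - 1)) :
    f =o[𝓝[Set.Ici (0:ℝ)] 0] fun t => |t| ^ α := by
  rw [isLittleO_iff]
  intro ε hε
  have hεα : 0 < ε * α := mul_pos hε hα
  have hb := isLittleO_iff.1 h hεα
  obtain ⟨δ, hδpos, hδ⟩ := Metric.mem_nhdsWithin_iff.1 hb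
  have hmem : Set.Ico (0:ℝ) (min δ 1) ∈ 𝓝[Set.Ici (0:ℝ)] 0 :=
    Ico_mem_nhdsGE_of_mem ⟨le_refl _, lt_min hδpos one_pos⟩
  filter_upwards [hmem] with t ht
  obtain ⟨ht0, htδ⟩ := ht
  rcases eq_or_lt_of_le ht0 with h0 | h0
  · simp only [← h0, hf0, norm_zero]
    positivity
  · have ht1 : t < 1 := lt_of_lt_of_le htδ (min_le_right _ _)
    have htδ' : t < δ := lt_of_lt_of_le htδ (min_le_left _ _)
    have hsub : Set.uIcc (0:ℝ) t ⊆ Set.Ioo (-1:ℝ) 1 := by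
      rw [Set.uIcc_of_le (le_of_lt h0)]
      intro s hs
      exact ⟨by linarith [hs.1], by linarith [hs.2]⟩
    have hint : IntervalIntegrable f' MeasureTheory.volume 0 t :=
      (hc.mono hsub).intervalIntegrable
    have hftc : ∫ s in (0:ℝ)..t, f' s = f t - f 0 :=
      intervalIntegral.integral_eq_sub_of_hasDerivAt (fun s hs => hd s (hsub hs)) hint
    have hgint : IntervalIntegrable (fun s : ℝ => ε * α * s ^ (α - 1))
        MeasureTheory.volume 0 t :=
      (intervalIntegral.intervalIntegrable_rpow' (by linarith)).const_mul _
    have hae : ∀ᵐ s ∂(MeasureTheory.volume.restrict (Set.uIoc (0:ℝ) t)),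
        ‖f' s‖ ≤ ε * α * s ^ (α - 1) := by
      rw [Set.uIoc_of_le (le_of_lt h0)]
      rw [MeasureTheory.ae_restrict_iff' measurableSet_Ioc]
      refine MeasureTheory.ae_of_all _ ?_
      intro s hs
      have hs0 : 0 < s := hs.1
      have hsd : s < δ := lt_of_le_of_lt hs.2 htδ'
      have hmem2 : s ∈ Metric.ball (0:ℝ) δ ∩ {(0:ℝ)}ᶜ := by
        constructor
        · simp only [Metric.mem_ball, Real.dist_eq, sub_zero]
          rw [abs_of_pos hs0]; exact hsd
        · exact ne_of_gt hs0
      have := hδ hmem2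
      simp only [Set.mem_setOf_eq] at this
      rw [Real.norm_eq_abs (|s| ^ (α-1)), abs_of_nonneg (Real.rpow_nonneg (abs_nonneg s) _),
        abs_of_pos hs0] at this
      exact this
    have hbound := intervalIntegral.norm_integral_le_abs_of_norm_le hae hgint
    have hval : ∫ s in (0:ℝ)..t, ε * α * s ^ (α - 1) = ε * t ^ α := by
      rw [intervalIntegral.integral_const_mul, integral_rpow (Or.inl (by linarith))]
      rw [sub_add_cancel, Real.zero_rpow (ne_of_gt hα)]
      field_simp
      ring
    rw [hftc, hf0, sub_zero] at hbound
    rw [hval] at hbound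
    have htα : (0:ℝ) ≤ t ^ α := Real.rpow_nonneg (le_of_lt h0) _
    calc ‖f t‖ ≤ |ε * t ^ α| := hbound
      _ = ε * t ^ α := abs_of_nonneg (mul_nonneg (le_of_lt hε) htα)
      _ = ε * ‖|t| ^ α‖ := by
          rw [Real.norm_eq_abs, abs_of_nonneg (Real.rpow_nonneg (abs_nonneg t) _),
            abs_of_pos h0]

lemma aux_integrate (f f' : ℝ → ℝ) (hf0 : f 0 = 0)
    (hd : ∀ t ∈ Set.Ioo (-1:ℝ) 1, HasDerivAt f (f' t) t)
    (hc : ContinuousOn f' (Set.Ioo (-1:ℝ) 1))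
    {α : ℝ} (hα : 0 < α)
    (h : f' =o[𝓝[≠] (0:ℝ)] fun t => |t| ^ (α - 1)) :
    f =o[𝓝 (0:ℝ)] fun t => |t| ^ α := by
  have hR := aux_right f f' hf0 hd hc hα h
  have hnegne : Tendsto (fun t : ℝ => -t) (𝓝[≠] (0:ℝ)) (𝓝[≠] (0:ℝ)) := by
    apply Filter.Tendsto.inf
    · simpa using (continuous_neg.tendsto (0:ℝ))
    · exact tendsto_principal_principal.2 fun x hx => neg_ne_zero.2 hx
  have hmaps : ∀ t : ℝ, t ∈ Set.Ioo (-1:ℝ) 1 → -t ∈ Set.Ioo (-1:ℝ) 1 := by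
    intro t ht
    rw [Set.mem_Ioo] at ht ⊢
    constructor <;> linarith [ht.1, ht.2]
  have hg := aux_right (fun t => f (-t)) (fun t => -f' (-t)) (by simp [hf0])
    (fun t ht => by
      have := (hd (-t) (hmaps t ht)).comp t (hasDerivAt_neg t)
      simpa [mul_comm, Function.comp_def] using this)
    (by
      have : ContinuousOn (fun t : ℝ => f' (-t)) (Set.Ioo (-1:ℝ) 1) :=
        hc.comp continuousOn_neg hmaps
      exact this.neg)
    hα
    (by
      have := (h.comp_tendsto hnegne).neg_left
      simp only [Function.comp_def, abs_neg] at this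
      exact this)
  have hnegle : Tendsto (fun t : ℝ => -t) (𝓝[Set.Iic (0:ℝ)] 0) (𝓝[Set.Ici (0:ℝ)] 0) := by
    apply Filter.Tendsto.inf
    · simpa using (continuous_neg.tendsto (0:ℝ))
    · exact tendsto_principal_principal.2 fun x hx => Set.mem_Ici.2 (neg_nonneg.2 hx)
  have hL : f =o[𝓝[Set.Iic (0:ℝ)] 0] fun t => |t| ^ α := by
    have := hg.comp_tendsto hnegle
    simp only [Function.comp_def, neg_neg, abs_neg] at this
    exact this
  rw [← nhdsLE_sup_nhdsGE (0:ℝ)]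
  exact hL.sup hR


/-- The triangular frame `X j (x) = e_j + ∑_{l : d l > d j} a_j^l(x) e_l` associated with a
weight vector `d` and coefficient polynomials `a j l`; this is the coordinate expression of a
left-invariant frame generated by a graded basis of a graded group. -/
noncomputable def gradedFrame (n : ℕ) (d : Fin n → ℕ)
    (a : Fin n → Fin n → MvPolynomial (Fin n) ℝ) (j : Fin n) (x : Fin n → ℝ) : Fin n → ℝ :=
  fun l => (if l = j then (1 : ℝ) else 0) +
    if d j < d l then MvPolynomial.eval x (a j l) else 0

/-- Coordinate form of Proposition 3.4: a `C¹` curve through the origin of degree `≤ q`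
whose pointwise degree at `0` is less than `q` satisfies the weighted little-o estimates
`γ_j(t) = o(|t|^{d j / q})` in all components. -/
theorem curve_component_isLittleO_of_low_degree
    (n : ℕ) (hn : 1 ≤ n) (d : Fin n → ℕ) (hd1 : ∀ j, 1 ≤ d j) (hmono : Monotone d)
    (a : Fin n → Fin n → MvPolynomial (Fin n) ℝ)
    (ha : ∀ j l : Fin n, d j < d l → (a j l).IsWeightedHomogeneous d (d l - d j))
    (q : ℕ) (hq : 1 ≤ q)
    (γ γ' : ℝ → Fin n → ℝ)
    (hγ0 : γ 0 = 0)
    (hderiv : ∀ t ∈ Set.Ioo (-1 : ℝ) 1, HasDerivAt γ (γ' t) t)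
    (hγ'c : ContinuousOn γ' (Set.Ioo (-1 : ℝ) 1))
    (lam : Fin n → ℝ → ℝ)
    (hlamc : ∀ j, ContinuousOn (lam j) (Set.Ioo (-1 : ℝ) 1))
    (hode : ∀ t ∈ Set.Ioo (-1 : ℝ) 1, γ' t = ∑ j, lam j t • gradedFrame n d a j (γ t))
    (hhigh : ∀ j, q < d j → ∀ t ∈ Set.Ioo (-1 : ℝ) 1, lam j t = 0)
    (heq : ∀ j, d j = q → lam j 0 = 0) :
    ∀ j, (fun t : ℝ => γ t j) =o[𝓝 0] fun t : ℝ => |t| ^ ((d j : ℝ) / (q : ℝ)) := by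
  have hIoo : Set.Ioo (-1:ℝ) 1 ∈ 𝓝 (0:ℝ) := Ioo_mem_nhds (by norm_num) (by norm_num)
  have hIooev : ∀ᶠ t in 𝓝[≠] (0:ℝ), t ∈ Set.Ioo (-1:ℝ) 1 :=
    Filter.eventually_of_mem (nhdsWithin_le_nhds hIoo) fun x hx => hx
  have hq0 : (0:ℝ) < (q:ℝ) := by exact_mod_cast hq
  have hlam0 : ∀ i, ContinuousAt (lam i) 0 := fun i => (hlamc i).continuousAt hIoo
  suffices H : ∀ k : ℕ, ∀ j, d j = k →
      (fun t : ℝ => γ t j) =o[𝓝 0] fun t : ℝ => |t| ^ ((d j : ℝ) / (q : ℝ)) by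
    intro j; exact H (d j) j rfl
  intro k
  induction k using Nat.strong_induction_on with
  | _ k IH =>
    intro j hjk
    -- the polynomial estimate
    have hpolymain : ∀ i : Fin n, d i < d j →
        (fun t => MvPolynomial.eval (γ t) (a i j)) =o[𝓝[≠] (0:ℝ)]
          fun t => |t| ^ (((d j - d i : ℕ):ℝ)/(q:ℝ)) := by
      intro i hij
      have hhom := ha i j hij
      have heval : (fun t => MvPolynomial.eval (γ t) (a i j)) =
          fun t => ∑ m ∈ (a i j).support,
            MvPolynomial.coeff m (a i j) * ∏ l ∈ m.support, γ t l ^ m l :=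
        funext fun t => MvPolynomial.eval_eq _ _
      rw [heval]
      refine IsLittleO.fun_sum ?_
      intro m hm
      have hw : Finsupp.weight d m = d j - d i := hhom (MvPolynomial.mem_support_iff.1 hm)
      have hwsum : ∑ l ∈ m.support, m l * d l = d j - d i := by
        rw [← hw, Finsupp.weight_apply, Finsupp.sum]
        simp only [smul_eq_mul]
      have hfac : ∀ l ∈ m.support, (fun t => γ t l ^ m l) =o[𝓝[≠] (0:ℝ)]
          fun t => |t| ^ (((m l * d l : ℕ):ℝ)/(q:ℝ)) := by
        intro l hl
        have hml : 0 < m l := Nat.pos_of_ne_zero (Finsupp.mem_support_iff.1 hl)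
        have h1 : m l * d l ≤ d j - d i := by
          rw [← hwsum]; exact Finset.single_le_sum (f := fun l => m l * d l) (fun x _ => Nat.zero_le _) hl
        have h2 : d l ≤ m l * d l := Nat.le_mul_of_pos_left _ hml
        have hdl : d l < k := by
          have := hd1 i
          omega
        have hIHl := IH (d l) hdl l rfl
        have hpow := (hIHl.mono (nhdsWithin_le_nhds (s := {(0:ℝ)}ᶜ))).pow hml
        have hrw : (fun t : ℝ => (|t| ^ ((d l:ℝ)/(q:ℝ))) ^ m l) =
            fun t : ℝ => |t| ^ (((m l * d l : ℕ):ℝ)/(q:ℝ)) := by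
          funext t
          rw [← Real.rpow_natCast (|t| ^ ((d l:ℝ)/(q:ℝ))) (m l),
            ← Real.rpow_mul (abs_nonneg t)]
          congr 1
          push_cast
          ring
        rw [hrw] at hpow
        exact hpow
      have hprodO : ∀ s : Finset (Fin n), (∀ l ∈ s, l ∈ m.support) →
          (fun t => ∏ l ∈ s, γ t l ^ m l) =O[𝓝[≠] (0:ℝ)]
            fun t => |t| ^ (((∑ l ∈ s, m l * d l : ℕ):ℝ)/(q:ℝ)) := by
        intro s
        induction s using Finset.induction_on with
        | empty =>
          intro _
          simp only [Finset.prod_empty, Finset.sum_empty, Nat.cast_zero, zero_div]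
          refine (isBigO_refl (fun _ : ℝ => (1:ℝ)) _).congr (fun _ => rfl) fun t => ?_
          rw [Real.rpow_zero]
        | @insert b s hbs ihs =>
          intro hsub
          have h1 := (hfac b (hsub b (Finset.mem_insert_self b s))).isBigO
          have h2 := ihs fun l hl => hsub l (Finset.mem_insert_of_mem hl)
          refine (h1.mul h2).congr' ?_ ?_
          · filter_upwards with t
            rw [Finset.prod_insert hbs]
          · filter_upwards [aux_abs_pos] with t ht
            rw [← Real.rpow_add ht, Finset.sum_insert hbs]
            congr 1
            push_cast
            ring
      have hne : m.support.Nonempty := by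
        rcases Finset.eq_empty_or_nonempty m.support with he | hne
        · exfalso
          have hm0 : m = 0 := Finsupp.support_eq_empty.1 he
          rw [hm0] at hw
          simp only [map_zero] at hw
          omega
        · exact hne
      obtain ⟨l0, hl0⟩ := hne
      have hsplit : (fun t : ℝ => ∏ l ∈ m.support, γ t l ^ m l) =
          fun t => γ t l0 ^ m l0 * ∏ l ∈ m.support.erase l0, γ t l ^ m l :=
        funext fun t => (Finset.mul_prod_erase _ _ hl0).symm
      have hlo := (hfac l0 hl0).mul_isBigO
        (hprodO (m.support.erase l0) fun l hl => Finset.mem_of_mem_erase hl)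
      have hfinal : (fun t : ℝ => ∏ l ∈ m.support, γ t l ^ m l) =o[𝓝[≠] (0:ℝ)]
          fun t => |t| ^ (((d j - d i : ℕ):ℝ)/(q:ℝ)) := by
        rw [hsplit]
        refine hlo.congr' EventuallyEq.rfl ?_
        filter_upwards [aux_abs_pos] with t ht
        rw [← Real.rpow_add ht]
        congr 1
        rw [← add_div, ← Nat.cast_add, Finset.add_sum_erase m.support (fun l => m l * d l) hl0, hwsum]
      exact hfinal.const_mul_left _
    -- each term of the ODE sum is little-o
    have hterm : ∀ i : Fin n, (fun t => lam i t * ((if j = i then (1:ℝ) else 0) +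
        if d i < d j then MvPolynomial.eval (γ t) (a i j) else 0)) =o[𝓝[≠] (0:ℝ)]
        fun t => |t| ^ ((k:ℝ)/(q:ℝ) - 1) := by
      intro i
      by_cases hiq : q < d i
      · refine (isLittleO_zero _ _).congr' ?_ EventuallyEq.rfl
        filter_upwards [hIooev] with t ht
        rw [hhigh i hiq t ht, zero_mul]
      · push_neg at hiq
        have hlamO : (fun t => lam i t) =O[𝓝[≠] (0:ℝ)] (fun _ => (1:ℝ)) :=
          (((hlam0 i).tendsto.isBigO_one ℝ)).mono nhdsWithin_le_nhds
        by_cases hij : d i < d j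
        · have hine : j ≠ i := fun h => absurd hij (by rw [h]; exact lt_irrefl _)
          have hmul := hlamO.mul_isLittleO (hpolymain i hij)
          simp only [one_mul] at hmul
          have hexp : ((k:ℝ)/(q:ℝ) - 1) ≤ ((d j - d i : ℕ):ℝ)/(q:ℝ) := by
            have hcast : ((d j - d i : ℕ):ℝ) = (k:ℝ) - (d i:ℝ) := by
              rw [Nat.cast_sub hij.le, hjk]
            rw [hcast, sub_div]
            have : (d i:ℝ)/(q:ℝ) ≤ 1 := (div_le_one hq0).2 (by exact_mod_cast hiq)
            linarith
          refine (hmul.trans_isBigO (aux_rpow_bigO hexp)).congr' ?_ EventuallyEq.rfl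
          filter_upwards with t
          rw [if_neg hine, if_pos hij, zero_add]
        · by_cases hji : j = i
          · subst hji
            rcases lt_or_eq_of_le hiq with hlt | heqq
            · have hcneg : (k:ℝ)/(q:ℝ) - 1 < 0 := by
                rw [sub_neg, div_lt_one hq0]
                exact_mod_cast hjk ▸ hlt
              refine (hlamO.trans_isLittleO (aux_one_littleo hcneg)).congr' ?_ EventuallyEq.rfl
              filter_upwards with t
              rw [if_pos rfl, if_neg hij, add_zero, mul_one]
            · have hl0' : Tendsto (lam j) (𝓝 0) (𝓝 0) := by
                have := (hlam0 j).tendsto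
                rwa [heq j heqq] at this
              have hlo1 : (fun t => lam j t) =o[𝓝[≠] (0:ℝ)] (fun _ : ℝ => (1:ℝ)) :=
                (isLittleO_one_iff ℝ).2 (hl0'.mono_left nhdsWithin_le_nhds)
              have hexp0 : (k:ℝ)/(q:ℝ) - 1 = 0 := by
                rw [← hjk, heqq]
                field_simp
                norm_num
              refine hlo1.congr' ?_ ?_
              · filter_upwards with t
                rw [if_pos rfl, if_neg hij, add_zero, mul_one]
              · filter_upwards with t
                rw [hexp0, Real.rpow_zero]
          · have hzero : (fun t => lam i t * ((if j = i then (1:ℝ) else 0) +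
                if d i < d j then MvPolynomial.eval (γ t) (a i j) else 0)) =
                fun _ => (0:ℝ) := by
              funext t
              rw [if_neg hji, if_neg hij, add_zero, mul_zero]
            rw [hzero]
            exact isLittleO_zero _ _
    -- the derivative of the j-th component is little-o
    have hsum : (fun t => γ' t j) =o[𝓝[≠] (0:ℝ)] fun t => |t| ^ ((k:ℝ)/(q:ℝ) - 1) := by
      have hS := IsLittleO.sum (s := (Finset.univ : Finset (Fin n))) fun i _ => hterm i
      refine hS.congr' ?_ EventuallyEq.rfl
      filter_upwards [hIooev] with t ht
      rw [hode t ht]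
      simp only [Finset.sum_apply, Pi.smul_apply, smul_eq_mul, gradedFrame]
    -- integrate
    have hk1 : 1 ≤ k := hjk ▸ hd1 j
    have hα : (0:ℝ) < (k:ℝ)/(q:ℝ) := div_pos (by exact_mod_cast hk1) hq0
    have hcompd : ∀ t ∈ Set.Ioo (-1:ℝ) 1, HasDerivAt (fun s => γ s j) (γ' t j) t :=
      fun t ht => hasDerivAt_pi.1 (hderiv t ht) j
    have hcompc : ContinuousOn (fun t => γ' t j) (Set.Ioo (-1:ℝ) 1) :=
      (continuous_apply j).comp_continuousOn hγ'c
    have hres := aux_integrate (fun t => γ t j) (fun t => γ' t j)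
      (by simp [hγ0]) hcompd hcompc hα hsum
    rw [hjk]
    exact hres
end

section
/- Fix n ≥ 1, a nondecreasing weight vector d : Fin n → ℕ with d j ≥ 1 for all j, weighted homogeneous polynomials a_j^l of degree d l − d j for each pair with d l > d j, and the associated triangular frame X_j(x) = e_j + Σ_{l : d l > d j} a_j^l(x) e_l on ℝⁿ. Let q ≥ 1 be an integer and i₀ an index with d i₀ = q. Suppose moreover that for every i with d i > q the polynomial a_{i₀}^i vanishes identically on the i₀-th coordinate axis (a_{i₀}^i(s·e_{i₀}) = 0 for all s ∈ ℝ). Let γ : (−1,1) → ℝⁿ be a C¹ curve with γ(0) = 0, and suppose there exist continuous λ_j : (−1,1) → ℝ with γ'(t) = Σ_j λ_j(t) X_j(γ(t)) for all t, such that λ_j ≡ 0 whenever d j > q, λ_j(0) = 0 for every j ≠ i₀ with d j = q, and λ_{i₀}(0) ≠ 0. Then for every i ≠ i₀, the i-th component satisfies γ_i(t) = o(|t|^{(d i)/q}) as t → 0 (real exponent (d i)/q). -/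
open MvPolynomial Filter Asymptotics Topology

/-- The basic scale function `|t| ^ (1/q)`. -/
noncomputable def gq (q : ℕ) (t : ℝ) : ℝ := |t| ^ ((q : ℝ)⁻¹)

lemma gq_def (q : ℕ) (t : ℝ) : gq q t = |t| ^ ((q : ℝ)⁻¹) := rfl

lemma gq_nonneg (q : ℕ) (t : ℝ) : 0 ≤ gq q t := Real.rpow_nonneg (abs_nonneg t) _

lemma gq_pow_q {q : ℕ} (hq : 1 ≤ q) (t : ℝ) : gq q t ^ q = |t| := by
  have hq0 : (q : ℝ) ≠ 0 := Nat.cast_ne_zero.mpr (by omega)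
  rw [gq_def, ← Real.rpow_natCast (|t| ^ ((q : ℝ)⁻¹)) q, ← Real.rpow_mul (abs_nonneg t),
    inv_mul_cancel₀ hq0, Real.rpow_one]

lemma gq_tendsto {q : ℕ} (hq : 1 ≤ q) :
    Tendsto (fun t : ℝ => gq q t) (𝓝 0) (𝓝 0) := by
  have hqpos : (0 : ℝ) < (q : ℝ)⁻¹ := by
    have : (0 : ℝ) < q := by exact_mod_cast hq
    positivity
  have h1 : ContinuousAt (fun x : ℝ => x ^ ((q : ℝ)⁻¹)) 0 :=
    Real.continuousAt_rpow_const 0 _ (Or.inr hqpos.le)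
  have h2 : Tendsto (fun t : ℝ => |t|) (𝓝 0) (𝓝 0) := by
    simpa using continuous_abs.tendsto (0 : ℝ)
  have := h1.tendsto.comp h2
  simpa [gq, Real.zero_rpow hqpos.ne', Function.comp_def] using this

lemma gq_pow_bigO (q : ℕ) {b c : ℕ} (hbc : b ≤ c) :
    (fun t : ℝ => gq q t ^ c) =O[𝓝 0] fun t : ℝ => gq q t ^ b := by
  rw [isBigO_iff]
  refine ⟨1, ?_⟩
  have h1 : ∀ᶠ t : ℝ in 𝓝 0, |t| < 1 := by
    filter_upwards [Metric.ball_mem_nhds (0 : ℝ) one_pos] with t ht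
    simpa [Real.dist_eq] using ht
  filter_upwards [h1] with t ht
  have hg1 : gq q t ≤ 1 := Real.rpow_le_one (abs_nonneg t) ht.le (by positivity)
  have hgn := gq_nonneg q t
  rw [Real.norm_eq_abs, Real.norm_eq_abs, abs_of_nonneg (pow_nonneg hgn _),
    abs_of_nonneg (pow_nonneg hgn _), one_mul]
  exact pow_le_pow_of_le_one hgn hg1 hbc

lemma gq_pow_littleO {q : ℕ} (hq : 1 ≤ q) {b c : ℕ} (hbc : b < c) :
    (fun t : ℝ => gq q t ^ c) =o[𝓝 0] fun t : ℝ => gq q t ^ b := by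
  have h1 : (fun t : ℝ => gq q t ^ (c - b)) =o[𝓝 0] (fun _ : ℝ => (1 : ℝ)) := by
    rw [isLittleO_one_iff]
    have := (gq_tendsto hq).pow (c - b)
    simpa [zero_pow (show c - b ≠ 0 by omega)] using this
  have h2 := h1.mul_isBigO (isBigO_refl (fun t : ℝ => gq q t ^ b) (𝓝 0))
  refine h2.congr (fun t => ?_) (fun t => one_mul _)
  rw [← pow_add]
  congr 1
  omega

lemma prod_bigO {n q : ℕ} (h : Fin n → ℝ → ℝ) (K : Fin n → ℕ) (α : Fin n →₀ ℕ)
    (hO : ∀ l, α l ≠ 0 → (h l) =O[𝓝 0] fun t => gq q t ^ (K l)) :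
    ∀ s : Finset (Fin n), (fun t => ∏ l ∈ s, h l t ^ α l) =O[𝓝 0]
      fun t => gq q t ^ (∑ l ∈ s, α l * K l) := by
  classical
  intro s
  induction s using Finset.induction_on with
  | empty => simpa using isBigO_refl (fun _ : ℝ => (1 : ℝ)) (𝓝 0)
  | @insert m s hmem ih =>
    have hfac : (fun t => h m t ^ α m) =O[𝓝 0] fun t => gq q t ^ (α m * K m) := by
      by_cases hzm : α m = 0
      · simpa [hzm] using isBigO_refl (fun _ : ℝ => (1 : ℝ)) (𝓝 0)
      · have := (hO m hzm).pow (α m)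
        refine this.congr (fun t => rfl) (fun t => ?_)
        rw [← pow_mul, mul_comm (K m) (α m)]
    have h2 := hfac.mul ih
    refine h2.congr (fun t => ?_) (fun t => ?_)
    · rw [Finset.prod_insert hmem]
    · rw [← pow_add, Finset.sum_insert hmem]

lemma prod_littleO {n q : ℕ} (h : Fin n → ℝ → ℝ) (K : Fin n → ℕ)
    (α : Fin n →₀ ℕ) (l₀ : Fin n) (hl₀ : α l₀ ≠ 0)
    (hO : ∀ l, α l ≠ 0 → (h l) =O[𝓝 0] fun t => gq q t ^ (K l))
    (ho : (h l₀) =o[𝓝 0] fun t => gq q t ^ (K l₀)) :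
    (fun t => ∏ l, h l t ^ α l) =o[𝓝 0] fun t => gq q t ^ (∑ l, α l * K l) := by
  classical
  obtain ⟨b, hb⟩ : ∃ b, α l₀ = b + 1 := ⟨α l₀ - 1, by omega⟩
  have hfac : (fun t => h l₀ t ^ α l₀) =o[𝓝 0] fun t => gq q t ^ (α l₀ * K l₀) := by
    have h1 := ((hO l₀ hl₀).pow b).mul_isLittleO ho
    refine h1.congr (fun t => ?_) (fun t => ?_)
    · rw [hb, pow_succ]
    · rw [← pow_mul, ← pow_add, hb]
      congr 1
      ring
  have hrest := prod_bigO h K α hO (Finset.univ.erase l₀)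
  have h2 := hfac.mul_isBigO hrest
  refine h2.congr (fun t => ?_) (fun t => ?_)
  · exact Finset.mul_prod_erase Finset.univ (fun l => h l t ^ α l) (Finset.mem_univ l₀)
  · rw [← pow_add]
    congr 1
    exact Finset.add_sum_erase Finset.univ (fun l => α l * K l) (Finset.mem_univ l₀)

/-- From a little-o bound on the derivative, a little-o bound on the function. -/
lemma deriv_littleO {q c : ℕ} (hq : 1 ≤ q) (f f' : ℝ → ℝ) (hf0 : f 0 = 0)
    (hd : ∀ t ∈ Set.Ioo (-1 : ℝ) 1, HasDerivAt f (f' t) t)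
    (h : f' =o[𝓝 0] fun t => gq q t ^ c) :
    f =o[𝓝 0] fun t => gq q t ^ (c + q) := by
  rw [isLittleO_iff] at h ⊢
  intro ε hε
  obtain ⟨δ, hδ0, hδ⟩ := Metric.eventually_nhds_iff.mp (h hε)
  have hδ'0 : 0 < min δ 1 := lt_min hδ0 one_pos
  rw [Metric.eventually_nhds_iff]
  refine ⟨min δ 1, hδ'0, fun t ht => ?_⟩
  have habs : |t| < min δ 1 := by simpa [Real.dist_eq] using ht
  have hmem : ∀ x ∈ Set.uIcc (0 : ℝ) t, |x| ≤ |t| := by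
    intro x hx
    rcases Set.mem_uIcc.mp hx with ⟨h1, h2⟩ | ⟨h1, h2⟩ <;>
      exact abs_le.mpr ⟨by linarith [neg_abs_le t, abs_nonneg t, le_abs_self t],
        by linarith [neg_abs_le t, abs_nonneg t, le_abs_self t]⟩
  have hsub : Set.uIcc (0 : ℝ) t ⊆ Set.Ioo (-1 : ℝ) 1 := by
    intro x hx
    have h1 : |x| < 1 := lt_of_le_of_lt (hmem x hx) (lt_of_lt_of_le habs (min_le_right _ _))
    exact abs_lt.mp h1 |>.imp id id |> fun h => ⟨h.1, h.2⟩
  have hC : ∀ x ∈ Set.uIcc (0 : ℝ) t, ‖f' x‖ ≤ ε * gq q t ^ c := by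
    intro x hx
    have hxδ : dist x 0 < δ := by
      rw [Real.dist_eq, sub_zero]
      exact lt_of_le_of_lt (hmem x hx) (lt_of_lt_of_le habs (min_le_left _ _))
    refine (hδ hxδ).trans ?_
    have hle : gq q x ^ c ≤ gq q t ^ c := by
      refine pow_le_pow_left₀ (gq_nonneg q x) ?_ c
      exact Real.rpow_le_rpow (abs_nonneg x) (hmem x hx) (by positivity)
    rw [Real.norm_eq_abs, abs_of_nonneg (pow_nonneg (gq_nonneg q x) _)]
    exact mul_le_mul_of_nonneg_left hle hε.le
  have hmvt := Convex.norm_image_sub_le_of_norm_hasDerivWithin_le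
    (fun x hx => (hd x (hsub hx)).hasDerivWithinAt) hC (convex_uIcc 0 t)
    (Set.left_mem_uIcc) (Set.right_mem_uIcc)
  rw [hf0, sub_zero] at hmvt
  calc ‖f t‖ ≤ ε * gq q t ^ c * ‖t - 0‖ := hmvt
    _ = ε * ‖gq q t ^ (c + q)‖ := by
        rw [sub_zero, Real.norm_eq_abs, Real.norm_eq_abs, pow_add, gq_pow_q hq,
          abs_of_nonneg (mul_nonneg (pow_nonneg (gq_nonneg q t) _) (abs_nonneg t)),
          mul_assoc]

/-- Coordinate form of Proposition 3.1 (blow-up estimates at a point of maximum degree):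
if the curve has degree `q` and pointwise degree exactly `q` at `0`, with tangent direction
aligned with `e_{i₀}` (`d i₀ = q`), and the coefficient polynomials `a_{i₀}^i` vanish on the
`i₀`-axis, then `γ_i(t) = o(|t|^{d i / q})` for every `i ≠ i₀`. -/
theorem curve_component_isLittleO_of_max_degree
    (n : ℕ) (hn : 1 ≤ n) (d : Fin n → ℕ) (hd1 : ∀ j, 1 ≤ d j) (hmono : Monotone d)
    (a : Fin n → Fin n → MvPolynomial (Fin n) ℝ)
    (ha : ∀ j l : Fin n, d j < d l → (a j l).IsWeightedHomogeneous d (d l - d j))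
    (q : ℕ) (hq : 1 ≤ q) (i₀ : Fin n) (hi₀ : d i₀ = q)
    (haxis : ∀ i : Fin n, q < d i →
      ∀ s : ℝ, MvPolynomial.eval (s • (Pi.single i₀ 1 : Fin n → ℝ)) (a i₀ i) = 0)
    (γ γ' : ℝ → Fin n → ℝ)
    (hγ0 : γ 0 = 0)
    (hderiv : ∀ t ∈ Set.Ioo (-1 : ℝ) 1, HasDerivAt γ (γ' t) t)
    (hγ'c : ContinuousOn γ' (Set.Ioo (-1 : ℝ) 1))
    (lam : Fin n → ℝ → ℝ)
    (hlamc : ∀ j, ContinuousOn (lam j) (Set.Ioo (-1 : ℝ) 1))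
    (hode : ∀ t ∈ Set.Ioo (-1 : ℝ) 1, γ' t = ∑ j, lam j t • gradedFrame n d a j (γ t))
    (hhigh : ∀ j, q < d j → ∀ t ∈ Set.Ioo (-1 : ℝ) 1, lam j t = 0)
    (heq : ∀ j, j ≠ i₀ → d j = q → lam j 0 = 0)
    (hi₀ne : lam i₀ 0 ≠ 0) :
    ∀ i, i ≠ i₀ → (fun t : ℝ => γ t i) =o[𝓝 0] fun t : ℝ => |t| ^ ((d i : ℝ) / (q : ℝ)) := by
  classical
  have h0mem : (0 : ℝ) ∈ Set.Ioo (-1 : ℝ) 1 := by norm_num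
  have hIoo : Set.Ioo (-1 : ℝ) 1 ∈ 𝓝 (0 : ℝ) := Ioo_mem_nhds (by norm_num) (by norm_num)
  -- constant coefficients of the homogeneous polynomials vanish
  have heval0 : ∀ j l : Fin n, d j < d l → constantCoeff (a j l) = 0 := by
    intro j l hjl
    by_contra hne
    have hc : coeff 0 (a j l) ≠ 0 := by
      rwa [show constantCoeff (a j l) = coeff 0 (a j l) by rw [constantCoeff_eq]] at hne
    have h1 := ha j l hjl hc
    rw [map_zero] at h1
    omega
  -- weighted degree as a sum over all variables
  have hweight : ∀ (p : MvPolynomial (Fin n) ℝ) (m : ℕ), p.IsWeightedHomogeneous d m →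
      ∀ α ∈ p.support, ∑ l, α l * d l = m := by
    intro p m hp α hα
    have h1 := hp (mem_support_iff.mp hα)
    rw [Finsupp.weight_apply, Finsupp.sum_fintype] at h1
    · simpa [smul_eq_mul] using h1
    · intro l; simp
  -- componentwise derivatives
  have hdl : ∀ l : Fin n, ∀ t ∈ Set.Ioo (-1 : ℝ) 1, HasDerivAt (fun s => γ s l) (γ' t l) t :=
    fun l t ht => hasDerivAt_pi.mp (hderiv t ht) l
  -- the derivative at 0
  have hγ'0 : ∀ l, γ' 0 l = lam l 0 := by
    intro l
    have h1 := hode 0 h0mem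
    have h2 : γ' 0 l = ∑ j, lam j 0 * gradedFrame n d a j (γ 0) l := by
      rw [h1]; simp [Finset.sum_apply]
    rw [h2]
    have h3 : ∀ j : Fin n, gradedFrame n d a j (γ 0) l = if l = j then 1 else 0 := by
      intro j
      rw [hγ0]
      unfold gradedFrame
      by_cases hjl : d j < d l
      · simp [hjl, heval0 j l hjl]
      · simp [hjl]
    simp [h3, mul_ite]
  -- basic big-O for all components
  have hOt : ∀ l : Fin n, (fun t => γ t l) =O[𝓝 0] fun t => gq q t ^ q := by
    intro l
    have h1 : HasDerivAt (fun s => γ s l) (γ' 0 l) 0 := hdl l 0 h0mem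
    have h2 := h1.hasFDerivAt.isBigO_sub
    have h3 : (fun t : ℝ => γ t l) =O[𝓝 0] fun t : ℝ => t := by
      simpa [hγ0] using h2
    refine h3.trans ?_
    rw [isBigO_iff]
    refine ⟨1, Eventually.of_forall fun t => ?_⟩
    rw [gq_pow_q hq t]
    simp [Real.norm_eq_abs]
  have hlow_O : ∀ l : Fin n, d l ≤ q → (fun t => γ t l) =O[𝓝 0] fun t => gq q t ^ (d l) :=
    fun l hl => (hOt l).trans (gq_pow_bigO q hl)
  -- little-o for low components distinct from i₀
  have hlow_o : ∀ l : Fin n, l ≠ i₀ → d l ≤ q →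
      (fun t => γ t l) =o[𝓝 0] fun t => gq q t ^ (d l) := by
    intro l hl hlq
    rcases lt_or_eq_of_le hlq with hlt | heq'
    · exact (hOt l).trans_isLittleO (gq_pow_littleO hq hlt)
    · have h1 : HasDerivAt (fun s => γ s l) 0 0 := by
        have := hdl l 0 h0mem
        rwa [hγ'0 l, heq l hl heq'] at this
      have h2 := hasDerivAt_iff_isLittleO.mp h1
      have h3 : (fun t : ℝ => γ t l) =o[𝓝 0] fun t : ℝ => t := by
        simpa [hγ0] using h2
      refine h3.trans_isBigO ?_
      rw [isBigO_iff]
      refine ⟨1, Eventually.of_forall fun t => ?_⟩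
      rw [heq', gq_pow_q hq t]
      simp [Real.norm_eq_abs]
  -- lambda estimates
  have hlamO : ∀ j, (fun t => lam j t) =O[𝓝 0] (fun _ : ℝ => (1 : ℝ)) := by
    intro j
    exact ((hlamc j).continuousAt hIoo).isBigO_one ℝ
  have hlamo : ∀ j, j ≠ i₀ → d j = q →
      (fun t => lam j t) =o[𝓝 0] (fun _ : ℝ => (1 : ℝ)) := by
    intro j hj hjq
    rw [isLittleO_one_iff]
    have h1 := (hlamc j).continuousAt hIoo
    rwa [ContinuousAt, heq j hj hjq] at h1
  -- main induction on the degree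
  have main : ∀ k : ℕ, ∀ i : Fin n, i ≠ i₀ → d i ≤ k →
      (fun t => γ t i) =o[𝓝 0] fun t => gq q t ^ (d i) := by
    intro k
    induction k using Nat.strong_induction_on with
    | _ k IH =>
    intro i hi hik
    by_cases hiq' : d i ≤ q
    · exact hlow_o i hi hiq'
    push_neg at hiq'
    rcases lt_or_eq_of_le hik with hlt | hkeq
    · exact IH (d i) hlt i hi le_rfl
    have IH' : ∀ l : Fin n, l ≠ i₀ → d l < d i →
        (fun t => γ t l) =o[𝓝 0] fun t => gq q t ^ (d l) :=
      fun l hl hld => IH (d l) (by omega) l hl le_rfl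
    have hbig : ∀ l : Fin n, d l < d i →
        (fun t => γ t l) =O[𝓝 0] fun t => gq q t ^ (d l) := by
      intro l hld
      by_cases hlq : d l ≤ q
      · exact hlow_O l hlq
      · have hl : l ≠ i₀ := fun h => by rw [h, hi₀] at hlq; omega
        exact (IH' l hl hld).isBigO
    have hsmall : ∀ l : Fin n, l ≠ i₀ → d l < d i →
        (fun t => γ t l) =o[𝓝 0] fun t => gq q t ^ (d l) := by
      intro l hl hld
      by_cases hlq : d l ≤ q
      · exact hlow_o l hl hlq
      · exact IH' l hl hld
    -- support degree bound
    have hsupp : ∀ j : Fin n, d j < d i → ∀ α ∈ (a j i).support, ∀ l, α l ≠ 0 → d l < d i := by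
      intro j hj α hα l hαl
      have h1 := hweight (a j i) (d i - d j) (ha j i hj) α hα
      have h2 : α l * d l ≤ ∑ m, α m * d m :=
        Finset.single_le_sum (f := fun m => α m * d m) (fun m _ => Nat.zero_le _)
          (Finset.mem_univ l)
      have h3 : d l ≤ α l * d l := Nat.le_mul_of_pos_left _ (Nat.pos_of_ne_zero hαl)
      have h4 := hd1 j
      omega
    -- evaluation big-O
    have hevalO : ∀ j : Fin n, d j < d i →
        (fun t => eval (γ t) (a j i)) =O[𝓝 0] fun t => gq q t ^ (d i - d j) := by
      intro j hj
      have hrw : (fun t : ℝ => eval (γ t) (a j i)) =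
          fun t => ∑ α ∈ (a j i).support, coeff α (a j i) * ∏ l, γ t l ^ α l :=
        funext fun t => by rw [eval_eq']
      rw [hrw]
      refine IsBigO.fun_sum ?_
      intro α hα
      have hsum := hweight (a j i) (d i - d j) (ha j i hj) α hα
      have hprod := prod_bigO (fun l t => γ t l) d α
        (fun l hl => hbig l (hsupp j hj α hα l hl)) Finset.univ
      rw [hsum] at hprod
      exact hprod.const_mul_left _
    -- evaluation little-o for the axis polynomial
    have hqi : d i₀ < d i := by rw [hi₀]; exact hiq'
    have hevalo : (fun t => eval (γ t) (a i₀ i)) =o[𝓝 0] fun t => gq q t ^ (d i - q) := by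
      have hrw : ∀ t : ℝ, eval (γ t) (a i₀ i) =
          ∑ α ∈ (a i₀ i).support, coeff α (a i₀ i) *
            (∏ l, γ t l ^ α l -
              ∏ l, ((γ t i₀) • (Pi.single i₀ (1 : ℝ) : Fin n → ℝ)) l ^ α l) := by
        intro t
        calc eval (γ t) (a i₀ i)
            = eval (γ t) (a i₀ i)
              - eval ((γ t i₀) • (Pi.single i₀ (1 : ℝ) : Fin n → ℝ)) (a i₀ i) := by
              rw [haxis i hiq' (γ t i₀), sub_zero]
          _ = ∑ α ∈ (a i₀ i).support, coeff α (a i₀ i) * ∏ l, γ t l ^ α l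
              - ∑ α ∈ (a i₀ i).support, coeff α (a i₀ i) *
                  ∏ l, ((γ t i₀) • (Pi.single i₀ (1 : ℝ) : Fin n → ℝ)) l ^ α l := by
              rw [eval_eq', eval_eq']
          _ = _ := by
              rw [← Finset.sum_sub_distrib]
              exact Finset.sum_congr rfl fun α _ => (mul_sub _ _ _).symm
      rw [funext hrw]
      refine IsLittleO.fun_sum ?_
      intro α hα
      by_cases hpure : ∀ l : Fin n, α l ≠ 0 → l = i₀
      · have hz : ∀ t : ℝ, ∏ l, γ t l ^ α l =
            ∏ l, ((γ t i₀) • (Pi.single i₀ (1 : ℝ) : Fin n → ℝ)) l ^ α l := by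
          intro t
          refine Finset.prod_congr rfl fun l _ => ?_
          by_cases hl0 : α l = 0
          · rw [hl0, pow_zero, pow_zero]
          · have hli := hpure l hl0
            subst hli
            congr 1
            simp
        have hz2 : (fun t : ℝ => coeff α (a i₀ i) *
            (∏ l, γ t l ^ α l -
              ∏ l, ((γ t i₀) • (Pi.single i₀ (1 : ℝ) : Fin n → ℝ)) l ^ α l)) =
            fun _ => 0 := by
          funext t; rw [hz t]; ring
        rw [hz2]
        exact isLittleO_zero _ _
      · push_neg at hpure
        obtain ⟨l₀, hl₀ne, hl₀⟩ := hpure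
        have hzero : ∀ t : ℝ,
            ∏ l, ((γ t i₀) • (Pi.single i₀ (1 : ℝ) : Fin n → ℝ)) l ^ α l = 0 := by
          intro t
          refine Finset.prod_eq_zero (Finset.mem_univ l₀) ?_
          rw [Pi.smul_apply, Pi.single_eq_of_ne hl₀, smul_zero]
          exact zero_pow hl₀ne
        have hsum := hweight (a i₀ i) (d i - d i₀) (ha i₀ i hqi) α hα
        have hprod := prod_littleO (fun l t => γ t l) d α l₀ hl₀ne
          (fun l hl => hbig l (hsupp i₀ hqi α hα l hl))
          (hsmall l₀ hl₀ (hsupp i₀ hqi α hα l₀ hl₀ne))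
        rw [hsum, hi₀] at hprod
        have hz2 : (fun t : ℝ => coeff α (a i₀ i) *
            (∏ l, γ t l ^ α l -
              ∏ l, ((γ t i₀) • (Pi.single i₀ (1 : ℝ) : Fin n → ℝ)) l ^ α l)) =
            fun t => coeff α (a i₀ i) * ∏ l, γ t l ^ α l := by
          funext t; rw [hzero t, sub_zero]
        rw [hz2]
        exact hprod.const_mul_left _
    -- per-index term estimate
    have hterm : ∀ j : Fin n,
        (fun t => lam j t * gradedFrame n d a j (γ t) i) =o[𝓝 0]
          fun t => gq q t ^ (d i - q) := by
      intro j
      by_cases hjq : q < d j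
      · refine (isLittleO_zero _ _).congr' ?_ EventuallyEq.rfl
        filter_upwards [hIoo] with t ht
        rw [hhigh j hjq t ht, zero_mul]
      · push_neg at hjq
        have hji : d j < d i := by omega
        have hij : i ≠ j := fun h => by rw [h] at hji; omega
        have hframe : ∀ t : ℝ, gradedFrame n d a j (γ t) i = eval (γ t) (a j i) := by
          intro t; unfold gradedFrame; simp [hij, hji]
        rcases eq_or_ne j i₀ with rfl | hjne
        · have h1 := (hlamO j).mul_isLittleO hevalo
          exact h1.congr (fun t => by rw [hframe t]) (fun t => one_mul _)
        · rcases lt_or_eq_of_le hjq with hjlt | hjeq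
          · have h1 := (hlamO j).mul (hevalO j hji)
            have h2 : (fun t : ℝ => lam j t * eval (γ t) (a j i)) =O[𝓝 0]
                fun t => gq q t ^ (d i - d j) := by
              refine h1.trans ?_
              exact (isBigO_refl (fun t : ℝ => gq q t ^ (d i - d j)) _).congr_left
                fun t => (one_mul _).symm
            have h3 := h2.trans_isLittleO
              (gq_pow_littleO hq (show d i - q < d i - d j by omega))
            exact h3.congr (fun t => by rw [hframe t]) (fun t => rfl)
          · have h1 := (hlamo j hjne hjeq).mul_isBigO (hevalO j hji)
            refine h1.congr (fun t => by rw [hframe t]) (fun t => ?_)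
            rw [one_mul, hjeq]
    -- derivative little-o
    have hderiv_o : (fun t => γ' t i) =o[𝓝 0] fun t => gq q t ^ (d i - q) := by
      have hsum : (fun t : ℝ => ∑ j, lam j t * gradedFrame n d a j (γ t) i) =o[𝓝 0]
          fun t => gq q t ^ (d i - q) := IsLittleO.fun_sum fun j _ => hterm j
      refine hsum.congr' ?_ EventuallyEq.rfl
      filter_upwards [hIoo] with t ht
      rw [hode t ht]
      simp [Finset.sum_apply]
    -- integrate
    have hint := deriv_littleO hq (fun t => γ t i) (fun t => γ' t i)
      (by show γ 0 i = 0; rw [hγ0]; rfl) (hdl i) hderiv_o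
    rwa [Nat.sub_add_cancel (le_of_lt hiq')] at hint
  -- conclude
  intro i hi
  have h1 := main (d i) i hi le_rfl
  have h2 : (fun t : ℝ => |t| ^ ((d i : ℝ) / (q : ℝ))) = fun t : ℝ => gq q t ^ (d i) := by
    funext t
    rw [gq_def, div_eq_inv_mul, Real.rpow_mul (abs_nonneg t), Real.rpow_natCast]
  rw [h2]
  exact h1
end

section
/- Fix n ≥ 1, a weight vector d : Fin n → ℕ with d j ≥ 1 for all j, and an integer q ≥ 1. Let γ : ℝ → ℝⁿ be continuously differentiable with γ(0) = 0 and γ'(0) ≠ 0, and assume that for every j the component satisfies γ_j(t) = o(|t|^{(d j)/q}) as t → 0 (real exponent (d j)/q). For r > 0 set E_r = {t ∈ (−1,1) : |γ_j(t)| ≤ r^{d j} for every j}. Then r^{−q} · ∫_{E_r} ‖γ'(t)‖ dt tends to +∞ as r → 0⁺ (limit along 𝓝_{>0} 0, to atTop), where ‖·‖ is the Euclidean norm. -/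
open Filter Asymptotics Topology MeasureTheory

/-- Quantitative core of Proposition 3.5: if all components of a `C¹` curve `γ` through the
origin with `γ'(0) ≠ 0` satisfy the weighted little-o bounds `γ_j(t) = o(|t|^{d j / q})`,
then the Euclidean arclength of `γ` inside the anisotropic box of size `r`, divided by `r^q`,
tends to `+∞` as `r → 0⁺`. -/
theorem arclength_in_box_div_rpow_tendsto_atTop
    (n : ℕ) (hn : 1 ≤ n) (d : Fin n → ℕ) (hd1 : ∀ j, 1 ≤ d j)
    (q : ℕ) (hq : 1 ≤ q)
    (γ : ℝ → Fin n → ℝ) (hγ : ContDiff ℝ 1 γ) (hγ0 : γ 0 = 0)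
    (hγ'0 : deriv γ 0 ≠ 0)
    (hlito : ∀ j, (fun t : ℝ => γ t j) =o[𝓝 0] fun t : ℝ => |t| ^ ((d j : ℝ) / (q : ℝ))) :
    Tendsto
      (fun r : ℝ =>
        (∫ t in {t : ℝ | t ∈ Set.Ioo (-1 : ℝ) 1 ∧ ∀ j, |γ t j| ≤ r ^ (d j)},
          Real.sqrt (∑ j, (deriv γ t j) ^ 2)) / r ^ q)
      (𝓝[>] 0) atTop := by
  set f : ℝ → ℝ := fun t => Real.sqrt (∑ j, (deriv γ t j) ^ 2) with hf_def
  have hderiv : Continuous (deriv γ) := hγ.continuous_deriv le_rfl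
  have hfc : Continuous f :=
    Real.continuous_sqrt.comp
      (continuous_finset_sum _ fun j _ => ((continuous_apply j).comp hderiv).pow 2)
  have hf0 : 0 < f 0 := by
    obtain ⟨j, hj⟩ := Function.ne_iff.mp hγ'0
    have hj' : deriv γ 0 j ≠ 0 := by simpa using hj
    exact Real.sqrt_pos.mpr (Finset.sum_pos' (fun i _ => sq_nonneg _)
      ⟨j, Finset.mem_univ j, by positivity⟩)
  set c : ℝ := f 0 / 2 with hc
  have hcpos : 0 < c := by positivity
  rw [tendsto_atTop]
  intro b
  set C : ℝ := max 1 (b / (2 * c) + 1) with hC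
  have hC1 : (1 : ℝ) ≤ C := le_max_left _ _
  have hCpos : (0 : ℝ) < C := lt_of_lt_of_le one_pos hC1
  have hbC : b ≤ 2 * c * C := by
    have h2 : b / (2 * c) + 1 ≤ C := le_max_right _ _
    have h3 := mul_le_mul_of_nonneg_left h2 (by positivity : (0:ℝ) ≤ 2 * c)
    have h4 : 2 * c * (b / (2 * c)) = b := by field_simp
    nlinarith
  -- eventual bounds near 0
  have hsmall : ∀ᶠ t in 𝓝 (0:ℝ), ∀ j, |γ t j| ≤ C ^ (-((d j : ℝ) / q)) * |t| ^ ((d j : ℝ) / q) := by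
    rw [eventually_all]
    intro j
    have hε : (0:ℝ) < C ^ (-((d j : ℝ) / q)) := Real.rpow_pos_of_pos hCpos _
    filter_upwards [(hlito j).def hε] with t ht
    simpa [Real.norm_eq_abs, abs_of_nonneg (Real.rpow_nonneg (abs_nonneg t) _)] using ht
  have hfev : ∀ᶠ t in 𝓝 (0:ℝ), c ≤ f t :=
    (hfc.tendsto 0).eventually (eventually_ge_nhds (by rw [hc]; linarith))
  obtain ⟨δ, hδpos, hδP⟩ := Metric.eventually_nhds_iff.mp (hsmall.and hfev)
  have htend : Tendsto (fun r : ℝ => C * r ^ q) (𝓝[>] 0) (𝓝 0) := by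
    have h0 : Tendsto (fun r : ℝ => C * r ^ q) (𝓝 0) (𝓝 (C * 0 ^ q)) :=
      (continuous_const.mul (continuous_pow q)).tendsto 0
    rw [zero_pow (by omega : q ≠ 0), mul_zero] at h0
    exact h0.mono_left nhdsWithin_le_nhds
  have hev : ∀ᶠ r in 𝓝[>] (0:ℝ), C * r ^ q < min δ 1 :=
    htend.eventually (eventually_lt_nhds (lt_min hδpos one_pos))
  filter_upwards [hev, self_mem_nhdsWithin] with r hr hrpos
  have hr0 : (0:ℝ) < r := hrpos
  set R : ℝ := C * r ^ q with hR
  have hRpos : 0 < R := by positivity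
  have hRδ : R < δ := lt_of_lt_of_le hr (min_le_left _ _)
  have hR1 : R < 1 := lt_of_lt_of_le hr (min_le_right _ _)
  set E : Set ℝ := {t : ℝ | t ∈ Set.Ioo (-1 : ℝ) 1 ∧ ∀ j, |γ t j| ≤ r ^ (d j)} with hE
  have hq0 : (q:ℝ) ≠ 0 := Nat.cast_ne_zero.mpr (by omega)
  have hsub : Set.Icc (-R) R ⊆ E := by
    intro t ht
    have habs : |t| ≤ R := abs_le.mpr ⟨ht.1, ht.2⟩
    have hdist : dist t 0 < δ := by
      rw [Real.dist_eq, sub_zero]; exact lt_of_le_of_lt habs hRδ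
    obtain ⟨hto, _⟩ := hδP hdist
    refine ⟨⟨?_, ?_⟩, ?_⟩
    · have := neg_abs_le t; linarith
    · have := le_abs_self t; linarith
    · intro j
      have hcalc : C ^ (-((d j : ℝ) / q)) * R ^ ((d j : ℝ) / q) = r ^ d j := by
        rw [hR, Real.mul_rpow hCpos.le (by positivity),
            ← mul_assoc, ← Real.rpow_add hCpos, neg_add_cancel, Real.rpow_zero, one_mul,
            ← Real.rpow_natCast r q, ← Real.rpow_mul hr0.le, ← Real.rpow_natCast r (d j)]
        congr 1
        field_simp
      calc |γ t j| ≤ C ^ (-((d j : ℝ) / q)) * |t| ^ ((d j : ℝ) / q) := hto j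
        _ ≤ C ^ (-((d j : ℝ) / q)) * R ^ ((d j : ℝ) / q) := by
            gcongr
        _ = r ^ d j := hcalc
  have hEsub : E ⊆ Set.Icc (-1 : ℝ) 1 := fun t ht => ⟨ht.1.1.le, ht.1.2.le⟩
  have hint : IntegrableOn f E := (hfc.integrableOn_Icc).mono_set hEsub
  have h1 : ∫ t in Set.Icc (-R) R, f t ≤ ∫ t in E, f t := by
    apply setIntegral_mono_set hint
    · exact Filter.Eventually.of_forall fun t => Real.sqrt_nonneg _
    · exact HasSubset.Subset.eventuallyLE hsub
  have h2 : c * (2 * R) ≤ ∫ t in Set.Icc (-R) R, f t := by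
    have hvol : (volume (Set.Icc (-R) R)).toReal = 2 * R := by
      rw [Real.volume_Icc, ENNReal.toReal_ofReal (by linarith)]
      ring
    have := setIntegral_ge_of_const_le (μ := volume) (s := Set.Icc (-R) R)
      measurableSet_Icc measure_Icc_lt_top.ne
      (fun t ht => by
        have habs : |t| ≤ R := abs_le.mpr ⟨ht.1, ht.2⟩
        have hdist : dist t 0 < δ := by
          rw [Real.dist_eq, sub_zero]; exact lt_of_le_of_lt habs hRδ
        exact (hδP hdist).2)
      (hfc.integrableOn_Icc)
    unfold Measure.real at this
    rw [hvol, smul_eq_mul, mul_comm] at this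
    exact this
  have hrq : 0 < r ^ q := pow_pos hr0 q
  rw [le_div_iff₀ hrq]
  calc b * r ^ q ≤ 2 * c * C * r ^ q := by nlinarith
    _ = c * (2 * R) := by rw [hR]; ring
    _ ≤ ∫ t in Set.Icc (-R) R, f t := h2
    _ ≤ ∫ t in E, f t := h1
end

section
/- Fix n ≥ 1, a nondecreasing weight vector d : Fin n → ℕ with d j ≥ 1 for all j, weighted homogeneous polynomials a_j^l of degree d l − d j for each pair with d l > d j, and the associated triangular frame X_j(x) = e_j + Σ_{l : d l > d j} a_j^l(x) e_l on ℝⁿ. Let q ≥ 1 be an integer and let ρ be a metric on ℝⁿ that induces the Euclidean topology and satisfies ρ(0, δ_r x) = r·ρ(0,x) for all r > 0 and x ∈ ℝⁿ. Let γ : ℝ → ℝⁿ be continuously differentiable with γ(0) = 0 and γ'(0) ≠ 0, and suppose there exist continuous λ_j with γ'(t) = Σ_j λ_j(t) X_j(γ(t)) for t ∈ (−1,1), λ_j ≡ 0 whenever d j > q, and λ_j(0) = 0 whenever d j = q. Then r^{−q} · ∫_{{t ∈ (−1,1) : ρ(0, γ(t)) ≤ r}} ‖γ'(t)‖ dt tends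 to +∞ as r → 0⁺, where ‖·‖ is the Euclidean norm. -/
open MvPolynomial Filter Asymptotics Topology MeasureTheory

/-- Proposition 3.5 in graded coordinates: at a point of pointwise degree `< q` of a curve of
degree `≤ q`, the Euclidean arclength of the curve inside the ball of radius `r` of a
homogeneous metric `ρ`, divided by `r^q`, blows up as `r → 0⁺`. -/
theorem arclength_in_ball_div_rpow_tendsto_atTop_of_low_degree
    (n : ℕ) (hn : 1 ≤ n) (d : Fin n → ℕ) (hd1 : ∀ j, 1 ≤ d j) (hmono : Monotone d)
    (a : Fin n → Fin n → MvPolynomial (Fin n) ℝ)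
    (ha : ∀ j l : Fin n, d j < d l → (a j l).IsWeightedHomogeneous d (d l - d j))
    (q : ℕ) (hq : 1 ≤ q)
    -- `ρ` is a metric on `ℝⁿ` inducing the Euclidean topology
    (ρ : (Fin n → ℝ) → (Fin n → ℝ) → ℝ)
    (hρsymm : ∀ x y, ρ x y = ρ y x)
    (hρtri : ∀ x y z, ρ x z ≤ ρ x y + ρ y z)
    (hρeq : ∀ x y, ρ x y = 0 ↔ x = y)
    (hρtop : ∀ x : Fin n → ℝ, (𝓝 x).HasBasis (fun ε : ℝ => 0 < ε) fun ε => {y | ρ x y < ε})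
    -- homogeneity of `ρ` with respect to the anisotropic dilations
    (hρhom : ∀ r : ℝ, 0 < r → ∀ x : Fin n → ℝ,
      ρ 0 (fun j => r ^ (d j) * x j) = r * ρ 0 x)
    (γ : ℝ → Fin n → ℝ) (hγ : ContDiff ℝ 1 γ) (hγ0 : γ 0 = 0)
    (hγ'0 : deriv γ 0 ≠ 0)
    (lam : Fin n → ℝ → ℝ)
    (hlamc : ∀ j, ContinuousOn (lam j) (Set.Ioo (-1 : ℝ) 1))
    (hode : ∀ t ∈ Set.Ioo (-1 : ℝ) 1, deriv γ t = ∑ j, lam j t • gradedFrame n d a j (γ t))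
    (hhigh : ∀ j, q < d j → ∀ t ∈ Set.Ioo (-1 : ℝ) 1, lam j t = 0)
    (heq : ∀ j, d j = q → lam j 0 = 0) :
    Tendsto
      (fun r : ℝ =>
        (∫ t in {t : ℝ | t ∈ Set.Ioo (-1 : ℝ) 1 ∧ ρ 0 (γ t) ≤ r},
          Real.sqrt (∑ j, (deriv γ t j) ^ 2)) / r ^ q)
      (𝓝[>] 0) atTop := by
  classical
  have q0 : (0:ℝ) < q := by exact_mod_cast hq
  have qR : (q:ℝ) ≠ 0 := ne_of_gt q0
  have hγd : Differentiable ℝ γ := hγ.differentiable one_ne_zero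
  have hγcont : Continuous γ := hγ.continuous
  have hcd : Continuous (deriv γ) := hγ.continuous_deriv le_rfl
  have hDj : ∀ (j : Fin n) (t : ℝ), HasDerivAt (fun s => γ s j) (deriv γ t j) t :=
    fun j t => hasDerivAt_pi.mp (hγd t).hasDerivAt j
  have hcdj : ∀ j : Fin n, Continuous (fun t => deriv γ t j) :=
    fun j => (continuous_apply j).comp hcd
  -- continuity of ρ 0 ·
  have hρcont : Continuous fun x : Fin n → ℝ => ρ 0 x := by
    rw [continuous_iff_continuousAt]
    intro x
    rw [ContinuousAt, Metric.tendsto_nhds]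
    intro ε hε
    filter_upwards [(hρtop x).mem_of_mem hε] with y hy
    have h1 := hρtri 0 x y
    have h2 := hρtri 0 y x
    have h3 := hρsymm x y
    have hy' : ρ x y < ε := hy
    rw [Real.dist_eq, abs_lt]
    constructor <;> nlinarith
  -- lam tendsto along 𝓝[>] 0
  have hnle : 𝓝[>] (0:ℝ) ≤ 𝓝[Set.Ioo (-1:ℝ) 1] 0 := by
    rw [nhdsWithin_le_iff]
    exact mem_nhdsWithin_of_mem_nhds (Ioo_mem_nhds (by norm_num) (by norm_num))
  have hlam0 : ∀ k, Tendsto (lam k) (𝓝[>] (0:ℝ)) (𝓝 (lam k 0)) := fun k =>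
    ((hlamc k) 0 (by constructor <;> norm_num)).tendsto.mono_left hnle
  have hev01 : ∀ᶠ t in 𝓝[>] (0:ℝ), t ∈ Set.Ioo (0:ℝ) 1 := Ioo_mem_nhdsGT one_pos
  have hevI : ∀ᶠ t in 𝓝[>] (0:ℝ), t ∈ Set.Ioo (-1:ℝ) 1 :=
    hev01.mono fun t ht => ⟨by linarith [ht.1], ht.2⟩
  -- componentwise ODE
  have hodeC : ∀ t ∈ Set.Ioo (-1:ℝ) 1, ∀ i : Fin n,
      deriv γ t i = lam i t + ∑ k, (if d k < d i then lam k t * eval (γ t) (a k i) else 0) := by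
    intro t ht i
    have h := congrFun (hode t ht) i
    rw [Finset.sum_apply] at h
    simp only [Pi.smul_apply, gradedFrame, smul_eq_mul] at h
    have hterm : ∀ k : Fin n,
        lam k t * ((if i = k then (1:ℝ) else 0) + if d k < d i then eval (γ t) (a k i) else 0)
        = (if i = k then lam k t else 0)
          + (if d k < d i then lam k t * eval (γ t) (a k i) else 0) := by
      intro k; split_ifs <;> ring
    rw [Finset.sum_congr rfl fun k _ => hterm k, Finset.sum_add_distrib,
      Finset.sum_ite_eq] at h
    simpa using h
  -- polynomial bound
  have polyB : ∀ m : ℕ, 1 ≤ m →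
      (∀ l, d l ≤ m → ∀ ε > 0, ∀ᶠ t in 𝓝[>] (0:ℝ), |γ t l| ≤ ε * t ^ ((d l : ℝ)/q)) →
      ∀ p : MvPolynomial (Fin n) ℝ, p.IsWeightedHomogeneous d m →
      ∀ ε > 0, ∀ᶠ t in 𝓝[>] (0:ℝ), |eval (γ t) p| ≤ ε * t ^ ((m : ℝ)/q) := by
    intro m hm hB p hp ε hε
    set C : ℝ := ∑ α ∈ p.support, |coeff α p| with hC
    have hC0 : 0 ≤ C := Finset.sum_nonneg fun _ _ => abs_nonneg _
    set ε' : ℝ := min 1 (ε / (C+1)) with hε'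
    have hε'0 : 0 < ε' := lt_min one_pos (div_pos hε (by linarith))
    have hε'1 : ε' ≤ 1 := min_le_left _ _
    have hkey : C * ε' ≤ ε := by
      have h1 : ε' ≤ ε/(C+1) := min_le_right _ _
      have h2 : C * ε' ≤ C * (ε/(C+1)) := mul_le_mul_of_nonneg_left h1 hC0
      have h3 : C * (ε/(C+1)) ≤ ε := by
        rw [div_eq_mul_inv]
        have : C * (ε * (C+1)⁻¹) = ε * (C/(C+1)) := by field_simp
        rw [this]
        have : C/(C+1) ≤ 1 := by
          rw [div_le_one (by linarith)]; linarith
        nlinarith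
      linarith
    have hall : ∀ᶠ t in 𝓝[>] (0:ℝ), ∀ l : Fin n, d l ≤ m → |γ t l| ≤ ε' * t ^ ((d l:ℝ)/q) := by
      rw [eventually_all]
      intro l
      by_cases hdl : d l ≤ m
      · exact (hB l hdl ε' hε'0).mono fun t h _ => h
      · exact Eventually.of_forall fun t h => absurd h hdl
    filter_upwards [hall, hev01] with t hBt ht
    have ht0 : 0 < t := ht.1
    set u : ℝ := t ^ ((1:ℝ)/q) with hu
    have hu0 : 0 < u := Real.rpow_pos_of_pos ht0 _
    have hu1 : u ≤ 1 := Real.rpow_le_one ht0.le ht.2.le (by positivity)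
    have hupow : ∀ k : ℕ, t ^ ((k:ℝ)/q) = u ^ k := by
      intro k
      have h1 : ((k:ℝ)/q) = (1/q) * k := by ring
      rw [h1, Real.rpow_mul ht0.le, Real.rpow_natCast]
    rw [hupow m]
    have hbound : |eval (γ t) p| ≤ C * ε' * u ^ m := by
      rw [eval_eq']
      calc |∑ α ∈ p.support, coeff α p * ∏ i, γ t i ^ α i|
          ≤ ∑ α ∈ p.support, |coeff α p * ∏ i, γ t i ^ α i| :=
            Finset.abs_sum_le_sum_abs _ _
        _ ≤ ∑ α ∈ p.support, |coeff α p| * (ε' * u ^ m) := by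
            apply Finset.sum_le_sum
            intro α hα
            rw [abs_mul]
            apply mul_le_mul_of_nonneg_left ?_ (abs_nonneg _)
            have hα0 : coeff α p ≠ 0 := MvPolynomial.mem_support_iff.mp hα
            have hw : (Finsupp.weight d) α = m := hp hα0
            have hsum : ∑ i, d i * α i = m := by
              rw [← hw, Finsupp.weight_apply, Finsupp.sum_fintype]
              · apply Finset.sum_congr rfl
                intro i _
                simp [mul_comm]
              · intro i; simp
            have hfac : ∀ i ∈ Finset.univ, |γ t i ^ α i| ≤ (ε' * u ^ (d i)) ^ α i := by
              intro i _
              rw [abs_pow]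
              rcases Nat.eq_zero_or_pos (α i) with h0 | h0
              · simp [h0]
              · apply pow_le_pow_left₀ (abs_nonneg _)
                have hdi : d i ≤ m := by
                  have h4 : d i * α i ≤ ∑ i, d i * α i :=
                    Finset.single_le_sum (f := fun i => d i * α i)
                      (fun i _ => Nat.zero_le _) (Finset.mem_univ i)
                  have h5 : d i ≤ d i * α i := Nat.le_mul_of_pos_right _ h0
                  omega
                have := hBt i hdi
                rwa [hupow (d i)] at this
            have hα1 : 1 ≤ ∑ i, α i := by
              by_contra hcon
              push_neg at hcon
              have : ∀ i, α i = 0 := by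
                intro i
                have h4 : α i ≤ ∑ i, α i :=
                  Finset.single_le_sum (f := fun i => α i)
                    (fun i _ => Nat.zero_le _) (Finset.mem_univ i)
                omega
              have : ∑ i, d i * α i = 0 := by
                apply Finset.sum_eq_zero; intro i _; rw [this i, mul_zero]
              omega
            calc |∏ i, γ t i ^ α i| = ∏ i, |γ t i ^ α i| := by
                  rw [Finset.abs_prod]
              _ ≤ ∏ i, (ε' * u ^ (d i)) ^ α i :=
                  Finset.prod_le_prod (fun i _ => abs_nonneg _) hfac
              _ = ε' ^ (∑ i, α i) * u ^ (∑ i, d i * α i) := by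
                  simp only [mul_pow, ← pow_mul, Finset.prod_mul_distrib,
                    Finset.prod_pow_eq_pow_sum]
              _ = ε' ^ (∑ i, α i) * u ^ m := by rw [hsum]
              _ ≤ ε' * u ^ m := by
                  apply mul_le_mul_of_nonneg_right ?_ (pow_nonneg hu0.le m)
                  exact pow_le_of_le_one hε'0.le hε'1 (by omega)
        _ = C * ε' * u ^ m := by rw [← Finset.sum_mul]; ring
    calc |eval (γ t) p| ≤ C * ε' * u ^ m := hbound
      _ ≤ ε * u ^ m := mul_le_mul_of_nonneg_right hkey (pow_nonneg hu0.le m)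
  -- main induction
  have main : ∀ N : ℕ, ∀ j : Fin n, d j < N →
      ∀ ε > 0, ∀ᶠ t in 𝓝[>] (0:ℝ), |γ t j| ≤ ε * t ^ ((d j : ℝ)/q) := by
    intro N
    induction N with
    | zero => exact fun j h => absurd h (Nat.not_lt_zero _)
    | succ N IH =>
      intro j hjN ε hε
      set β : ℝ := ((d j : ℝ) - q)/q with hβdef
      have hdj0 : (0:ℝ) < (d j : ℝ) := by exact_mod_cast hd1 j
      have hβ1 : β + 1 = (d j : ℝ)/q := by rw [hβdef]; field_simp; ring
      have hβ1pos : (0:ℝ) < β + 1 := by rw [hβ1]; positivity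
      have hβ0 : (-1:ℝ) < β := by linarith
      -- diagonal term bound
      have hdiag : ∀ ε₁ > (0:ℝ), ∀ᶠ t in 𝓝[>] (0:ℝ), |lam j t| ≤ ε₁ * t ^ β := by
        intro ε₁ hε₁
        by_cases hcase : q < d j
        · filter_upwards [hevI, self_mem_nhdsWithin] with t ht ht0
          have ht0' : (0:ℝ) < t := ht0
          rw [hhigh j hcase t ht, abs_zero]
          positivity
        · push_neg at hcase
          have hlim : Tendsto (fun t => |lam j t| * t ^ (-β)) (𝓝[>] (0:ℝ)) (𝓝 0) := by
            have h1 : Tendsto (fun t => |lam j t|) (𝓝[>] (0:ℝ)) (𝓝 |lam j 0|) :=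
              (hlam0 j).abs
            have hβn : (0:ℝ) ≤ -β := by
              have : (d j : ℝ) ≤ q := by exact_mod_cast hcase
              rw [hβdef]
              rw [neg_div' ]
              apply div_nonneg (by linarith) q0.le
            have h2 : Tendsto (fun t : ℝ => t ^ (-β)) (𝓝[>] (0:ℝ)) (𝓝 ((0:ℝ) ^ (-β))) :=
              ((Real.continuousAt_rpow_const 0 (-β) (Or.inr hβn))).tendsto.mono_left
                nhdsWithin_le_nhds
            have h3 := h1.mul h2
            have hz : |lam j 0| * (0:ℝ) ^ (-β) = 0 := by
              rcases eq_or_lt_of_le hcase with hq' | hq'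
              · rw [heq j hq', abs_zero, zero_mul]
              · have : (0:ℝ) < -β := by
                  have : (d j : ℝ) < q := by exact_mod_cast hq'
                  rw [hβdef, neg_div']
                  apply div_pos (by linarith) q0
                rw [Real.zero_rpow (ne_of_gt this), mul_zero]
            rwa [hz] at h3
          filter_upwards [hlim.eventually (gt_mem_nhds hε₁), self_mem_nhdsWithin] with t h ht
          have ht0 : (0:ℝ) < t := ht
          have htβ : (0:ℝ) < t ^ β := Real.rpow_pos_of_pos ht0 β
          have heqt : |lam j t| = |lam j t| * t ^ (-β) * t ^ β := by
            rw [mul_assoc, ← Real.rpow_add ht0]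
            simp
          rw [heqt]
          exact mul_le_mul_of_nonneg_right h.le htβ.le
      -- off-diagonal terms
      have hoff : ∀ k : Fin n, d k < d j → ∀ ε₁ > (0:ℝ),
          ∀ᶠ t in 𝓝[>] (0:ℝ), |lam k t * eval (γ t) (a k j)| ≤ ε₁ * t ^ β := by
        intro k hk ε₁ hε₁
        by_cases hkq : q < d k
        · filter_upwards [hevI, self_mem_nhdsWithin] with t ht ht0
          have ht0' : (0:ℝ) < t := ht0
          rw [hhigh k hkq t ht, zero_mul, abs_zero]
          positivity
        · push_neg at hkq
          set m := d j - d k with hm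
          have hm1 : 1 ≤ m := by omega
          have hBhyp : ∀ l, d l ≤ m →
              ∀ ε > (0:ℝ), ∀ᶠ t in 𝓝[>] (0:ℝ), |γ t l| ≤ ε * t ^ ((d l:ℝ)/q) := by
            intro l hl
            exact IH l (by have := hd1 k; omega)
          set L : ℝ := |lam k 0| + 1 with hL
          have hL0 : (0:ℝ) < L := by positivity
          have hlamB : ∀ᶠ t in 𝓝[>] (0:ℝ), |lam k t| ≤ L :=
            (hlam0 k).abs.eventually (eventually_le_nhds (lt_add_one _))
          have hpoly := polyB m hm1 hBhyp (a k j) (ha k j hk) (ε₁ / L) (by positivity)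
          filter_upwards [hlamB, hpoly, hev01] with t h1 h2 ht
          have ht0 : 0 < t := ht.1
          have hmcast : ((m:ℕ):ℝ) = (d j : ℝ) - (d k : ℝ) := by
            rw [hm]; push_cast [Nat.cast_sub hk.le]; ring
          calc |lam k t * eval (γ t) (a k j)| = |lam k t| * |eval (γ t) (a k j)| :=
                abs_mul _ _
            _ ≤ L * (ε₁/L * t ^ ((m:ℝ)/q)) := by
                apply mul_le_mul h1 h2 (abs_nonneg _) hL0.le
            _ = ε₁ * t ^ ((m:ℝ)/q) := by field_simp
            _ ≤ ε₁ * t ^ β := by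
                apply mul_le_mul_of_nonneg_left ?_ hε₁.le
                apply Real.rpow_le_rpow_of_exponent_ge ht0 ht.2.le
                rw [hβdef, hmcast]
                have : (d k : ℝ) ≤ q := by exact_mod_cast hkq
                gcongr
      -- derivative bound
      have hA : ∀ ε₀ > (0:ℝ), ∀ᶠ t in 𝓝[>] (0:ℝ), |deriv γ t j| ≤ ε₀ * t ^ β := by
        intro ε₀ hε₀
        set ε₂ : ℝ := ε₀ / (n + 1) with hε₂def
        have hε₂ : 0 < ε₂ := by positivity
        have hterms : ∀ᶠ t in 𝓝[>] (0:ℝ), ∀ k : Fin n,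
            |if d k < d j then lam k t * eval (γ t) (a k j) else 0| ≤ ε₂ * t ^ β := by
          rw [eventually_all]
          intro k
          by_cases hk : d k < d j
          · simpa [hk] using hoff k hk ε₂ hε₂
          · filter_upwards [self_mem_nhdsWithin] with t ht
            have ht0 : (0:ℝ) < t := ht
            simp only [hk, if_false, abs_zero]
            positivity
        filter_upwards [hterms, hdiag ε₂ hε₂, hevI, self_mem_nhdsWithin] with t h1 h2 htI ht0
        have ht0' : (0:ℝ) < t := ht0
        rw [hodeC t htI j]
        have habs : |lam j t + ∑ k, (if d k < d j then lam k t * eval (γ t) (a k j) else 0)|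
            ≤ |lam j t| + ∑ k, |if d k < d j then lam k t * eval (γ t) (a k j) else 0| := by
          calc |lam j t + ∑ k, (if d k < d j then lam k t * eval (γ t) (a k j) else 0)|
              ≤ |lam j t| + |∑ k, (if d k < d j then lam k t * eval (γ t) (a k j) else 0)| :=
                abs_add_le _ _
            _ ≤ _ := by
                gcongr
                exact Finset.abs_sum_le_sum_abs _ _
        have hsum : ∑ k : Fin n, |if d k < d j then lam k t * eval (γ t) (a k j) else 0|
            ≤ ∑ _k : Fin n, ε₂ * t ^ β := Finset.sum_le_sum fun k _ => h1 k
        have hconst : ∑ _k : Fin n, ε₂ * t ^ β = n * (ε₂ * t ^ β) := by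
          rw [Finset.sum_const, Finset.card_univ, Fintype.card_fin, nsmul_eq_mul]
        have hfin : |lam j t| + ∑ k, |if d k < d j then lam k t * eval (γ t) (a k j) else 0|
            ≤ ε₀ * t ^ β := by
          have : ε₂ * t ^ β + (n:ℝ) * (ε₂ * t ^ β) = ε₀ * t ^ β := by
            rw [hε₂def]
            field_simp
            ring
          calc |lam j t| + ∑ k, |if d k < d j then lam k t * eval (γ t) (a k j) else 0|
              ≤ ε₂ * t ^ β + (n:ℝ) * (ε₂ * t ^ β) := by
                apply add_le_add h2
                rw [← hconst]; exact hsum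
            _ = ε₀ * t ^ β := this
        exact le_trans habs hfin
      -- integrate
      have hεβ : (0:ℝ) < ε * (β + 1) := by positivity
      obtain ⟨δ, hδ0, hδ⟩ := mem_nhdsGT_iff_exists_Ioo_subset.mp (hA (ε * (β + 1)) hεβ)
      have hδ0' : (0:ℝ) < δ := hδ0
      filter_upwards [Ioo_mem_nhdsGT hδ0'] with t ht
      have ht0 : 0 < t := ht.1
      have hFTC : ∫ s in (0:ℝ)..t, deriv γ s j = γ t j - γ 0 j :=
        intervalIntegral.integral_eq_sub_of_hasDerivAt (fun s _ => hDj j s)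
          ((hcdj j).intervalIntegrable _ _)
      have hγ0j : γ 0 j = 0 := by rw [hγ0]; rfl
      have hval : γ t j = ∫ s in Set.Ioc (0:ℝ) t, deriv γ s j := by
        rw [← intervalIntegral.integral_of_le ht0.le, hFTC, hγ0j, sub_zero]
      have hint1 : IntegrableOn (fun s => |deriv γ s j|) (Set.Ioc (0:ℝ) t) volume :=
        (hcdj j).abs.integrableOn_Ioc
      have hint2 : IntegrableOn (fun s => ε * (β+1) * s ^ β) (Set.Ioc (0:ℝ) t) volume := by
        have h := (intervalIntegral.intervalIntegrable_rpow' (r := β) hβ0 (a := 0) (b := t))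
        exact (intervalIntegrable_iff_integrableOn_Ioc_of_le ht0.le).mp (h.const_mul _)
      have hb1 : |γ t j| ≤ ∫ s in Set.Ioc (0:ℝ) t, |deriv γ s j| := by
        rw [hval]
        simpa [Real.norm_eq_abs] using
          norm_integral_le_integral_norm (μ := volume.restrict (Set.Ioc (0:ℝ) t))
            (f := fun s => deriv γ s j)
      have hb2 : ∫ s in Set.Ioc (0:ℝ) t, |deriv γ s j|
          ≤ ∫ s in Set.Ioc (0:ℝ) t, ε * (β+1) * s ^ β := by
        apply setIntegral_mono_on hint1 hint2 measurableSet_Ioc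
        intro s hs
        exact hδ ⟨hs.1, lt_of_le_of_lt hs.2 ht.2⟩
      have hb3 : ∫ s in Set.Ioc (0:ℝ) t, ε * (β+1) * s ^ β = ε * t ^ (β + 1) := by
        rw [← intervalIntegral.integral_of_le ht0.le,
          intervalIntegral.integral_const_mul, integral_rpow (Or.inl hβ0),
          Real.zero_rpow (ne_of_gt hβ1pos)]
        field_simp
        ring
      have : |γ t j| ≤ ε * t ^ (β + 1) := by
        rw [← hb3]; exact le_trans hb1 hb2
      rwa [hβ1] at this
  have key : ∀ j : Fin n, ∀ ε > (0:ℝ),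
      ∀ᶠ t in 𝓝[>] (0:ℝ), |γ t j| ≤ ε * t ^ ((d j : ℝ)/q) :=
    fun j => main (d j + 1) j (Nat.lt_succ_self _)
  -- metric estimate
  have hρest : ∀ ε > (0:ℝ), ∀ᶠ t in 𝓝[>] (0:ℝ), ρ 0 (γ t) ≤ ε * t ^ ((1:ℝ)/q) := by
    intro ε hε
    have hy : Tendsto (fun t => fun j => γ t j / t ^ ((d j:ℝ)/q)) (𝓝[>] (0:ℝ))
        (𝓝 (0 : Fin n → ℝ)) := by
      rw [tendsto_pi_nhds]
      intro j
      rw [Metric.tendsto_nhds]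
      intro ε' hε'
      filter_upwards [key j (ε'/2) (half_pos hε'), self_mem_nhdsWithin] with t h ht
      have ht0 : (0:ℝ) < t := ht
      have hp : (0:ℝ) < t ^ ((d j:ℝ)/q) := Real.rpow_pos_of_pos ht0 _
      rw [Pi.zero_apply, Real.dist_eq, sub_zero, abs_div, abs_of_pos hp, div_lt_iff₀ hp]
      calc |γ t j| ≤ ε'/2 * t ^ ((d j:ℝ)/q) := h
        _ < ε' * t ^ ((d j:ℝ)/q) := by nlinarith
    have hcont0 : {z : Fin n → ℝ | ρ 0 z < ε} ∈ 𝓝 (0 : Fin n → ℝ) :=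
      (hρtop 0).mem_of_mem hε
    filter_upwards [hy.eventually hcont0, self_mem_nhdsWithin] with t h ht
    have ht0 : (0:ℝ) < t := ht
    have hr : (0:ℝ) < t ^ ((1:ℝ)/q) := Real.rpow_pos_of_pos ht0 _
    have hhom := hρhom (t ^ ((1:ℝ)/q)) hr (fun j => γ t j / t ^ ((d j:ℝ)/q))
    have hfun : (fun j => (t ^ ((1:ℝ)/q)) ^ (d j) * (γ t j / t ^ ((d j:ℝ)/q))) = γ t := by
      funext j
      have hpw : (t ^ ((1:ℝ)/q)) ^ (d j) = t ^ ((d j:ℝ)/q) := by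
        rw [← Real.rpow_natCast (t ^ ((1:ℝ)/q)) (d j), ← Real.rpow_mul ht0.le]
        congr 1; ring
      rw [hpw]
      have : t ^ ((d j:ℝ)/q) ≠ 0 := ne_of_gt (Real.rpow_pos_of_pos ht0 _)
      field_simp
    rw [hfun] at hhom
    rw [hhom]
    calc t ^ ((1:ℝ)/q) * ρ 0 (fun j => γ t j / t ^ ((d j:ℝ)/q))
        ≤ t ^ ((1:ℝ)/q) * ε := mul_le_mul_of_nonneg_left (le_of_lt h) hr.le
      _ = ε * t ^ ((1:ℝ)/q) := mul_comm _ _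
  -- final assembly
  set g : ℝ → ℝ := fun t => Real.sqrt (∑ j, (deriv γ t j)^2) with hgdef
  have hgc : Continuous g := by
    apply Continuous.comp Real.continuous_sqrt
    exact continuous_finset_sum _ fun j _ => (hcdj j).pow 2
  have hgnn : ∀ t, 0 ≤ g t := fun t => Real.sqrt_nonneg _
  set c : ℝ := g 0 with hcdef
  have hc0 : 0 < c := by
    rw [hcdef, hgdef]
    apply Real.sqrt_pos.mpr
    obtain ⟨j, hj⟩ : ∃ j, deriv γ 0 j ≠ 0 := by
      by_contra h
      push_neg at h
      exact hγ'0 (funext h)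
    exact Finset.sum_pos' (fun i _ => sq_nonneg _)
      ⟨j, Finset.mem_univ j, by positivity⟩
  rw [tendsto_atTop]
  intro M
  set K : ℝ := max M 1 with hK
  have hK0 : (0:ℝ) < K := lt_of_lt_of_le one_pos (le_max_right _ _)
  set ε : ℝ := (c / (2*K)) ^ ((1:ℝ)/q) with hεdef
  have hεpos : 0 < ε := Real.rpow_pos_of_pos (by positivity) _
  have hεq : ε ^ q = c / (2*K) := by
    rw [hεdef, ← Real.rpow_natCast ((c / (2*K)) ^ ((1:ℝ)/q)) q, ← Real.rpow_mul (by positivity),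
      one_div, inv_mul_cancel₀ qR, Real.rpow_one]
  have hgev : ∀ᶠ t in 𝓝[>] (0:ℝ), c/2 ≤ g t := by
    have htg : Tendsto g (𝓝[>] (0:ℝ)) (𝓝 c) :=
      (hgc.tendsto 0).mono_left nhdsWithin_le_nhds
    exact htg.eventually (eventually_ge_nhds (by linarith))
  obtain ⟨δ, hδmem, hδ⟩ := mem_nhdsGT_iff_exists_Ioo_subset.mp
    ((hρest ε hεpos).and (hgev.and hev01))
  have hδ0 : (0:ℝ) < δ := hδmem
  filter_upwards [Ioo_mem_nhdsGT
    (show (0:ℝ) < ε * δ ^ ((1:ℝ)/q) by positivity)] with r hr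
  obtain ⟨hr0, hrlt⟩ := hr
  set T : ℝ := (r/ε)^q with hT
  have hrε : 0 < r/ε := by positivity
  have hT0 : 0 < T := pow_pos hrε q
  have hTδ : T < δ := by
    have h1 : r / ε < δ ^ ((1:ℝ)/q) := (div_lt_iff₀ hεpos).mpr (by linarith [mul_comm ε (δ ^ ((1:ℝ)/q))])
    have h2 : (δ ^ ((1:ℝ)/q))^q = δ := by
      rw [← Real.rpow_natCast (δ ^ ((1:ℝ)/q)) q, ← Real.rpow_mul hδ0.le,
        one_div, inv_mul_cancel₀ qR, Real.rpow_one]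
    calc T = (r/ε)^q := rfl
      _ < (δ ^ ((1:ℝ)/q))^q := by
          apply pow_lt_pow_left₀ h1 hrε.le
          omega
      _ = δ := h2
  have hTq : T ^ ((1:ℝ)/q) = r/ε := by
    rw [hT, ← Real.rpow_natCast (r/ε) q, ← Real.rpow_mul hrε.le, mul_one_div,
      div_self qR, Real.rpow_one]
  have hsub : Set.Ioc 0 T ⊆ {t : ℝ | t ∈ Set.Ioo (-1:ℝ) 1 ∧ ρ 0 (γ t) ≤ r} := by
    intro t ht
    have ht0 : 0 < t := ht.1
    have htδ : t < δ := lt_of_le_of_lt ht.2 hTδ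
    obtain ⟨hρt, hgt, ht01⟩ := hδ ⟨ht0, htδ⟩
    refine ⟨⟨by linarith [ht01.1], ht01.2⟩, ?_⟩
    have h2 : t ^ ((1:ℝ)/q) ≤ T ^ ((1:ℝ)/q) :=
      Real.rpow_le_rpow ht0.le ht.2 (by positivity)
    calc ρ 0 (γ t) ≤ ε * t ^ ((1:ℝ)/q) := hρt
      _ ≤ ε * (r/ε) := by
          rw [← hTq]
          exact mul_le_mul_of_nonneg_left h2 hεpos.le
      _ = r := by field_simp
  have hSm : MeasurableSet {t : ℝ | t ∈ Set.Ioo (-1:ℝ) 1 ∧ ρ 0 (γ t) ≤ r} := by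
    have hSeq : {t : ℝ | t ∈ Set.Ioo (-1:ℝ) 1 ∧ ρ 0 (γ t) ≤ r}
        = Set.Ioo (-1:ℝ) 1 ∩ (fun t => ρ 0 (γ t)) ⁻¹' Set.Iic r := rfl
    rw [hSeq]
    exact measurableSet_Ioo.inter
      (((hρcont.comp hγcont).measurable) measurableSet_Iic)
  have hgint : IntegrableOn g {t : ℝ | t ∈ Set.Ioo (-1:ℝ) 1 ∧ ρ 0 (γ t) ≤ r} volume := by
    apply (hgc.integrableOn_Icc (a := (-1:ℝ)) (b := (1:ℝ))).mono_set
    intro t ht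
    exact ⟨ht.1.1.le, ht.1.2.le⟩
  have hlow : (c/2) * T ≤ ∫ t in {t : ℝ | t ∈ Set.Ioo (-1:ℝ) 1 ∧ ρ 0 (γ t) ≤ r}, g t := by
    have h1 : ∫ t in Set.Ioc (0:ℝ) T, g t
        ≤ ∫ t in {t : ℝ | t ∈ Set.Ioo (-1:ℝ) 1 ∧ ρ 0 (γ t) ≤ r}, g t := by
      apply setIntegral_mono_set hgint
      · exact Eventually.of_forall fun t => hgnn t
      · exact HasSubset.Subset.eventuallyLE hsub
    have h2 : (c/2) * T ≤ ∫ t in Set.Ioc (0:ℝ) T, g t := by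
      have h3 : ∫ _t in Set.Ioc (0:ℝ) T, (c/2) ≤ ∫ t in Set.Ioc (0:ℝ) T, g t := by
        apply setIntegral_mono_on (integrableOn_const measure_Ioc_lt_top.ne)
          (hgint.mono_set hsub) measurableSet_Ioc
        intro t ht
        exact (hδ ⟨ht.1, lt_of_le_of_lt ht.2 hTδ⟩).2.1
      rwa [setIntegral_const, Real.volume_real_Ioc_of_le hT0.le, smul_eq_mul, sub_zero,
        mul_comm] at h3
    linarith
  rw [le_div_iff₀ (pow_pos hr0 q)]
  have hMK : M * r ^ q ≤ K * r ^ q :=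
    mul_le_mul_of_nonneg_right (le_max_left _ _) (pow_pos hr0 q).le
  have hKrq : K * r ^ q = (c/2) * T := by
    rw [hT, div_pow]
    rw [hεq]
    field_simp
  calc M * r ^ q ≤ K * r ^ q := hMK
    _ = (c/2) * T := hKrq
    _ ≤ _ := hlow
end

section
/- Fix n ≥ 1 and a weight vector d : Fin n → ℕ with d j ≥ 1 for all j. Let ρ be a metric on ℝⁿ that induces the Euclidean topology and satisfies ρ(0, δ_r x) = r·ρ(0,x) for all r > 0 and x ∈ ℝⁿ, where (δ_r x)_j = r^{d j}·x_j. Then there exists λ ∈ (0,1] such that for every r > 0, Box(λr) ⊆ {x ∈ ℝⁿ : ρ(0,x) ≤ r} ⊆ Box(r/λ), where Box(s) = {x ∈ ℝⁿ : |x_j| ≤ s^{d j} for every j}. -/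
open Filter Topology

/-- The ball–box comparison for a homogeneous metric: there exists `λ ∈ (0,1]` such that
`Box(λr) ⊆ {ρ(0,·) ≤ r} ⊆ Box(r/λ)` for every `r > 0`, where
`Box(s) = {x : |x_j| ≤ s^{d j} ∀ j}`. -/
theorem ball_box_comparison
    (n : ℕ) (hn : 1 ≤ n) (d : Fin n → ℕ) (hd1 : ∀ j, 1 ≤ d j)
    -- `ρ` is a metric on `ℝⁿ` inducing the Euclidean topology
    (ρ : (Fin n → ℝ) → (Fin n → ℝ) → ℝ)
    (hρsymm : ∀ x y, ρ x y = ρ y x)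
    (hρtri : ∀ x y z, ρ x z ≤ ρ x y + ρ y z)
    (hρeq : ∀ x y, ρ x y = 0 ↔ x = y)
    (hρtop : ∀ x : Fin n → ℝ, (𝓝 x).HasBasis (fun ε : ℝ => 0 < ε) fun ε => {y | ρ x y < ε})
    -- homogeneity of `ρ` with respect to the anisotropic dilations
    (hρhom : ∀ r : ℝ, 0 < r → ∀ x : Fin n → ℝ,
      ρ 0 (fun j => r ^ (d j) * x j) = r * ρ 0 x) :
    ∃ lam : ℝ, 0 < lam ∧ lam ≤ 1 ∧ ∀ r : ℝ, 0 < r →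
      {x : Fin n → ℝ | ∀ j, |x j| ≤ (lam * r) ^ (d j)} ⊆ {x : Fin n → ℝ | ρ 0 x ≤ r} ∧
      {x : Fin n → ℝ | ρ 0 x ≤ r} ⊆ {x : Fin n → ℝ | ∀ j, |x j| ≤ (r / lam) ^ (d j)} := by
  have j0 : Fin n := ⟨0, hn⟩
  -- nonnegativity of ρ
  have hρ0 : ∀ x y, 0 ≤ ρ x y := by
    intro x y
    have h := hρtri x y x
    rw [(hρeq x x).2 rfl, hρsymm y x] at h
    linarith
  -- continuity of ρ 0 ·
  have hcont : Continuous (fun x => ρ 0 x) := by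
    rw [continuous_iff_continuousAt]
    intro x
    rw [ContinuousAt, Metric.tendsto_nhds]
    intro ε hε
    filter_upwards [(hρtop x).mem_of_mem hε] with y hy
    have hy' : ρ x y < ε := hy
    have h1 := hρtri 0 x y
    have h2 := hρtri 0 y x
    rw [hρsymm y x] at h2
    rw [Real.dist_eq, abs_lt]
    constructor <;> linarith
  -- the unit box is compact
  have hBcomp : IsCompact (Set.pi Set.univ (fun _ : Fin n => Set.Icc (-1:ℝ) 1)) :=
    isCompact_univ_pi (fun _ => isCompact_Icc)
  -- maximum of ρ 0 · on the unit box
  obtain ⟨x₀, hx₀B, hx₀max'⟩ := hBcomp.exists_isMaxOn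
    ⟨0, by intro i _; simp⟩ hcont.continuousOn
  have hx₀max := isMaxOn_iff.1 hx₀max'
  set C : ℝ := max (ρ 0 x₀) 1 with hC
  have hC1 : (1:ℝ) ≤ C := le_max_right _ _
  have hC0 : (0:ℝ) < C := lt_of_lt_of_le one_pos hC1
  have hCbound : ∀ x : Fin n → ℝ, (∀ j, |x j| ≤ 1) → ρ 0 x ≤ C := by
    intro x hx
    refine le_trans (hx₀max x ?_) (le_max_left _ _)
    intro i _
    exact abs_le.1 (hx i)
  -- the "sphere" K and the minimum m of ρ 0 · on it
  have hKclosed : IsClosed (⋃ j : Fin n, {x : Fin n → ℝ | |x j| = 1}) := by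
    apply isClosed_iUnion_of_finite
    intro j
    exact isClosed_eq ((continuous_apply j).abs) continuous_const
  have hKcomp : IsCompact ((Set.pi Set.univ (fun _ : Fin n => Set.Icc (-1:ℝ) 1)) ∩
      (⋃ j : Fin n, {x : Fin n → ℝ | |x j| = 1})) := hBcomp.inter_right hKclosed
  have hKne : ((Set.pi Set.univ (fun _ : Fin n => Set.Icc (-1:ℝ) 1)) ∩
      (⋃ j : Fin n, {x : Fin n → ℝ | |x j| = 1})).Nonempty := by
    refine ⟨fun _ => 1, ⟨fun i _ => by norm_num, ?_⟩⟩
    exact Set.mem_iUnion.2 ⟨j0, by simp⟩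
  obtain ⟨x₁, hx₁K, hx₁min'⟩ := hKcomp.exists_isMinOn hKne hcont.continuousOn
  have hx₁min := isMinOn_iff.1 hx₁min'
  set m : ℝ := ρ 0 x₁ with hm
  have hm0 : 0 < m := by
    rcases (hρ0 0 x₁).lt_or_eq with h | h
    · exact h
    · exfalso
      have hx1 : x₁ = 0 := ((hρeq 0 x₁).1 h.symm).symm
      obtain ⟨_, hx₁U⟩ := hx₁K
      obtain ⟨j, hj⟩ := Set.mem_iUnion.1 hx₁U
      rw [hx1] at hj
      simp at hj
  -- Lemma B : lower bound for points outside the open unit box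
  have lemB : ∀ x : Fin n → ℝ, (∃ j, 1 ≤ |x j|) → m ≤ ρ 0 x := by
    rintro x ⟨j, hj⟩
    have hne : (Finset.univ : Finset (Fin n)).Nonempty := ⟨j, Finset.mem_univ j⟩
    set g : ℝ → ℝ := fun u => Finset.univ.sup' hne (fun i => u ^ (d i) * |x i|) with hg
    have hgcont : Continuous g := by
      apply Continuous.finset_sup'_apply hne
      intro i _
      exact (continuous_pow (d i)).mul continuous_const
    have hg0 : g 0 = 0 := by
      have : ∀ i ∈ Finset.univ, (0:ℝ) ^ (d i) * |x i| = 0 := by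
        intro i _
        rw [zero_pow (by have := hd1 i; omega), zero_mul]
      rw [hg]
      simp only
      rw [Finset.sup'_congr hne rfl this]
      simp
    have hg1 : 1 ≤ g 1 := by
      refine le_trans ?_ (Finset.le_sup' (fun i => (1:ℝ) ^ (d i) * |x i|) (Finset.mem_univ j))
      simpa using hj
    have hIVT := intermediate_value_Icc (zero_le_one) hgcont.continuousOn
    have h1mem : (1:ℝ) ∈ Set.Icc (g 0) (g 1) := ⟨by rw [hg0]; norm_num, hg1⟩
    obtain ⟨u, huI, hgu⟩ := hIVT h1mem
    have hu0 : 0 < u := by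
      rcases huI.1.lt_or_eq with h | h
      · exact h
      · exfalso; rw [← h, hg0] at hgu; norm_num at hgu
    have hu1 : u ≤ 1 := huI.2
    set z : Fin n → ℝ := fun i => u ^ (d i) * x i with hz
    have hzabs : ∀ i, |z i| = u ^ (d i) * |x i| := by
      intro i
      rw [hz]; simp only
      rw [abs_mul, abs_pow, abs_of_pos hu0]
    have hzK : z ∈ (Set.pi Set.univ (fun _ : Fin n => Set.Icc (-1:ℝ) 1)) ∩
        (⋃ j : Fin n, {x : Fin n → ℝ | |x j| = 1}) := by
      constructor
      · intro i _
        show z i ∈ Set.Icc (-1:ℝ) 1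
        rw [Set.mem_Icc, ← abs_le, hzabs i, ← hgu]
        exact Finset.le_sup' (fun i => u ^ (d i) * |x i|) (Finset.mem_univ i)
      · obtain ⟨i, _, hi⟩ := Finset.exists_mem_eq_sup' hne (fun i => u ^ (d i) * |x i|)
        refine Set.mem_iUnion.2 ⟨i, ?_⟩
        simp only [Set.mem_setOf_eq]
        rw [hzabs i, ← hi]
        exact hgu
    have hzρ : ρ 0 z = u * ρ 0 x := hρhom u hu0 x
    have h1 : m ≤ ρ 0 z := hx₁min z hzK
    have h2 : u * ρ 0 x ≤ ρ 0 x := mul_le_of_le_one_left (hρ0 0 x) hu1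
    linarith [hzρ ▸ h1]
  -- choose lambda
  refine ⟨min (1/C) m, lt_min (by positivity) hm0, le_trans (min_le_left _ _) (by
    rw [div_le_one hC0]; exact hC1), ?_⟩
  set lam : ℝ := min (1/C) m with hlam
  have hlam0 : 0 < lam := lt_min (by positivity) hm0
  have hlamC : lam * C ≤ 1 := by
    have h1 : lam ≤ 1/C := min_le_left _ _
    calc lam * C ≤ (1/C) * C := by nlinarith
    _ = 1 := by field_simp
  have hlamm : lam ≤ m := min_le_right _ _
  intro r hr
  constructor
  · -- Box(lam r) ⊆ ball
    intro x hx
    simp only [Set.mem_setOf_eq] at hx ⊢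
    set s : ℝ := lam * r with hs
    have hs0 : 0 < s := mul_pos hlam0 hr
    set y : Fin n → ℝ := fun i => x i / s ^ (d i) with hy
    have hxy : x = fun i => s ^ (d i) * y i := by
      funext i
      rw [hy]
      field_simp
    have hyB : ∀ i, |y i| ≤ 1 := by
      intro i
      rw [hy]
      simp only
      rw [abs_div, abs_pow, abs_of_pos hs0, div_le_one (by positivity)]
      exact hx i
    have hρx : ρ 0 x = s * ρ 0 y := by rw [hxy]; exact hρhom s hs0 y
    have hyC : ρ 0 y ≤ C := hCbound y hyB
    calc ρ 0 x = s * ρ 0 y := hρx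
      _ ≤ s * C := by nlinarith [hρ0 0 y]
      _ = lam * C * r := by ring
      _ ≤ 1 * r := by nlinarith
      _ = r := one_mul r
  · -- ball ⊆ Box(r/lam)
    intro x hx
    simp only [Set.mem_setOf_eq] at hx ⊢
    intro j
    by_contra hcon
    push_neg at hcon
    have hrl0 : 0 < r / lam := div_pos hr hlam0
    -- pick s slightly larger than r/lam with s ^ d j < |x j|
    have hev : ∀ᶠ s in 𝓝[>] (r/lam), s ^ (d j) < |x j| := by
      apply eventually_nhdsWithin_of_eventually_nhds
      exact (continuous_pow (d j)).continuousAt.eventually_lt continuousAt_const hcon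
    obtain ⟨s, hs1, hs2⟩ := (hev.and (eventually_mem_nhdsWithin)).exists
    rw [Set.mem_Ioi] at hs2
    have hs0 : 0 < s := lt_trans hrl0 hs2
    set y : Fin n → ℝ := fun i => x i / s ^ (d i) with hy
    have hxy : x = fun i => s ^ (d i) * y i := by
      funext i
      rw [hy]
      field_simp
    have hyj : 1 ≤ |y j| := by
      rw [hy]
      simp only
      rw [abs_div, abs_pow, abs_of_pos hs0, le_div_iff₀ (by positivity), one_mul]
      exact le_of_lt hs1
    have hρx : ρ 0 x = s * ρ 0 y := by rw [hxy]; exact hρhom s hs0 y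
    have hym : m ≤ ρ 0 y := lemB y ⟨j, hyj⟩
    have : r < ρ 0 x := by
      calc r = (r / lam) * lam := by field_simp
        _ < s * m := by nlinarith
        _ ≤ s * ρ 0 y := by nlinarith
        _ = ρ 0 x := hρx.symm
    linarith
end

section
/- Fix n ≥ 1, a weight vector d : Fin n → ℕ with d j ≥ 1 for all j, an integer q ≥ 1, and an index i₀ with d i₀ = q. Let ρ be a metric on ℝⁿ inducing the Euclidean topology with ρ(0, δ_r x) = r·ρ(0,x) for all r > 0 and x, where (δ_r x)_j = r^{d j}·x_j. Let γ : [−1,1] → ℝⁿ be a C¹ injective curve with γ(0) = 0, such that γ_i(t) = o(|t|^{(d i)/q}) as t → 0 for every i ≠ i₀, and such that c := (γ')_{i₀}(0) ≠ 0. Then, as r → 0⁺, r^{−q} · ∫_{{t ∈ [−1,1] : ρ(0, γ(t)) < r}} ‖γ'(t)‖ dt converges to (‖γ'(0)‖ / |c|) · L¹({s ∈ ℝ : ρ(0, s·e_{i₀}) < 1}), where ‖·‖ is the Euclidean norm and L¹ is one-dimensional Lebesgue measure. -/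
set_option maxHeartbeats 2000000


open Filter Asymptotics Topology MeasureTheory

/-- Coordinate form of Theorem 1.3 (blow-up of the measure at a point of maximum degree):
for a `C¹` injective curve `γ : [-1,1] → ℝⁿ` through the origin whose components satisfy the
blow-up estimates `γ_i(t) = o(|t|^{d i / q})` for `i ≠ i₀` and with `c = γ'_{i₀}(0) ≠ 0`,
the ratio `r^{-q} ∫_{{ρ(0,γ(t)) < r}} ‖γ'(t)‖ dt` converges, as `r → 0⁺`, to
`(‖γ'(0)‖/|c|) · L¹({s : ρ(0, s e_{i₀}) < 1})`. -/
theorem blowup_measure_limit_at_max_degree_point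
    (n : ℕ) (hn : 1 ≤ n) (d : Fin n → ℕ) (hd1 : ∀ j, 1 ≤ d j)
    (q : ℕ) (hq : 1 ≤ q) (i₀ : Fin n) (hi₀ : d i₀ = q)
    -- `ρ` is a metric on `ℝⁿ` inducing the Euclidean topology
    (ρ : (Fin n → ℝ) → (Fin n → ℝ) → ℝ)
    (hρsymm : ∀ x y, ρ x y = ρ y x)
    (hρtri : ∀ x y z, ρ x z ≤ ρ x y + ρ y z)
    (hρeq : ∀ x y, ρ x y = 0 ↔ x = y)
    (hρtop : ∀ x : Fin n → ℝ, (𝓝 x).HasBasis (fun ε : ℝ => 0 < ε) fun ε => {y | ρ x y < ε})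
    -- homogeneity of `ρ` with respect to the anisotropic dilations
    (hρhom : ∀ r : ℝ, 0 < r → ∀ x : Fin n → ℝ,
      ρ 0 (fun j => r ^ (d j) * x j) = r * ρ 0 x)
    -- `γ : [-1,1] → ℝⁿ` is a `C¹` injective curve with derivative `γ'`
    (γ γ' : ℝ → Fin n → ℝ)
    (hderiv : ∀ t ∈ Set.Icc (-1 : ℝ) 1, HasDerivWithinAt γ (γ' t) (Set.Icc (-1 : ℝ) 1) t)
    (hγ'c : ContinuousOn γ' (Set.Icc (-1 : ℝ) 1))
    (hinj : Set.InjOn γ (Set.Icc (-1 : ℝ) 1))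
    (hγ0 : γ 0 = 0)
    (hlito : ∀ i, i ≠ i₀ →
      (fun t : ℝ => γ t i) =o[𝓝 0] fun t : ℝ => |t| ^ ((d i : ℝ) / (q : ℝ)))
    (hc : γ' 0 i₀ ≠ 0) :
    Tendsto
      (fun r : ℝ =>
        (∫ t in {t : ℝ | t ∈ Set.Icc (-1 : ℝ) 1 ∧ ρ 0 (γ t) < r},
          Real.sqrt (∑ j, (γ' t j) ^ 2)) / r ^ q)
      (𝓝[>] 0)
      (𝓝 ((Real.sqrt (∑ j, (γ' 0 j) ^ 2) / |γ' 0 i₀|) *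
        (volume {s : ℝ | ρ 0 (s • (Pi.single i₀ 1 : Fin n → ℝ)) < 1}).toReal)) := by
  classical
  have hq0 : 0 < q := hq
  have hqne : q ≠ 0 := by omega
  have hqR : (0 : ℝ) < q := by exact_mod_cast hq0
  set e : Fin n → ℝ := Pi.single i₀ 1 with he
  set c : ℝ := γ' 0 i₀ with hcdef
  -- basic facts about ρ
  have hρ00 : ρ 0 0 = 0 := (hρeq 0 0).mpr rfl
  have hρnonneg : ∀ x y, 0 ≤ ρ x y := by
    intro x y
    have h1 := hρtri x y x
    have h2 := hρsymm y x
    have h3 := (hρeq x x).mpr rfl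
    linarith
  have hρpos : ∀ x : Fin n → ℝ, x ≠ 0 → 0 < ρ 0 x := by
    intro x hx
    rcases (hρnonneg 0 x).lt_or_eq with h | h
    · exact h
    · exact absurd ((hρeq 0 x).mp h.symm).symm hx
  have hρ0cont : Continuous fun y : Fin n → ℝ => ρ 0 y := by
    rw [continuous_iff_continuousAt]
    intro x
    rw [ContinuousAt, Metric.tendsto_nhds]
    intro ε hε
    filter_upwards [(hρtop x).mem_of_mem hε] with y (hy : ρ x y < ε)
    have h1 := hρtri 0 x y
    have h2 := hρtri 0 y x
    have h3 := hρsymm x y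
    rw [Real.dist_eq, abs_sub_lt_iff]
    constructor <;> linarith
  -- scaling along the e-axis
  have hepos : ∀ a : ℝ, a ≠ 0 → 0 < ρ 0 (a • e) := by
    intro a ha
    apply hρpos
    intro h
    apply ha
    have := congrFun h i₀
    simpa [he] using this
  have hscale : ∀ (a s : ℝ), 0 < s → ρ 0 ((s * a) • e) = s ^ ((q : ℝ)⁻¹) * ρ 0 (a • e) := by
    intro a s hs
    have hσpos : 0 < s ^ ((q : ℝ)⁻¹) := Real.rpow_pos_of_pos hs _
    have h := hρhom _ hσpos (a • e)
    have key : (fun j => (s ^ ((q : ℝ)⁻¹)) ^ (d j) * (a • e) j) = (s * a) • e := by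
      funext j
      by_cases hj : j = i₀
      · subst hj
        have hσq : (s ^ ((q : ℝ)⁻¹)) ^ q = s := Real.rpow_inv_natCast_pow hs.le hqne
        simp [he, hi₀, hσq, mul_assoc]
      · simp [he, Pi.single_eq_of_ne hj]
    rw [← key]
    exact h
  -- the root-taking inequality
  have hrpowlt : ∀ x b : ℝ, 0 ≤ x → 0 < b → (x ^ ((q : ℝ)⁻¹) < b ↔ x < b ^ q) := by
    intro x b hx hb
    constructor
    · intro h
      have := pow_lt_pow_left₀ h (Real.rpow_nonneg hx _) hqne
      rwa [Real.rpow_inv_natCast_pow hx hqne] at this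
    · intro h
      have := Real.rpow_lt_rpow (by positivity) h (by positivity : (0:ℝ) < (q : ℝ)⁻¹)
      rwa [Real.pow_rpow_inv_natCast hb.le hqne] at this
  -- curve basics
  have hγcont : ContinuousOn γ (Set.Icc (-1 : ℝ) 1) :=
    fun t ht => (hderiv t ht).continuousWithinAt
  set g : ℝ → ℝ := fun t => ρ 0 (γ t) with hgdef
  have hgcont : ContinuousOn g (Set.Icc (-1 : ℝ) 1) := hρ0cont.comp_continuousOn hγcont
  have hg0 : g 0 = 0 := by simp [hgdef, hγ0, hρ00]
  have h0mem : (0 : ℝ) ∈ Set.Icc (-1 : ℝ) 1 := by norm_num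
  have hgpos : ∀ t ∈ Set.Icc (-1 : ℝ) 1, t ≠ 0 → 0 < g t := by
    intro t ht ht0
    apply hρpos
    intro h
    exact ht0 (hinj ht h0mem (by rw [h, hγ0]))
  set ν : ℝ → ℝ := fun t => Real.sqrt (∑ j, γ' t j ^ 2) with hνdef
  have hνnonneg : ∀ t, 0 ≤ ν t := fun t => Real.sqrt_nonneg _
  have hνcont : ContinuousOn ν (Set.Icc (-1 : ℝ) 1) :=
    Real.continuous_sqrt.comp_continuousOn
      (continuousOn_finset_sum _ fun j _ => ((continuous_apply j).comp_continuousOn hγ'c).pow 2)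
  set ν0 : ℝ := ν 0 with hν0def
  have hν0pos : 0 < ν0 := by
    apply Real.sqrt_pos.mpr
    have h1 : (γ' 0 i₀) ^ 2 ≤ ∑ j, γ' 0 j ^ 2 :=
      Finset.single_le_sum (f := fun j => γ' 0 j ^ 2) (fun j _ => sq_nonneg _)
        (Finset.mem_univ i₀)
    have : 0 < (γ' 0 i₀) ^ 2 := by positivity
    linarith
  have hνInt : IntegrableOn ν (Set.Icc (-1 : ℝ) 1) := hνcont.integrableOn_Icc
  -- measurability of the sublevel sets
  have hAmeas : ∀ r : ℝ, MeasurableSet {t : ℝ | t ∈ Set.Icc (-1 : ℝ) 1 ∧ g t < r} := by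
    intro r
    obtain ⟨u, hu, huset⟩ := continuousOn_iff'.mp hgcont (Set.Iio r) isOpen_Iio
    have : {t : ℝ | t ∈ Set.Icc (-1 : ℝ) 1 ∧ g t < r} = u ∩ Set.Icc (-1 : ℝ) 1 := by
      rw [← huset]; ext t; simp [and_comm]
    rw [this]
    exact hu.measurableSet.inter measurableSet_Icc
  -- the blow-up limits
  set aP : ℝ := ρ 0 (c • e) with haP
  set aM : ℝ := ρ 0 ((-c) • e) with haM
  have haPpos : 0 < aP := hepos c hc
  have haMpos : 0 < aM := hepos (-c) (neg_ne_zero.mpr hc)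
  -- slope limit
  have hslope : Tendsto (fun t : ℝ => t⁻¹ * γ t i₀) (𝓝[Set.Icc (-1 : ℝ) 1 \ {0}] 0) (𝓝 c) := by
    have h0 := hasDerivWithinAt_iff_tendsto_slope.mp (hderiv 0 h0mem)
    have h1 := ((continuous_apply i₀).tendsto (γ' 0)).comp h0
    apply h1.congr
    intro t
    simp [slope_def_module, hγ0]
  have hleP : 𝓝[>] (0 : ℝ) ≤ 𝓝[Set.Icc (-1 : ℝ) 1 \ {0}] 0 := by
    rw [← nhdsWithin_Ioc_eq_nhdsGT (zero_lt_one (α := ℝ))]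
    apply nhdsWithin_mono
    intro t ht
    exact ⟨⟨by linarith [ht.1], ht.2⟩, ne_of_gt ht.1⟩
  have hleM : 𝓝[<] (0 : ℝ) ≤ 𝓝[Set.Icc (-1 : ℝ) 1 \ {0}] 0 := by
    rw [← nhdsWithin_Ico_eq_nhdsLT (show (-1 : ℝ) < 0 by norm_num)]
    apply nhdsWithin_mono
    intro t ht
    exact ⟨⟨ht.1, by linarith [ht.2]⟩, ne_of_lt ht.2⟩
  -- positive-side rescaled curve
  set xP : ℝ → Fin n → ℝ := fun t j => γ t j * (t ^ ((q : ℝ)⁻¹ * (d j : ℝ)))⁻¹ with hxPdef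
  set xM : ℝ → Fin n → ℝ := fun t j => γ t j * ((-t) ^ ((q : ℝ)⁻¹ * (d j : ℝ)))⁻¹ with hxMdef
  have hexpo : ((q : ℝ)⁻¹ * (d i₀ : ℝ)) = 1 := by
    rw [hi₀]; field_simp
  have hgidP : ∀ t : ℝ, 0 < t → g t = t ^ ((q : ℝ)⁻¹) * ρ 0 (xP t) := by
    intro t ht
    have hlam : 0 < t ^ ((q : ℝ)⁻¹) := Real.rpow_pos_of_pos ht _
    have key : (fun j => (t ^ ((q : ℝ)⁻¹)) ^ (d j) * xP t j) = γ t := by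
      funext j
      have hpow : (t ^ ((q : ℝ)⁻¹)) ^ (d j) = t ^ ((q : ℝ)⁻¹ * (d j : ℝ)) := by
        rw [← Real.rpow_natCast (t ^ ((q : ℝ)⁻¹)) (d j), ← Real.rpow_mul ht.le]
      have hne : t ^ ((q : ℝ)⁻¹ * (d j : ℝ)) ≠ 0 := (Real.rpow_pos_of_pos ht _).ne'
      simp only [hxPdef, hpow]
      field_simp
    calc g t = ρ 0 (γ t) := rfl
      _ = ρ 0 (fun j => (t ^ ((q : ℝ)⁻¹)) ^ (d j) * xP t j) := by rw [key]
      _ = t ^ ((q : ℝ)⁻¹) * ρ 0 (xP t) := hρhom _ hlam _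
  have hgidM : ∀ t : ℝ, t < 0 → g t = (-t) ^ ((q : ℝ)⁻¹) * ρ 0 (xM t) := by
    intro t ht
    have hmt : 0 < -t := by linarith
    have hlam : 0 < (-t) ^ ((q : ℝ)⁻¹) := Real.rpow_pos_of_pos hmt _
    have key : (fun j => ((-t) ^ ((q : ℝ)⁻¹)) ^ (d j) * xM t j) = γ t := by
      funext j
      have hpow : ((-t) ^ ((q : ℝ)⁻¹)) ^ (d j) = (-t) ^ ((q : ℝ)⁻¹ * (d j : ℝ)) := by
        rw [← Real.rpow_natCast ((-t) ^ ((q : ℝ)⁻¹)) (d j), ← Real.rpow_mul hmt.le]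
      have hne : (-t) ^ ((q : ℝ)⁻¹ * (d j : ℝ)) ≠ 0 := (Real.rpow_pos_of_pos hmt _).ne'
      simp only [hxMdef, hpow]
      field_simp
    calc g t = ρ 0 (γ t) := rfl
      _ = ρ 0 (fun j => ((-t) ^ ((q : ℝ)⁻¹)) ^ (d j) * xM t j) := by rw [key]
      _ = (-t) ^ ((q : ℝ)⁻¹) * ρ 0 (xM t) := hρhom _ hlam _
  have hcompP : Tendsto xP (𝓝[>] (0 : ℝ)) (𝓝 (c • e)) := by
    rw [tendsto_pi_nhds]
    intro j
    by_cases hj : j = i₀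
    · subst hj
      have hval : (c • e) j = c := by simp [he, Pi.single_eq_same]
      rw [hval]
      apply Tendsto.congr' _ (hslope.mono_left hleP)
      filter_upwards [self_mem_nhdsWithin] with t (ht : 0 < t)
      simp only [hxPdef, hexpo, Real.rpow_one]
      ring
    · have hval : (c • e) j = 0 := by simp [he, Pi.single_eq_of_ne hj]
      rw [hval]
      have hlit := (hlito j hj).tendsto_div_nhds_zero.mono_left
        (nhdsWithin_le_nhds : 𝓝[>] (0:ℝ) ≤ 𝓝 0)
      apply Tendsto.congr' _ hlit
      have hexp : ((d j : ℝ) / (q : ℝ)) = (q : ℝ)⁻¹ * (d j : ℝ) := div_eq_inv_mul _ _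
      filter_upwards [self_mem_nhdsWithin] with t (ht : 0 < t)
      rw [hexp, abs_of_pos ht, div_eq_mul_inv]
  have hcompM : Tendsto xM (𝓝[<] (0 : ℝ)) (𝓝 ((-c) • e)) := by
    rw [tendsto_pi_nhds]
    intro j
    by_cases hj : j = i₀
    · subst hj
      have hval : ((-c) • e) j = -c := by simp [he, Pi.single_eq_same]
      rw [hval]
      have hneg : Tendsto (fun t : ℝ => -(t⁻¹ * γ t j)) (𝓝[<] (0:ℝ)) (𝓝 (-c)) :=
        (hslope.mono_left hleM).neg
      apply Tendsto.congr' _ hneg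
      filter_upwards [self_mem_nhdsWithin] with t (ht : t < 0)
      simp only [hxMdef, hexpo, Real.rpow_one]
      rw [inv_neg]
      ring
    · have hval : ((-c) • e) j = 0 := by simp [he, Pi.single_eq_of_ne hj]
      rw [hval]
      have hlit := (hlito j hj).tendsto_div_nhds_zero.mono_left
        (nhdsWithin_le_nhds : 𝓝[<] (0:ℝ) ≤ 𝓝 0)
      apply Tendsto.congr' _ hlit
      have hexp : ((d j : ℝ) / (q : ℝ)) = (q : ℝ)⁻¹ * (d j : ℝ) := div_eq_inv_mul _ _
      filter_upwards [self_mem_nhdsWithin] with t (ht : t < 0)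
      rw [hexp, abs_of_neg ht, div_eq_mul_inv]
  have hblowP : Tendsto (fun t => ρ 0 (xP t)) (𝓝[>] (0 : ℝ)) (𝓝 aP) :=
    (hρ0cont.tendsto (c • e)).comp hcompP
  have hblowM : Tendsto (fun t => ρ 0 (xM t)) (𝓝[<] (0 : ℝ)) (𝓝 aM) :=
    (hρ0cont.tendsto ((-c) • e)).comp hcompM
  -- characterization of the unit dilation ball on the e-axis
  have hval : ∀ w s : ℝ, w ≠ 0 → 0 < s / w →
      ρ 0 (s • e) = (s / w) ^ ((q : ℝ)⁻¹) * ρ 0 (w • e) := by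
    intro w s hw hsw
    have := hscale w (s / w) hsw
    rwa [div_mul_cancel₀ _ hw] at this
  have hchar : ∀ w s : ℝ, w ≠ 0 → 0 < s / w →
      (ρ 0 (s • e) < 1 ↔ s / w < ((ρ 0 (w • e))⁻¹) ^ q) := by
    intro w s hw hsw
    have haw : 0 < ρ 0 (w • e) := hepos w hw
    rw [hval w s hw hsw, ← lt_div_iff₀ haw, one_div,
      hrpowlt _ _ hsw.le (inv_pos.mpr haw)]
  -- the volume of the unit dilation ball on the e-axis
  have hθ : (volume {s : ℝ | ρ 0 (s • e) < 1}).toReal = |c| * ((aP⁻¹) ^ q + (aM⁻¹) ^ q) := by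
    have habs : 0 < |c| := abs_pos.mpr hc
    set P : ℝ := ρ 0 (|c| • e) with hPdef
    set M : ℝ := ρ 0 ((-|c|) • e) with hMdef
    have hP : 0 < P := hepos _ habs.ne'
    have hM : 0 < M := hepos _ (neg_ne_zero.mpr habs.ne')
    have hPq : 0 < |c| * (P⁻¹) ^ q := mul_pos habs (pow_pos (inv_pos.mpr hP) q)
    have hMq : 0 < |c| * (M⁻¹) ^ q := mul_pos habs (pow_pos (inv_pos.mpr hM) q)
    have hset : {s : ℝ | ρ 0 (s • e) < 1} =
        Set.Ioo (-(|c| * (M⁻¹) ^ q)) (|c| * (P⁻¹) ^ q) := by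
      ext s
      simp only [Set.mem_setOf_eq, Set.mem_Ioo]
      rcases lt_trichotomy s 0 with hs | hs | hs
      · have hw : (-|c| : ℝ) ≠ 0 := neg_ne_zero.mpr habs.ne'
        have hsw : 0 < s / (-|c|) := div_pos_of_neg_of_neg hs (by linarith)
        rw [hchar (-|c|) s hw hsw,
          show s / (-|c|) = (-s) / |c| by rw [div_neg, neg_div],
          div_lt_iff₀ habs]
        constructor
        · intro h
          exact ⟨by linarith, by linarith⟩
        · rintro ⟨h1, h2⟩
          linarith
      · subst hs
        simp only [zero_smul, hρ00]
        constructor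
        · intro _
          exact ⟨by linarith, by linarith⟩
        · intro _
          norm_num
      · have hsw : 0 < s / |c| := div_pos hs habs
        rw [hchar |c| s habs.ne' hsw, div_lt_iff₀ habs]
        constructor
        · intro h
          exact ⟨by linarith, by linarith⟩
        · rintro ⟨h1, h2⟩
          linarith
    have hsum : (P⁻¹) ^ q + (M⁻¹) ^ q = (aP⁻¹) ^ q + (aM⁻¹) ^ q := by
      rcases hc.lt_or_gt with h | h
      · rw [hPdef, hMdef, abs_of_neg h, neg_neg, haP, haM]
        ring
      · rw [hPdef, hMdef, abs_of_pos h, haP, haM]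
    rw [hset, Real.volume_Ioo, sub_neg_eq_add,
      ENNReal.toReal_ofReal (by linarith : (0:ℝ) ≤ |c| * (P⁻¹) ^ q + |c| * (M⁻¹) ^ q),
      ← hsum]
    ring
  -- rewrite the limit constant
  have hLconst : Real.sqrt (∑ j, γ' 0 j ^ 2) / |c| *
      (volume {s : ℝ | ρ 0 (s • e) < 1}).toReal
      = ν0 * ((aP⁻¹) ^ q + (aM⁻¹) ^ q) := by
    have hν0eq : Real.sqrt (∑ j, γ' 0 j ^ 2) = ν0 := rfl
    rw [hθ, hν0eq]
    field_simp
  rw [hLconst]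
  set L : ℝ := ν0 * ((aP⁻¹) ^ q + (aM⁻¹) ^ q) with hLdef
  rw [Metric.tendsto_nhds]
  intro ε hε
  -- choose the approximation parameter η
  obtain ⟨η, hη0, hηP, hηM, hΦ, hΨ⟩ :
      ∃ η : ℝ, 0 < η ∧ η < aP ∧ η < aM ∧
        (ν0 + η) * (((aP - η)⁻¹) ^ q + ((aM - η)⁻¹) ^ q) < L + ε ∧
        L - ε < (ν0 - η) * (((aP + η)⁻¹) ^ q + ((aM + η)⁻¹) ^ q) := by
    have hcontU : Tendsto
        (fun x : ℝ => (ν0 + x) * (((aP - x)⁻¹) ^ q + ((aM - x)⁻¹) ^ q)) (𝓝 0) (𝓝 L) := by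
      have h1 : ContinuousAt
          (fun x : ℝ => (ν0 + x) * (((aP - x)⁻¹) ^ q + ((aM - x)⁻¹) ^ q)) 0 := by
        apply ContinuousAt.mul (by fun_prop)
        apply ContinuousAt.add
        · exact ContinuousAt.pow (ContinuousAt.inv₀ (by fun_prop)
            (by simpa using haPpos.ne')) q
        · exact ContinuousAt.pow (ContinuousAt.inv₀ (by fun_prop)
            (by simpa using haMpos.ne')) q
      simpa [hLdef] using h1.tendsto
    have hcontL : Tendsto
        (fun x : ℝ => (ν0 - x) * (((aP + x)⁻¹) ^ q + ((aM + x)⁻¹) ^ q)) (𝓝 0) (𝓝 L) := by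
      have h1 : ContinuousAt
          (fun x : ℝ => (ν0 - x) * (((aP + x)⁻¹) ^ q + ((aM + x)⁻¹) ^ q)) 0 := by
        apply ContinuousAt.mul (by fun_prop)
        apply ContinuousAt.add
        · exact ContinuousAt.pow (ContinuousAt.inv₀ (by fun_prop)
            (by simpa using haPpos.ne')) q
        · exact ContinuousAt.pow (ContinuousAt.inv₀ (by fun_prop)
            (by simpa using haMpos.ne')) q
      simpa [hLdef] using h1.tendsto
    have e1 := hcontU.eventually_lt_const (show L < L + ε by linarith)
    have e2 := hcontL.eventually_const_lt (show L - ε < L by linarith)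
    have e3 := (tendsto_id : Tendsto id (𝓝 (0:ℝ)) (𝓝 0)).eventually_lt_const haPpos
    have e4 := (tendsto_id : Tendsto id (𝓝 (0:ℝ)) (𝓝 0)).eventually_lt_const haMpos
    have hall := (((e1.and e2).and (e3.and e4)).filter_mono
      (nhdsWithin_le_nhds : 𝓝[>] (0:ℝ) ≤ 𝓝 0)).and self_mem_nhdsWithin
    obtain ⟨η, ⟨⟨h1, h2⟩, h3, h4⟩, h5⟩ := hall.exists
    exact ⟨η, h5, h3, h4, h1, h2⟩
  have haPη : 0 < aP - η := by linarith
  have haMη : 0 < aM - η := by linarith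
  set βP : ℝ := (aP + η)⁻¹ with hβPdef
  set βM : ℝ := (aM + η)⁻¹ with hβMdef
  set BP : ℝ := (aP - η)⁻¹ with hBPdef
  set BM : ℝ := (aM - η)⁻¹ with hBMdef
  have hβPpos : 0 < βP := inv_pos.mpr (by linarith)
  have hβMpos : 0 < βM := inv_pos.mpr (by linarith)
  have hBPpos : 0 < BP := inv_pos.mpr haPη
  have hBMpos : 0 < BM := inv_pos.mpr haMη
  have hβBP : βP ≤ BP := by
    rw [hβPdef, hBPdef]
    exact inv_anti₀ haPη (by linarith)
  have hβBM : βM ≤ BM := by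
    rw [hβMdef, hBMdef]
    exact inv_anti₀ haMη (by linarith)
  -- uniform closeness of ν near 0
  obtain ⟨δ₁, hδ₁pos, hδ₁⟩ := Metric.continuousWithinAt_iff.mp (hνcont 0 h0mem) η hη0
  -- quantitative blow-up bounds on both sides
  have hevP : ∀ᶠ t in 𝓝[>] (0:ℝ),
      (aP - η) * t ^ ((q:ℝ)⁻¹) ≤ g t ∧ g t ≤ (aP + η) * t ^ ((q:ℝ)⁻¹) := by
    filter_upwards [Metric.tendsto_nhds.mp hblowP η hη0, self_mem_nhdsWithin]
      with t hbt (ht : 0 < t)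
    rw [Real.dist_eq] at hbt
    obtain ⟨hb1, hb2⟩ := abs_lt.mp hbt
    have hid := hgidP t ht
    have hpow : (0:ℝ) ≤ t ^ ((q:ℝ)⁻¹) := (Real.rpow_pos_of_pos ht _).le
    constructor
    · rw [hid]
      have h5 := mul_le_mul_of_nonneg_left
        (show aP - η ≤ ρ 0 (xP t) by linarith) hpow
      linarith
    · rw [hid]
      have h5 := mul_le_mul_of_nonneg_left
        (show ρ 0 (xP t) ≤ aP + η by linarith) hpow
      linarith
  have hevM : ∀ᶠ t in 𝓝[<] (0:ℝ),
      (aM - η) * (-t) ^ ((q:ℝ)⁻¹) ≤ g t ∧ g t ≤ (aM + η) * (-t) ^ ((q:ℝ)⁻¹) := by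
    filter_upwards [Metric.tendsto_nhds.mp hblowM η hη0, self_mem_nhdsWithin]
      with t hbt (ht : t < 0)
    rw [Real.dist_eq] at hbt
    obtain ⟨hb1, hb2⟩ := abs_lt.mp hbt
    have hid := hgidM t ht
    have hpow : (0:ℝ) ≤ (-t) ^ ((q:ℝ)⁻¹) := (Real.rpow_pos_of_pos (by linarith) _).le
    constructor
    · rw [hid]
      have h5 := mul_le_mul_of_nonneg_left
        (show aM - η ≤ ρ 0 (xM t) by linarith) hpow
      linarith
    · rw [hid]
      have h5 := mul_le_mul_of_nonneg_left
        (show ρ 0 (xM t) ≤ aM + η by linarith) hpow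
      linarith
  obtain ⟨δ₂', hδ₂mem, hδ₂sub⟩ := mem_nhdsGT_iff_exists_Ioc_subset.mp hevP
  have hδ₂pos : (0:ℝ) < δ₂' := hδ₂mem
  obtain ⟨l₃, hl₃mem, hδ₃sub⟩ := mem_nhdsLT_iff_exists_Ico_subset.mp hevM
  have hl₃neg : l₃ < 0 := hl₃mem
  set δ : ℝ := min (min δ₁ 1) (min δ₂' (-l₃)) with hδdef
  have hδpos : 0 < δ := by
    apply lt_min (lt_min hδ₁pos one_pos) (lt_min hδ₂pos (by linarith))
  have hδle1 : δ ≤ 1 := le_trans (min_le_left _ _) (min_le_right _ _)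
  have hδleδ₁ : δ ≤ δ₁ := le_trans (min_le_left _ _) (min_le_left _ _)
  have hδleδ₂ : δ ≤ δ₂' := le_trans (min_le_right _ _) (min_le_left _ _)
  have hδlel₃ : l₃ ≤ -δ := by
    have : δ ≤ -l₃ := le_trans (min_le_right _ _) (min_le_right _ _)
    linarith
  -- a positive lower bound for g away from 0
  obtain ⟨m, hmpos, hm⟩ : ∃ m : ℝ, 0 < m ∧ ∀ t ∈ Set.Icc (-1:ℝ) 1, g t < m → |t| < δ := by
    set K : Set ℝ := Set.Icc (-1:ℝ) (-δ) ∪ Set.Icc δ 1 with hK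
    have hKsub : K ⊆ Set.Icc (-1:ℝ) 1 := by
      rintro t (ht | ht)
      · exact ⟨ht.1, by linarith [ht.2]⟩
      · exact ⟨by linarith [ht.1], ht.2⟩
    have hKne : K.Nonempty := ⟨1, Or.inr ⟨hδle1, le_refl 1⟩⟩
    have hKcpt : IsCompact K := isCompact_Icc.union isCompact_Icc
    obtain ⟨t₀, ht₀K, hmin⟩ := hKcpt.exists_isMinOn hKne (hgcont.mono hKsub)
    have ht₀ne : t₀ ≠ 0 := by
      rcases ht₀K with h | h
      · exact ne_of_lt (by linarith [h.2])
      · exact ne_of_gt (by linarith [h.1])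
    refine ⟨g t₀, hgpos t₀ (hKsub ht₀K) ht₀ne, ?_⟩
    intro t ht hlt
    by_contra hcon
    push_neg at hcon
    have htK : t ∈ K := by
      rcases abs_cases t with ⟨h1, h2⟩ | ⟨h1, h2⟩
      · right; exact ⟨by linarith, ht.2⟩
      · left; exact ⟨ht.1, by linarith⟩
    exact absurd (isMinOn_iff.mp hmin t htK) (not_le.mpr hlt)
  -- the eventual bounds in r
  have hevr1 : ∀ᶠ r in 𝓝[>] (0:ℝ), (r * BP) ^ q < δ := by
    have h1 : Tendsto (fun r : ℝ => (r * BP) ^ q) (𝓝[>] 0) (𝓝 0) := by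
      have h2 : Tendsto (fun r : ℝ => (r * BP) ^ q) (𝓝 0) (𝓝 ((0 * BP) ^ q)) :=
        ((continuous_id.mul continuous_const).pow q).tendsto 0
      have h3 : ((0:ℝ) * BP) ^ q = 0 := by
        rw [zero_mul, zero_pow hqne]
      rw [h3] at h2
      exact h2.mono_left nhdsWithin_le_nhds
    exact h1.eventually_lt_const hδpos
  have hevr2 : ∀ᶠ r in 𝓝[>] (0:ℝ), (r * BM) ^ q < δ := by
    have h1 : Tendsto (fun r : ℝ => (r * BM) ^ q) (𝓝[>] 0) (𝓝 0) := by
      have h2 : Tendsto (fun r : ℝ => (r * BM) ^ q) (𝓝 0) (𝓝 ((0 * BM) ^ q)) :=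
        ((continuous_id.mul continuous_const).pow q).tendsto 0
      have h3 : ((0:ℝ) * BM) ^ q = 0 := by
        rw [zero_mul, zero_pow hqne]
      rw [h3] at h2
      exact h2.mono_left nhdsWithin_le_nhds
    exact h1.eventually_lt_const hδpos
  have hevr3 : ∀ᶠ r in 𝓝[>] (0:ℝ), r < m :=
    ((tendsto_id.mono_right nhdsWithin_le_nhds)).eventually_lt_const hmpos
  filter_upwards [hevr1, hevr2, hevr3, self_mem_nhdsWithin] with r h1 h2 h3 (hr : 0 < r)
  set A : Set ℝ := {t : ℝ | t ∈ Set.Icc (-1:ℝ) 1 ∧ ρ 0 (γ t) < r} with hA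
  show dist ((∫ t in A, ν t) / r ^ q) L < ε
  have hAsub : A ⊆ Set.Icc (-1:ℝ) 1 := fun t ht => ht.1
  have hAm : MeasurableSet A := hAmeas r
  have hIntA : IntegrableOn ν A := hνInt.mono_set hAsub
  have hAδ : ∀ t ∈ A, |t| < δ := fun t ht => hm t ht.1 (lt_trans ht.2 h3)
  have hrBP : 0 < r * BP := mul_pos hr hBPpos
  have hrBM : 0 < r * BM := mul_pos hr hBMpos
  have hrβP : 0 < r * βP := mul_pos hr hβPpos
  have hrβM : 0 < r * βM := mul_pos hr hβMpos
  -- the two inclusions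
  have hsubT : A ⊆ Set.Ioo (-((r * BM) ^ q)) ((r * BP) ^ q) := by
    intro t ht
    obtain ⟨habs1, habs2⟩ := abs_lt.mp (hAδ t ht)
    have hgr : g t < r := ht.2
    rcases lt_trichotomy t 0 with hneg | h0 | hpos
    · have hmem : t ∈ Set.Ico l₃ 0 := ⟨by linarith, hneg⟩
      have hb := (hδ₃sub hmem).1
      have hstep : (-t) ^ ((q:ℝ)⁻¹) < r * BM := by
        rw [hBMdef, ← div_eq_mul_inv, lt_div_iff₀ haMη]
        linarith
      have hkey := (hrpowlt (-t) (r * BM) (by linarith) hrBM).mp hstep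
      refine ⟨by linarith, ?_⟩
      have := pow_pos hrBP q
      linarith
    · subst h0
      constructor
      · have := pow_pos hrBM q
        linarith
      · exact pow_pos hrBP q
    · have hmem : t ∈ Set.Ioc 0 δ₂' := ⟨hpos, by linarith⟩
      have hb := (hδ₂sub hmem).1
      have hstep : t ^ ((q:ℝ)⁻¹) < r * BP := by
        rw [hBPdef, ← div_eq_mul_inv, lt_div_iff₀ haPη]
        linarith
      have hkey := (hrpowlt t (r * BP) (by linarith) hrBP).mp hstep
      refine ⟨?_, hkey⟩
      have := pow_pos hrBM q
      linarith
  have hsubS : Set.Ioo (-((r * βM) ^ q)) ((r * βP) ^ q) ⊆ A := by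
    intro t ht
    obtain ⟨htl, htu⟩ := ht
    have hub : (r * βP) ^ q ≤ (r * BP) ^ q :=
      pow_le_pow_left₀ hrβP.le (mul_le_mul_of_nonneg_left hβBP hr.le) q
    have hlb : (r * βM) ^ q ≤ (r * BM) ^ q :=
      pow_le_pow_left₀ hrβM.le (mul_le_mul_of_nonneg_left hβBM hr.le) q
    have htδ1 : -δ < t := by linarith
    have htδ2 : t < δ := by linarith
    have htIcc : t ∈ Set.Icc (-1:ℝ) 1 := ⟨by linarith, by linarith⟩
    refine ⟨htIcc, ?_⟩
    show g t < r
    rcases lt_trichotomy t 0 with hneg | h0 | hpos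
    · have hmem : t ∈ Set.Ico l₃ 0 := ⟨by linarith, hneg⟩
      have hb := (hδ₃sub hmem).2
      have hstep : (-t) ^ ((q:ℝ)⁻¹) < r * βM :=
        (hrpowlt (-t) (r * βM) (by linarith) hrβM).mpr (by linarith)
      have hfin : (aM + η) * (r * βM) = r := by
        rw [hβMdef]
        field_simp
      have h6 := mul_lt_mul_of_pos_left hstep (show (0:ℝ) < aM + η by linarith)
      linarith
    · rw [h0, hg0]
      exact hr
    · have hmem : t ∈ Set.Ioc 0 δ₂' := ⟨hpos, by linarith⟩
      have hb := (hδ₂sub hmem).2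
      have hstep : t ^ ((q:ℝ)⁻¹) < r * βP :=
        (hrpowlt t (r * βP) hpos.le hrβP).mpr (by linarith)
      have hfin : (aP + η) * (r * βP) = r := by
        rw [hβPdef]
        field_simp
      have h6 := mul_lt_mul_of_pos_left hstep (show (0:ℝ) < aP + η by linarith)
      linarith
  -- volume computations
  have hvolT : (volume (Set.Ioo (-((r * BM) ^ q)) ((r * BP) ^ q))).toReal
      = (r * BP) ^ q + (r * BM) ^ q := by
    rw [Real.volume_Ioo, sub_neg_eq_add, ENNReal.toReal_ofReal
      (by positivity : (0:ℝ) ≤ (r * BP) ^ q + (r * BM) ^ q)]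
  have hvolS : (volume (Set.Ioo (-((r * βM) ^ q)) ((r * βP) ^ q))).toReal
      = (r * βP) ^ q + (r * βM) ^ q := by
    rw [Real.volume_Ioo, sub_neg_eq_add, ENNReal.toReal_ofReal
      (by positivity : (0:ℝ) ≤ (r * βP) ^ q + (r * βM) ^ q)]
  have hvolA : (volume A).toReal ≤ (r * BP) ^ q + (r * BM) ^ q := by
    rw [← hvolT]
    exact ENNReal.toReal_mono measure_Ioo_lt_top.ne (measure_mono hsubT)
  -- the upper integral bound
  have hup : ∫ t in A, ν t ≤ (ν0 + η) * ((r * BP) ^ q + (r * BM) ^ q) := by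
    have hconst : IntegrableOn (fun _ : ℝ => ν0 + η) A :=
      (integrableOn_const_iff).mpr (Or.inr ((measure_mono hAsub).trans_lt measure_Icc_lt_top))
    have hle1 : ∫ t in A, ν t ≤ ∫ _ in A, (ν0 + η) := by
      apply setIntegral_mono_on hIntA hconst hAm
      intro t ht
      have hd := hδ₁ ht.1 (by rw [Real.dist_eq, sub_zero]; exact (hAδ t ht).trans_le hδleδ₁)
      rw [Real.dist_eq, ← hν0def] at hd
      linarith [(abs_lt.mp hd).2]
    calc ∫ t in A, ν t ≤ ∫ _ in A, (ν0 + η) := hle1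
      _ = (volume A).toReal * (ν0 + η) := by rw [setIntegral_const, smul_eq_mul]; rfl
      _ ≤ ((r * BP) ^ q + (r * BM) ^ q) * (ν0 + η) :=
          mul_le_mul_of_nonneg_right hvolA (by linarith)
      _ = (ν0 + η) * ((r * BP) ^ q + (r * BM) ^ q) := mul_comm _ _
  -- the lower integral bound
  have hlo : (ν0 - η) * ((r * βP) ^ q + (r * βM) ^ q) ≤ ∫ t in A, ν t := by
    set S : Set ℝ := Set.Ioo (-((r * βM) ^ q)) ((r * βP) ^ q) with hS
    have hSsubIcc : S ⊆ Set.Icc (-1:ℝ) 1 := fun t ht => (hsubS ht).1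
    have hIntS : IntegrableOn ν S := hνInt.mono_set hSsubIcc
    have hconst : IntegrableOn (fun _ : ℝ => ν0 - η) S :=
      (integrableOn_const_iff).mpr (Or.inr measure_Ioo_lt_top)
    have hle1 : ∫ _ in S, (ν0 - η) ≤ ∫ t in S, ν t := by
      apply setIntegral_mono_on hconst hIntS measurableSet_Ioo
      intro t ht
      have hd := hδ₁ (hSsubIcc ht)
        (by rw [Real.dist_eq, sub_zero]; exact (hAδ t (hsubS ht)).trans_le hδleδ₁)
      rw [Real.dist_eq, ← hν0def] at hd
      linarith [(abs_lt.mp hd).1]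
    have hle2 : ∫ t in S, ν t ≤ ∫ t in A, ν t :=
      setIntegral_mono_set hIntA
        (Filter.Eventually.of_forall fun t => hνnonneg t) hsubS.eventuallyLE
    calc (ν0 - η) * ((r * βP) ^ q + (r * βM) ^ q)
        = (volume S).toReal * (ν0 - η) := by rw [hvolS]; ring
      _ = ∫ _ in S, (ν0 - η) := by rw [setIntegral_const, smul_eq_mul]; rfl
      _ ≤ ∫ t in S, ν t := hle1
      _ ≤ ∫ t in A, ν t := hle2
  -- conclusion
  rw [Real.dist_eq, abs_sub_lt_iff]
  have hrq : (0:ℝ) < r ^ q := pow_pos hr q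
  have hFub : (∫ t in A, ν t) / r ^ q ≤ (ν0 + η) * (BP ^ q + BM ^ q) := by
    rw [div_le_iff₀ hrq]
    calc ∫ t in A, ν t ≤ (ν0 + η) * ((r * BP) ^ q + (r * BM) ^ q) := hup
      _ = (ν0 + η) * (BP ^ q + BM ^ q) * r ^ q := by rw [mul_pow, mul_pow]; ring
  have hFlb : (ν0 - η) * (βP ^ q + βM ^ q) ≤ (∫ t in A, ν t) / r ^ q := by
    rw [le_div_iff₀ hrq]
    calc (ν0 - η) * (βP ^ q + βM ^ q) * r ^ q
        = (ν0 - η) * ((r * βP) ^ q + (r * βM) ^ q) := by rw [mul_pow, mul_pow]; ring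
      _ ≤ ∫ t in A, ν t := hlo
  constructor
  · linarith
  · linarith
end

section
/- Fix n ≥ 1, a weight vector d : Fin n → ℕ with d j ≥ 1 for all j, an integer q ≥ 1, and an index i₀ with d i₀ = q. Let ρ be a metric on ℝⁿ inducing the Euclidean topology with ρ(0, δ_r x) = r·ρ(0,x) for all r > 0 and x, where (δ_r x)_j = r^{d j}·x_j. Let γ : [−1,1] → ℝⁿ be a C¹ injective curve with γ(0) = 0, such that γ_i(t) = o(|t|^{(d i)/q}) as t → 0 for every i ≠ i₀, and with c := (γ')_{i₀}(0) ≠ 0. For r > 0 define A_r = {t ∈ ℝ : |t| ≤ r^{−q} and ρ(0, γ(t·r^q)) < r}, and let S₀ = {s ∈ ℝ : ρ(0, s·e_{i₀}) < 1}. Then the Lebesgue measure of the symmetric difference A_r Δ (c^{−1}·S₀) tends to 0 as r → 0⁺; moreover there exists M₀ > 0 such that A_r ⊆ [−M₀, M₀] for all sufficiently small r > 0. -/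
open Filter Asymptotics Topology MeasureTheory Pointwise

set_option maxHeartbeats 2000000 in
/-- Convergence of the rescaled preimages of homogeneous balls along a curve at a point of
maximum degree (from the proof of Theorem 1.3): with
`A_r = {t : |t| ≤ r^{-q}, ρ(0,γ(t r^q)) < r}` and `S₀ = {s : ρ(0, s e_{i₀}) < 1}`,
the Lebesgue measure of `A_r Δ (c⁻¹ • S₀)` tends to `0` as `r → 0⁺`, and the sets `A_r`
are uniformly bounded for all small `r > 0`. -/
theorem rescaled_ball_preimage_convergence
    (n : ℕ) (hn : 1 ≤ n) (d : Fin n → ℕ) (hd1 : ∀ j, 1 ≤ d j)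
    (q : ℕ) (hq : 1 ≤ q) (i₀ : Fin n) (hi₀ : d i₀ = q)
    -- `ρ` is a metric on `ℝⁿ` inducing the Euclidean topology
    (ρ : (Fin n → ℝ) → (Fin n → ℝ) → ℝ)
    (hρsymm : ∀ x y, ρ x y = ρ y x)
    (hρtri : ∀ x y z, ρ x z ≤ ρ x y + ρ y z)
    (hρeq : ∀ x y, ρ x y = 0 ↔ x = y)
    (hρtop : ∀ x : Fin n → ℝ, (𝓝 x).HasBasis (fun ε : ℝ => 0 < ε) fun ε => {y | ρ x y < ε})
    -- homogeneity of `ρ` with respect to the anisotropic dilations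
    (hρhom : ∀ r : ℝ, 0 < r → ∀ x : Fin n → ℝ,
      ρ 0 (fun j => r ^ (d j) * x j) = r * ρ 0 x)
    -- `γ : [-1,1] → ℝⁿ` is a `C¹` injective curve with derivative `γ'`
    (γ γ' : ℝ → Fin n → ℝ)
    (hderiv : ∀ t ∈ Set.Icc (-1 : ℝ) 1, HasDerivWithinAt γ (γ' t) (Set.Icc (-1 : ℝ) 1) t)
    (hγ'c : ContinuousOn γ' (Set.Icc (-1 : ℝ) 1))
    (hinj : Set.InjOn γ (Set.Icc (-1 : ℝ) 1))
    (hγ0 : γ 0 = 0)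
    (hlito : ∀ i, i ≠ i₀ →
      (fun t : ℝ => γ t i) =o[𝓝 0] fun t : ℝ => |t| ^ ((d i : ℝ) / (q : ℝ)))
    (c : ℝ) (hcdef : c = γ' 0 i₀) (hc : c ≠ 0)
    (A : ℝ → Set ℝ)
    (hA : ∀ r : ℝ, A r = {t : ℝ | |t| ≤ (r ^ q)⁻¹ ∧ ρ 0 (γ (t * r ^ q)) < r})
    (S₀ : Set ℝ)
    (hS₀ : S₀ = {s : ℝ | ρ 0 (s • (Pi.single i₀ 1 : Fin n → ℝ)) < 1}) :
    Tendsto (fun r : ℝ => volume (symmDiff (A r) (c⁻¹ • S₀))) (𝓝[>] 0) (𝓝 0) ∧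
      ∃ M₀ : ℝ, 0 < M₀ ∧ ∀ᶠ r in 𝓝[>] (0 : ℝ), A r ⊆ Set.Icc (-M₀) M₀ := by
  have hq0 : q ≠ 0 := Nat.one_le_iff_ne_zero.mp hq
  have hcabs : (0:ℝ) < |c| := abs_pos.2 hc
  -- ### Basic facts about ρ
  have hnonneg : ∀ x y, 0 ≤ ρ x y := by
    intro x y
    nlinarith [hρtri x y x, (hρeq x x).2 rfl, hρsymm x y]
  have hlip : ∀ x y, |ρ 0 x - ρ 0 y| ≤ ρ x y := by
    intro x y
    rw [abs_sub_le_iff]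
    refine ⟨?_, ?_⟩
    · have h1 := hρtri 0 y x; have h2 := hρsymm y x; linarith
    · have := hρtri 0 x y; linarith
  have hfcont : Continuous (ρ 0) := by
    rw [continuous_iff_continuousAt]
    intro x
    rw [ContinuousAt, Metric.tendsto_nhds]
    intro ε hε
    filter_upwards [(hρtop x).mem_of_mem hε] with y hy
    rw [Real.dist_eq]
    calc |ρ 0 y - ρ 0 x| ≤ ρ y x := hlip y x
      _ = ρ x y := hρsymm y x
      _ < ε := hy
  have hfpos : ∀ x : Fin n → ℝ, x ≠ 0 → 0 < ρ 0 x := fun x hx =>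
    lt_of_le_of_ne (hnonneg 0 x) (fun h => hx ((hρeq 0 x).1 h.symm).symm)
  -- ### minimum of ρ 0 on the Euclidean unit sphere
  obtain ⟨x₀, hx₀S, hx₀min⟩ : ∃ x₀ ∈ Metric.sphere (0 : Fin n → ℝ) 1,
      ∀ x ∈ Metric.sphere (0 : Fin n → ℝ) 1, ρ 0 x₀ ≤ ρ 0 x := by
    have hcs : IsCompact (Metric.sphere (0 : Fin n → ℝ) 1) := isCompact_sphere 0 1
    have hne : (Metric.sphere (0 : Fin n → ℝ) 1).Nonempty := by
      refine ⟨Pi.single i₀ 1, ?_⟩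
      simp [Pi.norm_single]
    obtain ⟨x₀, hx₀, hmin⟩ := hcs.exists_isMinOn hne hfcont.continuousOn
    exact ⟨x₀, hx₀, hmin⟩
  set m : ℝ := ρ 0 x₀ with hm
  have hmpos : 0 < m := by
    apply hfpos
    intro h
    have : ‖x₀‖ = 1 := mem_sphere_zero_iff_norm.1 hx₀S
    rw [h] at this; simp at this
  -- ### bound on sub-level sets of ρ 0
  set D : ℕ := Finset.univ.sup d with hD
  have hdD : ∀ j, d j ≤ D := fun j => Finset.le_sup (Finset.mem_univ j)
  have hD1 : 1 ≤ D := le_trans (le_trans hq (le_of_eq hi₀.symm)) (hdD i₀)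
  set R : ℝ := max 1 ((1/m) ^ D) with hR
  have hR1 : 1 ≤ R := le_max_left _ _
  have hball : ∀ x : Fin n → ℝ, ρ 0 x ≤ 1 → ‖x‖ ≤ R := by
    intro x hx
    rcases le_or_gt ‖x‖ 1 with h | h
    · exact h.trans hR1
    · have hcont : ContinuousOn (fun lam : ℝ => ‖fun j => lam ^ (d j) * x j‖) (Set.Icc 0 1) :=
        (continuous_norm.comp (by continuity : Continuous
          (fun lam : ℝ => (fun j => lam ^ (d j) * x j : Fin n → ℝ)))).continuousOn
      have h0 : ‖(fun j => (0:ℝ) ^ (d j) * x j : Fin n → ℝ)‖ = 0 := by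
        have : (fun j => (0:ℝ) ^ (d j) * x j) = (0 : Fin n → ℝ) := by
          funext j
          simp [zero_pow (Nat.one_le_iff_ne_zero.mp (hd1 j))]
        rw [this, norm_zero]
      have h1' : ‖(fun j => (1:ℝ) ^ (d j) * x j : Fin n → ℝ)‖ = ‖x‖ := by
        simp
      obtain ⟨lam, hlamI, hlam⟩ : ∃ lam ∈ Set.Icc (0:ℝ) 1,
          ‖(fun j => lam ^ (d j) * x j : Fin n → ℝ)‖ = 1 := by
        have := intermediate_value_Icc (by norm_num : (0:ℝ) ≤ 1) hcont
        have hmem : (1:ℝ) ∈ Set.Icc (‖(fun j => (0:ℝ) ^ (d j) * x j : Fin n → ℝ)‖)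
            (‖(fun j => (1:ℝ) ^ (d j) * x j : Fin n → ℝ)‖) := by
          rw [h0, h1']; exact ⟨zero_le_one, h.le⟩
        obtain ⟨lam, hlamI, hlam⟩ := this hmem
        exact ⟨lam, hlamI, hlam⟩
      have hlampos : 0 < lam := by
        rcases lt_or_eq_of_le hlamI.1 with h' | h'
        · exact h'
        · exfalso; rw [← h'] at hlam; rw [h0] at hlam; norm_num at hlam
      have hy : ρ 0 (fun j => lam ^ (d j) * x j) = lam * ρ 0 x := hρhom lam hlampos x
      have hmlam : m ≤ lam := by
        have hyS : (fun j => lam ^ (d j) * x j : Fin n → ℝ) ∈ Metric.sphere (0 : Fin n → ℝ) 1 := by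
          rwa [mem_sphere_zero_iff_norm]
        have := hx₀min _ hyS
        rw [hy] at this
        nlinarith [hnonneg 0 x]
      have hcoord : ∀ j, |x j| ≤ (1/m) ^ D := by
        intro j
        have h1 : |lam ^ (d j) * x j| ≤ 1 := by
          have := norm_le_pi_norm (fun j => lam ^ (d j) * x j : Fin n → ℝ) j
          rw [hlam] at this
          exact this
        have h2 : lam ^ D ≤ lam ^ (d j) := pow_le_pow_of_le_one hlampos.le hlamI.2 (hdD j)
        have h3 : m ^ D ≤ lam ^ D := pow_le_pow_left₀ hmpos.le hmlam D
        have h4 : 0 < lam ^ (d j) := pow_pos hlampos _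
        rw [abs_mul, abs_of_pos h4] at h1
        rw [div_pow, one_pow]
        have h5 : |x j| ≤ 1 / lam ^ (d j) := by
          rw [le_div_iff₀ h4]; nlinarith [abs_nonneg (x j)]
        have h6 : 1 / lam ^ (d j) ≤ 1 / lam ^ D :=
          one_div_le_one_div_of_le (by positivity) h2
        have h7 : 1 / lam ^ D ≤ 1 / m ^ D :=
          one_div_le_one_div_of_le (by positivity) h3
        linarith
      have : ‖x‖ ≤ (1/m) ^ D := by
        rw [pi_norm_le_iff_of_nonneg (by positivity)]
        intro j; exact hcoord j
      exact this.trans (le_max_right _ _)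
  -- ### the direction e and homogeneity along it
  set e : Fin n → ℝ := Pi.single i₀ 1 with he
  have henorm : ∀ s : ℝ, ‖s • e‖ = |s| := by
    intro s
    rw [norm_smul, Real.norm_eq_abs]
    have h1 : ‖e‖ = 1 := by rw [he, Pi.norm_single, norm_one]
    rw [h1, mul_one]
  have hφhom : ∀ lam : ℝ, 0 < lam → ∀ s : ℝ, ρ 0 ((lam ^ q * s) • e) = lam * ρ 0 (s • e) := by
    intro lam hlam s
    have hfun : ((lam ^ q * s) • e) = fun j => lam ^ (d j) * ((s • e) j) := by
      funext j
      by_cases hj : j = i₀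
      · subst hj
        simp only [Pi.smul_apply, smul_eq_mul, he, Pi.single_eq_same, hi₀]
        ring
      · simp [he, Pi.single_eq_of_ne hj]
    rw [hfun, hρhom lam hlam]
  -- ### γ facts
  have hγcont : ContinuousOn γ (Set.Icc (-1:ℝ) 1) :=
    fun t ht => (hderiv t ht).continuousWithinAt
  have hIccnhds : Set.Icc (-1:ℝ) 1 ∈ 𝓝 (0:ℝ) := Icc_mem_nhds (by norm_num) (by norm_num)
  have hderiv0 : HasDerivAt γ (γ' 0) 0 :=
    (hderiv 0 (by norm_num)).hasDerivAt hIccnhds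
  have hci₀ : HasDerivAt (fun t => γ t i₀) c 0 := by
    rw [hcdef]; exact hasDerivAt_pi.1 hderiv0 i₀
  have h00 : γ 0 i₀ = 0 := by rw [hγ0]; rfl
  have hlitoc : (fun s : ℝ => γ s i₀ - c * s) =o[𝓝 0] (fun s : ℝ => s) := by
    have h := hasDerivAt_iff_isLittleO.1 hci₀
    simp only [h00, sub_zero, smul_eq_mul] at h
    refine h.congr' (Eventually.of_forall fun s => by ring) (Eventually.of_forall fun s => rfl)
  -- ### smallness of remainders near 0
  have hsmall : ∀ κ : ℝ, 0 < κ → ∃ η > 0, ∀ s : ℝ, |s| < η →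
      (|γ s i₀ - c * s| ≤ κ * |s| ∧
        ∀ i, i ≠ i₀ → |γ s i| ≤ κ * |s| ^ ((d i : ℝ)/(q:ℝ))) := by
    intro κ hκ
    have h1 : ∀ᶠ s : ℝ in 𝓝 0, |γ s i₀ - c * s| ≤ κ * |s| := by
      have := isLittleO_iff.1 hlitoc hκ
      simpa [Real.norm_eq_abs] using this
    have h2 : ∀ᶠ s : ℝ in 𝓝 0, ∀ i, i ≠ i₀ → |γ s i| ≤ κ * |s| ^ ((d i : ℝ)/(q:ℝ)) := by
      rw [eventually_all]
      intro i
      by_cases hi : i = i₀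
      · exact Eventually.of_forall fun s h => (h hi).elim
      · have h3 := isLittleO_iff.1 (hlito i hi) hκ
        filter_upwards [h3] with s hs _
        have h4 : ‖|s| ^ ((d i : ℝ)/(q:ℝ))‖ = |s| ^ ((d i : ℝ)/(q:ℝ)) :=
          Real.norm_of_nonneg (Real.rpow_nonneg (abs_nonneg s) _)
        rw [Real.norm_eq_abs, h4] at hs
        exact hs
    obtain ⟨η, hη, hℓ⟩ := Metric.eventually_nhds_iff.1 (h1.and h2)
    exact ⟨η, hη, fun s hs => hℓ (by simpa [Real.dist_eq] using hs)⟩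
  -- ### sub-level sets along e direction
  have hlevel : ∀ u : ℝ, 0 < u → ∀ s : ℝ, ρ 0 (s • e) < u → |s| ≤ u ^ q * R := by
    intro u hu s hs
    have huq : (0:ℝ) < u ^ q := pow_pos hu q
    have h1 : ρ 0 ((u ^ q * ((u ^ q)⁻¹ * s)) • e) = u * ρ 0 (((u ^ q)⁻¹ * s) • e) :=
      hφhom u hu _
    rw [mul_inv_cancel_left₀ huq.ne'] at h1
    have h2 : ρ 0 (((u ^ q)⁻¹ * s) • e) < 1 := by
      rw [h1] at hs
      nlinarith [hnonneg 0 (((u ^ q)⁻¹ * s) • e)]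
    have h3 := hball _ h2.le
    rw [henorm, abs_mul, abs_inv, abs_of_pos huq] at h3
    calc |s| = u ^ q * ((u ^ q)⁻¹ * |s|) := by field_simp
      _ ≤ u ^ q * R := by
          apply mul_le_mul_of_nonneg_left h3 huq.le
  -- ### the rescaled curve
  set X : ℝ → ℝ → Fin n → ℝ := fun r t j => (r ^ d j)⁻¹ * γ (t * r ^ q) j with hX
  have hXρ : ∀ r : ℝ, 0 < r → ∀ t : ℝ, ρ 0 (γ (t * r ^ q)) = r * ρ 0 (X r t) := by
    intro r hr t
    have hfun : γ (t * r ^ q) = fun j => r ^ (d j) * X r t j := by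
      funext j
      rw [hX]
      rw [mul_inv_cancel_left₀ (pow_ne_zero _ hr.ne')]
    conv_lhs => rw [hfun]
    exact hρhom r hr _
  set M₀ : ℝ := 2 * R / |c| + 1 with hM₀
  have hM₀pos : 0 < M₀ := by positivity
  have hcM₀ : |c| * M₀ = 2 * R + |c| := by rw [hM₀]; field_simp
  -- ### uniform approximation X r t ≈ (c t) • e for |t| ≤ M₀
  have hunif : ∀ κ : ℝ, 0 < κ → ∀ᶠ r in 𝓝[>] (0:ℝ), ∀ t : ℝ, |t| ≤ M₀ →
      ‖X r t - (c * t) • e‖ ≤ κ := by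
    intro κ hκ
    set B : ℝ := (1 + M₀) ^ D with hB
    have hBpos : 0 < B := by positivity
    have h1M : (1:ℝ) ≤ 1 + M₀ := by linarith
    have hBM : M₀ ≤ B := by
      have h5 : (1 + M₀ : ℝ) ≤ (1 + M₀) ^ D := le_self_pow₀ h1M (Nat.one_le_iff_ne_zero.mp hD1)
      rw [hB]; linarith
    have hκ' : 0 < κ / B := by positivity
    obtain ⟨η, hη, hP⟩ := hsmall (κ / B) hκ'
    have hev1 : ∀ᶠ r in 𝓝[>] (0:ℝ), M₀ * r ^ q < η := by
      have hcont : ContinuousAt (fun r : ℝ => M₀ * r ^ q) 0 := by fun_prop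
      have h2 : Tendsto (fun r : ℝ => M₀ * r ^ q) (𝓝[>] (0:ℝ)) (𝓝 (M₀ * 0 ^ q)) :=
        hcont.tendsto.mono_left nhdsWithin_le_nhds
      rw [zero_pow hq0, mul_zero] at h2
      exact h2.eventually_lt_const hη
    filter_upwards [hev1, self_mem_nhdsWithin] with r hrη (hr : 0 < r)
    intro t ht
    have hrq : (0:ℝ) < r ^ q := pow_pos hr q
    have habs : |t * r ^ q| = |t| * r ^ q := by
      rw [abs_mul, abs_of_pos hrq]
    have hsb : |t * r ^ q| ≤ M₀ * r ^ q := by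
      rw [habs]; exact mul_le_mul_of_nonneg_right ht hrq.le
    have hsη : |t * r ^ q| < η := lt_of_le_of_lt hsb hrη
    obtain ⟨hP1, hP2⟩ := hP _ hsη
    rw [pi_norm_le_iff_of_nonneg hκ.le]
    intro j
    rw [Pi.sub_apply, Pi.smul_apply, smul_eq_mul]
    by_cases hj : j = i₀
    · rw [hj, he, Pi.single_eq_same, mul_one]
      simp only [hX, hi₀]
      have heq : (r ^ q)⁻¹ * γ (t * r ^ q) i₀ - c * t
          = (r ^ q)⁻¹ * (γ (t * r ^ q) i₀ - c * (t * r ^ q)) := by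
        field_simp
      rw [heq, Real.norm_eq_abs, abs_mul, abs_inv, abs_of_pos hrq]
      calc (r ^ q)⁻¹ * |γ (t * r ^ q) i₀ - c * (t * r ^ q)|
          ≤ (r ^ q)⁻¹ * ((κ / B) * |t * r ^ q|) := by
            apply mul_le_mul_of_nonneg_left hP1 (by positivity)
        _ = (κ / B) * |t| := by rw [habs]; field_simp
        _ ≤ (κ / B) * M₀ := by
            apply mul_le_mul_of_nonneg_left ht hκ'.le
        _ ≤ κ := by
            rw [div_mul_eq_mul_div, div_le_iff₀ hBpos]
            nlinarith
    · rw [he, Pi.single_eq_of_ne hj, mul_zero, sub_zero]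
      simp only [hX]
      have h1 := hP2 j hj
      have hedq : (0:ℝ) ≤ (d j : ℝ) / (q : ℝ) := by positivity
      have hqRpos : (0:ℝ) < (q:ℝ) := by exact_mod_cast Nat.pos_of_ne_zero hq0
      have hkey : |t * r ^ q| ^ ((d j : ℝ)/(q:ℝ)) = |t| ^ ((d j : ℝ)/(q:ℝ)) * r ^ (d j) := by
        rw [habs, Real.mul_rpow (abs_nonneg t) hrq.le]
        congr 1
        rw [← Real.rpow_natCast r q, ← Real.rpow_natCast r (d j),
          ← Real.rpow_mul hr.le]
        congr 1
        field_simp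
      have htB : |t| ^ ((d j : ℝ)/(q:ℝ)) ≤ B := by
        have h2 : |t| ^ ((d j : ℝ)/(q:ℝ)) ≤ (1 + M₀) ^ ((d j : ℝ)/(q:ℝ)) :=
          Real.rpow_le_rpow (abs_nonneg t) (by linarith) hedq
        have h3 : (1 + M₀) ^ ((d j : ℝ)/(q:ℝ)) ≤ (1 + M₀) ^ ((D : ℝ)) := by
          apply Real.rpow_le_rpow_of_exponent_le (by linarith)
          calc (d j : ℝ) / (q : ℝ) ≤ (d j : ℝ) := by
                apply div_le_self (by positivity) (by exact_mod_cast hq)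
            _ ≤ (D : ℝ) := by exact_mod_cast hdD j
        have h4 : (1 + M₀ : ℝ) ^ ((D : ℝ)) = (1 + M₀) ^ D := Real.rpow_natCast _ D
        rw [hB]
        linarith [h2, h3, h4.le, h4.ge]
      have hrdj : (0:ℝ) < r ^ (d j) := pow_pos hr _
      rw [Real.norm_eq_abs, abs_mul, abs_inv, abs_of_pos hrdj]
      calc (r ^ d j)⁻¹ * |γ (t * r ^ q) j|
          ≤ (r ^ d j)⁻¹ * ((κ / B) * (|t| ^ ((d j : ℝ)/(q:ℝ)) * r ^ (d j))) := by
            apply mul_le_mul_of_nonneg_left _ (by positivity)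
            rw [← hkey]; exact h1
        _ = (κ / B) * |t| ^ ((d j : ℝ)/(q:ℝ)) := by field_simp
        _ ≤ (κ / B) * B := mul_le_mul_of_nonneg_left htB hκ'.le
        _ = κ := by field_simp
  -- ### small-parameter bound with derivative
  obtain ⟨η₁, hη₁pos, hη₁le, hη₁⟩ : ∃ η₁ : ℝ, 0 < η₁ ∧ η₁ ≤ 1 ∧ ∀ s : ℝ, |s| < η₁ →
      |γ s i₀ - c * s| ≤ |c|/2 * |s| := by
    obtain ⟨η, hη, hP⟩ := hsmall (|c|/2) (by positivity)
    exact ⟨min η 1, by positivity, min_le_right _ _,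
      fun s hs => (hP s (lt_of_lt_of_le hs (min_le_left _ _))).1⟩
  -- ### positive lower bound away from zero on the curve
  obtain ⟨δ₁, hδ₁pos, hδ₁⟩ : ∃ δ₁ : ℝ, 0 < δ₁ ∧ ∀ s : ℝ, s ∈ Set.Icc (-1:ℝ) 1 →
      η₁ ≤ |s| → δ₁ ≤ ρ 0 (γ s) := by
    set K : Set ℝ := Set.Icc (-1:ℝ) 1 ∩ {s : ℝ | η₁ ≤ |s|} with hK
    have hKc : IsCompact K :=
      isCompact_Icc.inter_right (isClosed_le continuous_const continuous_abs)
    have hne : K.Nonempty := by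
      refine ⟨1, ⟨by norm_num, ?_⟩⟩
      simpa using hη₁le
    have hcont : ContinuousOn (fun s : ℝ => ρ 0 (γ s)) K :=
      hfcont.comp_continuousOn (hγcont.mono Set.inter_subset_left)
    obtain ⟨z, hzK, hzmin⟩ := hKc.exists_isMinOn hne hcont
    refine ⟨ρ 0 (γ z), ?_, fun s hs1 hs2 => hzmin ⟨hs1, hs2⟩⟩
    apply hfpos
    intro hcon
    have hz0 : z ≠ 0 := by
      intro h
      rw [h] at hzK
      simp only [hK, Set.mem_inter_iff, Set.mem_setOf_eq, abs_zero] at hzK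
      linarith [hzK.2]
    exact hz0 (hinj hzK.1 (by norm_num : (0:ℝ) ∈ Set.Icc (-1:ℝ) 1) (by rw [hcon, hγ0]))
  -- ### boundedness of A r
  have hA1 : ∀ᶠ r in 𝓝[>] (0:ℝ), ∀ t ∈ A r, |t| ≤ M₀ ∧ ρ 0 (X r t) < 1 := by
    have hev2 : ∀ᶠ r in 𝓝[>] (0:ℝ), r < δ₁ :=
      eventually_nhdsWithin_of_eventually_nhds (eventually_lt_nhds hδ₁pos)
    filter_upwards [hev2, self_mem_nhdsWithin] with r hrδ (hr : 0 < r)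
    intro t hAt
    rw [hA r] at hAt
    obtain ⟨ht1, ht2⟩ := hAt
    have hrq : (0:ℝ) < r ^ q := pow_pos hr q
    have habs : |t * r ^ q| = |t| * r ^ q := by rw [abs_mul, abs_of_pos hrq]
    have hs1 : |t * r ^ q| ≤ 1 := by
      rw [habs]
      calc |t| * r ^ q ≤ (r ^ q)⁻¹ * r ^ q := mul_le_mul_of_nonneg_right ht1 hrq.le
        _ = 1 := inv_mul_cancel₀ hrq.ne'
    have hsmem : t * r ^ q ∈ Set.Icc (-1:ℝ) 1 := abs_le.1 hs1
    have hsη₁ : |t * r ^ q| < η₁ := by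
      by_contra hcon
      push_neg at hcon
      have := hδ₁ _ hsmem hcon
      linarith
    have hX1 : ρ 0 (X r t) < 1 := by
      rw [hXρ r hr t] at ht2
      nlinarith [hnonneg 0 (X r t)]
    have hXn : ‖X r t‖ ≤ R := hball _ hX1.le
    have hXi : |X r t i₀| ≤ R := by
      have := norm_le_pi_norm (X r t) i₀
      rw [Real.norm_eq_abs] at this
      exact this.trans hXn
    have hg : |c|/2 * |t * r ^ q| ≤ |γ (t * r ^ q) i₀| := by
      have h1 := hη₁ _ hsη₁
      have h2 : |c * (t * r ^ q)| - |γ (t * r ^ q) i₀| ≤ |γ (t * r ^ q) i₀ - c * (t * r ^ q)| := by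
        rw [abs_sub_comm]
        exact le_trans (sub_le_sub_right (le_refl _) _) (abs_sub_abs_le_abs_sub _ _)
      rw [abs_mul] at h2
      linarith
    have hXi₀eq : |X r t i₀| = (r ^ q)⁻¹ * |γ (t * r ^ q) i₀| := by
      simp only [hX, hi₀]
      rw [abs_mul, abs_inv, abs_of_pos hrq]
    have hfinal : |c|/2 * |t| ≤ R := by
      have h3 : |c|/2 * |t| = (r ^ q)⁻¹ * (|c|/2 * |t * r ^ q|) := by
        rw [habs]; field_simp
      calc |c|/2 * |t| = (r ^ q)⁻¹ * (|c|/2 * |t * r ^ q|) := h3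
        _ ≤ (r ^ q)⁻¹ * |γ (t * r ^ q) i₀| := by
            apply mul_le_mul_of_nonneg_left hg (by positivity)
        _ = |X r t i₀| := hXi₀eq.symm
        _ ≤ R := hXi
    refine ⟨?_, hX1⟩
    nlinarith [hcM₀, hcabs, abs_nonneg t]
  -- part 2 of the goal
  have hpart2 : ∀ᶠ r in 𝓝[>] (0:ℝ), A r ⊆ Set.Icc (-M₀) M₀ := by
    filter_upwards [hA1] with r hr
    intro t ht
    exact Set.mem_Icc.2 (abs_le.1 (hr t ht).1)
  -- ### uniform continuity of ρ 0 on a large ball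
  set R₂ : ℝ := |c| * M₀ + R + 1 with hR₂
  have hUC : ∀ ε : ℝ, 0 < ε → ∃ δ > 0, ∀ x ∈ Metric.closedBall (0 : Fin n → ℝ) R₂,
      ∀ y ∈ Metric.closedBall (0 : Fin n → ℝ) R₂, dist x y < δ → |ρ 0 x - ρ 0 y| < ε := by
    intro ε hε
    have h := (isCompact_closedBall (0 : Fin n → ℝ) R₂).uniformContinuousOn_of_continuous
      hfcont.continuousOn
    rw [Metric.uniformContinuousOn_iff] at h
    obtain ⟨δ, hδ, h⟩ := h ε hε
    refine ⟨δ, hδ, fun x hx y hy hxy => ?_⟩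
    have := h x hx y hy hxy
    rwa [Real.dist_eq] at this
  -- ### the two inclusions
  have hBC : ∀ ε : ℝ, 0 < ε → ε < 1 → ∀ᶠ r in 𝓝[>] (0:ℝ),
      (∀ t ∈ A r, ρ 0 ((c * t) • e) < 1 + ε) ∧
      (∀ t : ℝ, ρ 0 ((c * t) • e) < 1 - ε → t ∈ A r) := by
    intro ε hε hε1
    obtain ⟨δ₂, hδ₂, hUCε⟩ := hUC ε hε
    have hκpos : 0 < min (δ₂/2) 1 := by positivity
    have hev3 : ∀ᶠ r in 𝓝[>] (0:ℝ), M₀ * r ^ q < 1 := by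
      have hcont : ContinuousAt (fun r : ℝ => M₀ * r ^ q) 0 := by fun_prop
      have h2 : Tendsto (fun r : ℝ => M₀ * r ^ q) (𝓝[>] (0:ℝ)) (𝓝 (M₀ * 0 ^ q)) :=
        hcont.tendsto.mono_left nhdsWithin_le_nhds
      rw [zero_pow hq0, mul_zero] at h2
      exact h2.eventually_lt_const one_pos
    filter_upwards [hunif _ hκpos, hA1, hev3, self_mem_nhdsWithin] with r hu hA' hrM (hr : 0 < r)
    have hrq : (0:ℝ) < r ^ q := pow_pos hr q
    constructor
    · intro t ht
      obtain ⟨htM, hX1⟩ := hA' t ht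
      have hnear := hu t htM
      have hxmem : X r t ∈ Metric.closedBall (0 : Fin n → ℝ) R₂ := by
        rw [Metric.mem_closedBall, dist_zero_right]
        have h1 := hball _ hX1.le
        have h2 : 0 ≤ |c| * M₀ := by positivity
        rw [hR₂]; linarith
      have hymem : (c * t) • e ∈ Metric.closedBall (0 : Fin n → ℝ) R₂ := by
        rw [Metric.mem_closedBall, dist_zero_right, henorm]
        have h1 : |c * t| ≤ |c| * M₀ := by
          rw [abs_mul]; exact mul_le_mul_of_nonneg_left htM (abs_nonneg c)
        rw [hR₂]; linarith
      have hdist : dist ((c * t) • e) (X r t) < δ₂ := by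
        rw [dist_eq_norm, ← norm_neg, neg_sub]
        calc ‖X r t - (c * t) • e‖ ≤ min (δ₂/2) 1 := hnear
          _ < δ₂ := lt_of_le_of_lt (min_le_left _ _) (by linarith)
      have hUC2 := hUCε _ hymem _ hxmem hdist
      have := abs_lt.1 hUC2
      linarith [this.2]
    · intro t hlt
      have h1ε : (0:ℝ) < 1 - ε := by linarith
      have htR : |c| * |t| ≤ R := by
        have h1 : ρ 0 ((c * t) • e) ≤ 1 := by linarith
        have h2 := hball _ (by rwa [])
        rw [henorm, abs_mul] at h2
        exact h2
      have htM : |t| ≤ M₀ := by nlinarith [hcM₀, hcabs, abs_nonneg t]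
      have hnear := hu t htM
      have htr : |t| ≤ (r ^ q)⁻¹ := by
        have h4 : M₀ ≤ (r ^ q)⁻¹ := by
          rw [← one_div, le_div_iff₀ hrq]; linarith
        exact htM.trans h4
      have hymem : (c * t) • e ∈ Metric.closedBall (0 : Fin n → ℝ) R₂ := by
        rw [Metric.mem_closedBall, dist_zero_right, henorm]
        have h1 : |c * t| ≤ |c| * M₀ := by
          rw [abs_mul]; exact mul_le_mul_of_nonneg_left htM (abs_nonneg c)
        rw [hR₂]; linarith
      have hxmem : X r t ∈ Metric.closedBall (0 : Fin n → ℝ) R₂ := by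
        rw [Metric.mem_closedBall, dist_zero_right]
        have h1 := norm_sub_norm_le (X r t) ((c * t) • e)
        have h2 : ‖X r t - (c * t) • e‖ ≤ 1 := hnear.trans (min_le_right _ _)
        rw [henorm] at h1
        have h3 : |c * t| ≤ |c| * M₀ := by
          rw [abs_mul]; exact mul_le_mul_of_nonneg_left htM (abs_nonneg c)
        rw [hR₂]; linarith
      have hdist : dist (X r t) ((c * t) • e) < δ₂ := by
        rw [dist_eq_norm]
        calc ‖X r t - (c * t) • e‖ ≤ min (δ₂/2) 1 := hnear
          _ < δ₂ := lt_of_le_of_lt (min_le_left _ _) (by linarith)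
      have hUC2 := hUCε _ hxmem _ hymem hdist
      have habs2 := abs_lt.1 hUC2
      have hX1 : ρ 0 (X r t) < 1 := by linarith [habs2.2]
      rw [hA r]
      refine ⟨htr, ?_⟩
      rw [hXρ r hr t]
      calc r * ρ 0 (X r t) < r * 1 := (mul_lt_mul_iff_right₀ hr).2 hX1
        _ = r := mul_one r
  -- ### the limit set and its scalings
  set T : ℝ → Set ℝ := fun u => {t : ℝ | ρ 0 ((c * t) • e) < u} with hT
  have hLT : c⁻¹ • S₀ = T 1 := by
    ext t
    rw [Set.mem_smul_set_iff_inv_smul_mem₀ (inv_ne_zero hc), inv_inv, hS₀]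
    simp only [hT, Set.mem_setOf_eq, smul_eq_mul]
  have hTmeas : ∀ u : ℝ, MeasurableSet (T u) := by
    intro u
    have hco : Continuous fun t : ℝ => ρ 0 ((c * t) • e) :=
      hfcont.comp ((continuous_const.mul continuous_id).smul continuous_const)
    exact (isOpen_lt hco continuous_const).measurableSet
  have hTsub : ∀ u v : ℝ, u ≤ v → T u ⊆ T v := fun u v h t ht => lt_of_lt_of_le ht h
  have hTscale : ∀ u : ℝ, 0 < u → T u = u ^ q • T 1 := by
    intro u hu
    have huq : (0:ℝ) < u ^ q := pow_pos hu q
    ext t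
    rw [Set.mem_smul_set_iff_inv_smul_mem₀ huq.ne']
    simp only [hT, Set.mem_setOf_eq, smul_eq_mul]
    have h1 : ρ 0 ((u ^ q * (c * ((u ^ q)⁻¹ * t))) • e)
        = u * ρ 0 ((c * ((u ^ q)⁻¹ * t)) • e) := hφhom u hu _
    have h2 : u ^ q * (c * ((u ^ q)⁻¹ * t)) = c * t := by field_simp
    rw [h2] at h1
    rw [h1]
    constructor
    · intro h3
      nlinarith [hnonneg 0 ((c * ((u ^ q)⁻¹ * t)) • e)]
    · intro h3
      nlinarith
  have hTbdd : T 1 ⊆ Set.Icc (-(R/|c|)) (R/|c|) := by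
    intro t ht
    have h1 := hball _ (le_of_lt ht)
    rw [henorm, abs_mul] at h1
    have h2 : |t| ≤ R / |c| := by
      rw [le_div_iff₀ hcabs]; nlinarith
    exact Set.mem_Icc.2 (abs_le.1 h2)
  set V : ENNReal := volume (T 1) with hV
  have hVfin : V ≠ ⊤ := by
    rw [hV]
    refine ne_top_of_le_ne_top ?_ (measure_mono hTbdd)
    rw [Real.volume_Icc]
    exact ENNReal.ofReal_ne_top
  have hTvol : ∀ u : ℝ, 0 < u → volume (T u) = ENNReal.ofReal (u ^ q) * V := by
    intro u hu
    rw [hTscale u hu, Measure.addHaar_smul_of_nonneg volume (pow_nonneg hu.le q)]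
    congr 1
    rw [Module.finrank_self, pow_one]
  -- ### conclusion
  refine ⟨?_, M₀, hM₀pos, hpart2⟩
  rw [ENNReal.tendsto_nhds_zero]
  intro δ hδ
  obtain ⟨ε, hε0, hε1, hεδ⟩ : ∃ ε : ℝ, 0 < ε ∧ ε < 1 ∧
      ENNReal.ofReal ((1+ε)^q - (1-ε)^q) * V ≤ δ := by
    have hten : Tendsto (fun ε : ℝ => ENNReal.ofReal ((1+ε)^q - (1-ε)^q) * V)
        (𝓝[>] (0:ℝ)) (𝓝 0) := by
      have h1 : Tendsto (fun ε : ℝ => (1+ε)^q - (1-ε)^q) (𝓝 (0:ℝ)) (𝓝 0) := by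
        have hco : Continuous fun ε : ℝ => (1+ε)^q - (1-ε)^q :=
          ((continuous_const.add continuous_id).pow q).sub
            ((continuous_const.sub continuous_id).pow q)
        have := hco.tendsto 0
        simpa using this
      have h2 : Tendsto (fun ε : ℝ => ENNReal.ofReal ((1+ε)^q - (1-ε)^q)) (𝓝 (0:ℝ)) (𝓝 0) := by
        have := (ENNReal.continuous_ofReal.tendsto 0).comp h1
        simpa [Function.comp_def] using this
      have h2' : Tendsto (fun ε : ℝ => ENNReal.ofReal ((1+ε)^q - (1-ε)^q))
          (𝓝[>] (0:ℝ)) (𝓝 0) := h2.mono_left nhdsWithin_le_nhds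
      have h3 := ENNReal.Tendsto.mul_const h2' (Or.inr hVfin)
      simpa using h3
    have h4 : ∀ᶠ ε : ℝ in 𝓝[>] (0:ℝ), ε < 1 :=
      eventually_nhdsWithin_of_eventually_nhds (eventually_lt_nhds one_pos)
    obtain ⟨ε, ⟨⟨hle, hpos⟩, hlt1⟩⟩ :=
      (((hten.eventually_le_const hδ).and self_mem_nhdsWithin).and h4).exists
    exact ⟨ε, hpos, hlt1, hle⟩
  have h1ε : (0:ℝ) < 1 - ε := by linarith
  have h1ε' : (0:ℝ) < 1 + ε := by linarith
  have hvolD : volume (T (1+ε) \ T (1-ε)) ≤ ENNReal.ofReal ((1+ε)^q - (1-ε)^q) * V := by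
    rw [measure_diff (hTsub _ _ (by linarith)) (hTmeas _).nullMeasurableSet
      (by rw [hTvol _ h1ε]; exact ENNReal.mul_ne_top ENNReal.ofReal_ne_top hVfin)]
    rw [hTvol _ h1ε', hTvol _ h1ε]
    rw [← ENNReal.sub_mul (fun _ _ => hVfin)]
    rw [← ENNReal.ofReal_sub _ (pow_nonneg h1ε.le q)]
  filter_upwards [hBC ε hε0 hε1] with r hr
  obtain ⟨hrB, hrC⟩ := hr
  have hsub : symmDiff (A r) (c⁻¹ • S₀) ⊆ T (1+ε) \ T (1-ε) := by
    rw [hLT]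
    intro t ht
    rcases Set.mem_symmDiff.1 ht with ⟨h1, h2⟩ | ⟨h1, h2⟩
    · exact ⟨hrB t h1, fun hcon => h2 (hTsub _ _ (by linarith) hcon)⟩
    · exact ⟨hTsub _ _ (by linarith) h1, fun hcon => h2 (hrC t hcon)⟩
  calc volume (symmDiff (A r) (c⁻¹ • S₀)) ≤ volume (T (1+ε) \ T (1-ε)) := measure_mono hsub
    _ ≤ ENNReal.ofReal ((1+ε)^q - (1-ε)^q) * V := hvolD
    _ ≤ δ := hεδ
end
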